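/- arXiv:2008.00722 — 5 statements merged into one kernel-verified Lean document; each statement's English description precedes it below -/
import Mathlib

section
/- Let n ≥ 1 and let x_1 ≥ x_2 ≥ ⋯ ≥ x_n ≥ 1 and a ≥ b > 0 be real numbers, and let k be an integer with n ≥ k ≥ n/2. Then for every permutation σ of {1,…,n} and every ℓ ∈ {n−k, k}, we have a·∏_{i=1}^{ℓ} x_{σ(i)} + b·∏_{i=ℓ+1}^{n} x_{σ(i)} ≤ a·∏_{i=1}^{k} x_i + b·∏_{i=k+1}^{n} x_i. -/
open Finset

/-- Upper bound: a product of `y` over any `m`-element finset of naturals is at most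
the product over the first `m` naturals, when `y` is antitone and `≥ 1`. -/
lemma aux_prod_le {y : ℕ → ℝ} (hy : ∀ i, 1 ≤ y i) (hmono : ∀ i j : ℕ, i ≤ j → y j ≤ y i)
    (T : Finset ℕ) (m : ℕ) (hT : T.card = m) :
    ∏ i ∈ T, y i ≤ ∏ i ∈ range m, y i := by
  set f := T.orderEmbOfFin hT with hf
  have hinj : Function.Injective fun i : Fin m => f i := f.injective
  have hTim : T = Finset.image (fun i : Fin m => f i) univ := by
    ext j
    simp only [Finset.mem_image, mem_univ, true_and]
    constructor
    · intro hj
      have : j ∈ Set.range f := by rw [Finset.range_orderEmbOfFin]; exact hj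
      obtain ⟨i, hi⟩ := this
      exact ⟨i, hi⟩
    · rintro ⟨i, rfl⟩
      exact T.orderEmbOfFin_mem hT i
  have hle : ∀ i : Fin m, (i : ℕ) ≤ f i := by
    intro i
    obtain ⟨j, hj⟩ := i
    induction j with
    | zero => exact Nat.zero_le _
    | succ t ih =>
      have ht : t < m := Nat.lt_of_succ_lt hj
      have h1 : f ⟨t, ht⟩ < f ⟨t + 1, hj⟩ := by
        apply f.strictMono
        exact Fin.mk_lt_mk.2 (Nat.lt_succ_self t)
      have h2 := ih ht
      simp only [Fin.val_mk] at h1 h2 ⊢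
      omega
  calc ∏ i ∈ T, y i = ∏ i : Fin m, y (f i) := by
        rw [hTim, Finset.prod_image (fun i _ j _ h => hinj h)]
      _ ≤ ∏ i : Fin m, y i := by
        apply Finset.prod_le_prod
        · intro i _; exact le_trans zero_le_one (hy _)
        · intro i _; exact hmono _ _ (hle i)
      _ = ∏ i ∈ range m, y i := by
        rw [Fin.prod_univ_eq_prod_range]

/-- Endpoint lemma: `a*A + b*B` is at most the max of two endpoint values. -/
lemma aux_endpoint (a b A B S T A' B' : ℝ) (hb : 0 < b) (hba : b ≤ a)
    (hA : 0 < A) (hB : 0 < B) (hS : A ≤ S) (hT : B ≤ T)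
    (hprod1 : A * B = S * B') (hprod2 : A * B = A' * T) :
    a * A + b * B ≤ max (a * S + b * B') (a * A' + b * T) := by
  have hS0 : 0 < S := lt_of_lt_of_le hA hS
  have hT0 : 0 < T := lt_of_lt_of_le hB hT
  rcases le_or_gt (a * A) (b * T) with h | h
  · apply le_max_of_le_right
    nlinarith [mul_nonneg (sub_nonneg.2 hT) (sub_nonneg.2 h)]
  · apply le_max_of_le_left
    have hSB : b * B ≤ a * S := by
      have h1 : b * B ≤ b * T := by nlinarith
      nlinarith
    nlinarith [mul_nonneg (sub_nonneg.2 hS) (sub_nonneg.2 hSB)]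

set_option maxHeartbeats 1000000 in
/-- Lemma `Lem:RearrIneq`, inequality part:
for `x_1 ≥ ⋯ ≥ x_n ≥ 1`, `a ≥ b > 0` and `n ≥ k ≥ n/2`, every rearranged split
`ℓ ∈ {n-k, k}` gives a value at most `a·∏_{i≤k} x_i + b·∏_{i>k} x_i`. -/
theorem stmt0 (n : ℕ) (hn : 1 ≤ n) (x : Fin n → ℝ)
    (hdec : ∀ i j : Fin n, i ≤ j → x j ≤ x i) (hx : ∀ i, 1 ≤ x i)
    (a b : ℝ) (hb : 0 < b) (hba : b ≤ a)
    (k : ℕ) (hkn : k ≤ n) (hnk : n ≤ 2 * k)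
    (σ : Equiv.Perm (Fin n)) (ℓ : ℕ) (hl : ℓ = n - k ∨ ℓ = k) :
    a * ∏ i ∈ univ.filter (fun i : Fin n => (i : ℕ) < ℓ), x (σ i) +
      b * ∏ i ∈ univ.filter (fun i : Fin n => ℓ ≤ (i : ℕ)), x (σ i) ≤
    a * ∏ i ∈ univ.filter (fun i : Fin n => (i : ℕ) < k), x i +
      b * ∏ i ∈ univ.filter (fun i : Fin n => k ≤ (i : ℕ)), x i := by
  classical
  have hln : ℓ ≤ n := by rcases hl with rfl | rfl <;> omega
  -- extend x to ℕ
  set y : ℕ → ℝ := fun i => if h : i < n then x ⟨i, h⟩ else 1 with hy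
  have hxy : ∀ i : Fin n, x i = y (i : ℕ) := by
    intro i; simp [hy, i.isLt]
  have hy1 : ∀ i, 1 ≤ y i := by
    intro i; by_cases h : i < n
    · simp [hy, h, hx]
    · simp [hy, h]
  have hymono : ∀ i j : ℕ, i ≤ j → y j ≤ y i := by
    intro i j hij
    by_cases hj : j < n
    · have hi : i < n := lt_of_le_of_lt hij hj
      simp only [hy, dif_pos hi, dif_pos hj]
      exact hdec ⟨i, hi⟩ ⟨j, hj⟩ hij
    · simp only [hy, dif_neg hj]
      exact hy1 i
  have hyS : ∀ S : Finset ℕ, 1 ≤ ∏ i ∈ S, y i := by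
    intro S
    calc (1:ℝ) = ∏ _i ∈ S, (1:ℝ) := by simp
      _ ≤ ∏ i ∈ S, y i :=
        Finset.prod_le_prod (fun i _ => zero_le_one) (fun i _ => hy1 i)
  have hyS0 : ∀ S : Finset ℕ, 0 < ∏ i ∈ S, y i :=
    fun S => lt_of_lt_of_le zero_lt_one (hyS S)
  -- image of the Fin-filter under val
  have himg : ∀ c : ℕ, c ≤ n →
      Finset.image (fun i : Fin n => (i : ℕ)) (univ.filter (fun i : Fin n => (i : ℕ) < c))
        = range c := by
    intro c hc
    ext j
    simp only [Finset.mem_image, mem_filter, mem_univ, true_and, mem_range]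
    constructor
    · rintro ⟨i, hi, rfl⟩; exact hi
    · intro hj; exact ⟨⟨j, lt_of_lt_of_le hj hc⟩, hj, rfl⟩
  have hcardfil : ∀ c : ℕ, c ≤ n →
      (univ.filter (fun i : Fin n => (i : ℕ) < c)).card = c := by
    intro c hc
    have := himg c hc
    have h2 := Finset.card_image_of_injective
      (univ.filter (fun i : Fin n => (i : ℕ) < c)) (Fin.val_injective)
    rw [this] at h2
    simpa using h2.symm
  -- conversion for the RHS products
  have hconvlt : ∀ c : ℕ, c ≤ n →
      ∏ i ∈ univ.filter (fun i : Fin n => (i : ℕ) < c), x i = ∏ j ∈ range c, y j := by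
    intro c hc
    rw [← himg c hc, Finset.prod_image (fun i _ j _ h => Fin.val_injective h)]
    exact Finset.prod_congr rfl (fun i _ => hxy i)
  set P : ℝ := ∏ j ∈ range n, y j with hP
  have hconvge : ∀ c : ℕ, c ≤ n →
      ∏ i ∈ univ.filter (fun i : Fin n => c ≤ (i : ℕ)), x i = ∏ j ∈ Ico c n, y j := by
    intro c hc
    have hsplit : (∏ i ∈ univ.filter (fun i : Fin n => (i : ℕ) < c), x i) *
        ∏ i ∈ univ.filter (fun i : Fin n => c ≤ (i : ℕ)), x i = P := by
      have : (univ.filter (fun i : Fin n => c ≤ (i : ℕ)))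
          = univ.filter (fun i : Fin n => ¬ (i : ℕ) < c) := by
        apply Finset.filter_congr; intro i _; simp [not_lt]
      rw [this, Finset.prod_filter_mul_prod_filter_not]
      have := hconvlt n le_rfl
      simp only [Fin.is_lt, Finset.filter_true_of_mem (fun (i : Fin n) _ => i.isLt)] at this
      rw [← hP] at this
      simpa using this
    have hsplit2 : (∏ j ∈ range c, y j) * ∏ j ∈ Ico c n, y j = P :=
      Finset.prod_range_mul_prod_Ico y hc
    rw [hconvlt c hc] at hsplit
    have h0 : (0:ℝ) < ∏ j ∈ range c, y j := hyS0 _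
    have := hsplit.trans hsplit2.symm
    exact mul_left_cancel₀ (ne_of_gt h0) this
  -- the permuted products
  set T : Finset ℕ := Finset.image (fun i : Fin n => ((σ i : Fin n) : ℕ))
      (univ.filter (fun i : Fin n => (i : ℕ) < ℓ)) with hTdef
  have hinjσ : Function.Injective (fun i : Fin n => ((σ i : Fin n) : ℕ)) :=
    Fin.val_injective.comp σ.injective
  have hA : ∏ i ∈ univ.filter (fun i : Fin n => (i : ℕ) < ℓ), x (σ i) = ∏ j ∈ T, y j := by
    rw [hTdef, Finset.prod_image (fun i _ j _ h => hinjσ h)]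
    exact Finset.prod_congr rfl (fun i _ => hxy (σ i))
  have hTcard : T.card = ℓ := by
    rw [hTdef, Finset.card_image_of_injective _ hinjσ, hcardfil ℓ hln]
  have hTsub : T ⊆ range n := by
    intro j hj
    rw [hTdef] at hj
    obtain ⟨i, _, rfl⟩ := Finset.mem_image.1 hj
    exact mem_range.2 (σ i).isLt
  set A : ℝ := ∏ j ∈ T, y j with hAdef
  set B : ℝ := ∏ j ∈ range n \ T, y j with hBdef
  have hABP : A * B = P := by
    rw [hAdef, hBdef, mul_comm, Finset.prod_sdiff hTsub]
  have hBconv : ∏ i ∈ univ.filter (fun i : Fin n => ℓ ≤ (i : ℕ)), x (σ i) = B := by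
    have hsplit : (∏ i ∈ univ.filter (fun i : Fin n => (i : ℕ) < ℓ), x (σ i)) *
        ∏ i ∈ univ.filter (fun i : Fin n => ℓ ≤ (i : ℕ)), x (σ i) = P := by
      have : (univ.filter (fun i : Fin n => ℓ ≤ (i : ℕ)))
          = univ.filter (fun i : Fin n => ¬ (i : ℕ) < ℓ) := by
        apply Finset.filter_congr; intro i _; simp [not_lt]
      rw [this, Finset.prod_filter_mul_prod_filter_not]
      rw [Equiv.prod_comp σ x]
      have := hconvlt n le_rfl
      simp only [Finset.filter_true_of_mem (fun (i : Fin n) _ => i.isLt)] at this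
      rw [← hP] at this
      simpa using this
    rw [hA] at hsplit
    have h0 : (0:ℝ) < A := hyS0 _
    rw [← hABP] at hsplit
    exact mul_left_cancel₀ (ne_of_gt h0) hsplit
  rw [hA, hBconv, hconvlt k hkn, hconvge k hkn]
  -- key quantities
  set m : ℕ := n - k with hm
  have hmk : m ≤ k := by omega
  have hmn : m ≤ n := by omega
  set p : ℝ := ∏ j ∈ range m, y j with hp
  set q : ℝ := ∏ j ∈ Ico m k, y j with hq
  set r : ℝ := ∏ j ∈ Ico k n, y j with hr
  have hpq : ∏ j ∈ range k, y j = p * q := (Finset.prod_range_mul_prod_Ico y hmk).symm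
  have hqr : q * r = ∏ j ∈ Ico m n, y j := Finset.prod_Ico_consecutive y hmk hkn
  have hPkr : (p * q) * r = P := by rw [← hpq]; exact Finset.prod_range_mul_prod_Ico y hkn
  have hPmqr : p * (q * r) = P := by rw [hqr]; exact Finset.prod_range_mul_prod_Ico y hmn
  have hp1 : 1 ≤ p := hyS _
  have hq1 : 1 ≤ q := hyS _
  have hr1 : 1 ≤ r := hyS _
  have hpr : r ≤ p := by
    rw [hr, Finset.prod_Ico_eq_prod_range]
    have : n - k = m := rfl
    rw [this, hp]
    apply Finset.prod_le_prod
    · intro i _; exact le_trans zero_le_one (hy1 _)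
    · intro i _; exact hymono i (k + i) (by omega)
  -- bounds on A and B
  have hAle : A ≤ ∏ j ∈ range ℓ, y j := aux_prod_le hy1 hymono T ℓ hTcard
  have hBle : B ≤ ∏ j ∈ range (n - ℓ), y j := by
    apply aux_prod_le hy1 hymono
    rw [Finset.card_sdiff_of_subset hTsub, hTcard, Finset.card_range]
  have hA0 : (0:ℝ) < A := hyS0 _
  have hB0 : (0:ℝ) < B := hyS0 _
  rw [hpq]
  rcases hl with rfl | rfl
  · -- ℓ = n - k = m
    have hAle' : A ≤ p := by rw [hp]; exact hAle
    have hBle' : B ≤ p * q := by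
      have : n - (n - k) = k := by omega
      rw [this] at hBle
      rw [← hpq]; exact hBle
    have hmax := aux_endpoint a b A B p (p * q) r (q * r) hb hba hA0 hB0 hAle' hBle'
      (by rw [hABP, hPmqr]) (by rw [hABP, ← hPkr]; ring)
    apply le_trans hmax
    apply max_le
    · -- a*p + b*(q*r) ≤ a*(p*q) + b*r
      have hbr : b * r ≤ a * p :=
        mul_le_mul hba hpr (by linarith) (by linarith)
      nlinarith [mul_nonneg (sub_nonneg.2 hq1) (sub_nonneg.2 hbr)]
    · -- a*r + b*(p*q) ≤ a*(p*q) + b*r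
      have hppq : p ≤ p * q := le_mul_of_one_le_right (by linarith) hq1
      have hpqr : r ≤ p * q := le_trans hpr hppq
      nlinarith [mul_nonneg (sub_nonneg.2 hba) (sub_nonneg.2 hpqr)]
  · -- ℓ = k
    have hAle' : A ≤ p * q := by rw [← hpq]; exact hAle
    have hBle' : B ≤ p := by rw [hp]; exact hBle
    have hmax := aux_endpoint a b A B (p * q) p (q * r) r hb hba hA0 hB0 hAle' hBle'
      (by rw [hABP, ← hPkr]) (by rw [hABP, ← hPmqr]; ring)
    apply le_trans hmax
    apply max_le
    · exact le_refl _
    · -- a*(q*r) + b*p ≤ a*(p*q) + b*r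
      have haq : b ≤ a * q :=
        le_trans hba (le_mul_of_one_le_right (by linarith) hq1)
      nlinarith [mul_nonneg (sub_nonneg.2 hpr) (sub_nonneg.2 haq)]
end

section
/- Let ρ be a real-valued isomorphism-invariant function on rooted trees satisfying conditions (I.1)–(I.3). If a tree T is ρ-exchange-extremal, then T is ρ_0-exchange-extremal, where ρ_0 assigns to each rooted tree its number of vertices. -/
open scoped Classical
open Finset

universe u

variable {V : Type u}

/-- The neighbours of `v` in `G`, as a finset. -/
noncomputable def nbrs (G : SimpleGraph V) [Fintype V] (v : V) : Finset V :=
  Finset.univ.filter (fun u => G.Adj v u)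

/-- The multiset of vertex degrees of `G`.  Two graphs have the same degree sequence
iff their degree multisets coincide. -/
noncomputable def degMultiset (G : SimpleGraph V) [Fintype V] : Multiset ℕ :=
  Finset.univ.val.map (fun v => (nbrs G v).card)

/-- For adjacent `u v` in a tree `G`, the vertex set of the complete branch of `G - uv`
containing `u` (rooted at `u`): the vertices strictly closer to `u` than to `v`. -/
noncomputable def branchFinset (G : SimpleGraph V) [Fintype V] (u v : V) : Finset V :=
  insert u (Finset.univ.filter (fun x => G.dist x u < G.dist x v))

/-- The neighbours of `v` lying away from `w`, i.e. the roots of the complete branches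
hanging from `v` that do not contain `w`. -/
noncomputable def awayChildren (G : SimpleGraph V) [Fintype V] (v w : V) : Finset V :=
  (nbrs G v).filter (fun u => G.dist v w < G.dist u w)

/-- The complete branch of `G` rooted at `u` away from `v`, as a rooted graph:
the induced subgraph on `branchFinset G u v`. -/
noncomputable def branchGraph (G : SimpleGraph V) [Fintype V] (u v : V) :
    SimpleGraph (↑(branchFinset G u v) : Set V) :=
  G.induce ↑(branchFinset G u v)

/-- The root of the complete branch `branchGraph G u v`, namely `u`. -/
noncomputable def branchRoot (G : SimpleGraph V) [Fintype V] (u v : V) :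
    (↑(branchFinset G u v) : Set V) :=
  ⟨u, Finset.mem_coe.mpr (Finset.mem_insert_self _ _)⟩

/-- `T` is `val`-exchange-extremal, where `val u v` is the value of the complete branch
rooted at `u` away from `v`: for every decomposition `T = [L_1,…,L_k] v H w [R_1,…,R_ℓ]`
(equivalently, for every pair of distinct vertices `v ≠ w`), either `k ≥ ℓ` and
`min val(L_i) ≥ max val(R_j)`, or `k ≤ ℓ` and `max val(L_i) ≤ min val(R_j)`. -/
def ExchangeExtremal (G : SimpleGraph V) [Fintype V] (val : V → V → ℝ) : Prop :=
  ∀ v w : V, v ≠ w →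
    ((awayChildren G w v).card ≤ (awayChildren G v w).card ∧
      ∀ u ∈ awayChildren G v w, ∀ t ∈ awayChildren G w v, val t w ≤ val u v) ∨
    ((awayChildren G v w).card ≤ (awayChildren G w v).card ∧
      ∀ u ∈ awayChildren G v w, ∀ t ∈ awayChildren G w v, val u v ≤ val t w)

section TreeLemmas
variable {X : Type u} {G : SimpleGraph X}

lemma dc (G : SimpleGraph X) (u v : X) : G.dist u v = G.dist v u := SimpleGraph.dist_comm

lemma tree_path_length (hG : G.IsTree) {a b : X} {p : G.Walk a b} (hp : p.IsPath) :
    p.length = G.dist a b := by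
  obtain ⟨q, hq, hql⟩ := hG.isConnected.exists_path_of_dist a b
  rw [← hql, (hG.existsUnique_path a b).unique hp hq]

lemma tree_dist_add_of_mem_support (hG : G.IsTree) {a b c : X} {p : G.Walk a b}
    (hp : p.IsPath) (hc : c ∈ p.support) :
    G.dist a c + G.dist c b = G.dist a b := by
  rw [← tree_path_length hG hp, ← SimpleGraph.Walk.take_spec p hc, SimpleGraph.Walk.length_append,
    tree_path_length hG (hp.takeUntil hc), tree_path_length hG (hp.dropUntil hc)]

lemma tree_nbr_dist (hG : G.IsTree) {a g : X} (hadj : G.Adj a g) (x : X) :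
    G.dist g x = G.dist a x + 1 ∨ G.dist a x = G.dist g x + 1 := by
  obtain ⟨q, hq, hql⟩ := hG.isConnected.exists_path_of_dist g x
  by_cases ha : a ∈ q.support
  · left
    have := tree_dist_add_of_mem_support hG hq ha
    have h1 : G.dist g a = 1 := by
      rw [SimpleGraph.dist_eq_one_iff_adj]; exact hadj.symm
    omega
  · right
    have hp : (SimpleGraph.Walk.cons hadj q).IsPath := by
      rw [SimpleGraph.Walk.cons_isPath_iff]; exact ⟨hq, ha⟩
    have := tree_path_length hG hp
    rw [SimpleGraph.Walk.length_cons, hql] at this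
    omega

/-- x-first orientation -/
lemma tree_nbr_dist' (hG : G.IsTree) {a g : X} (hadj : G.Adj a g) (x : X) :
    G.dist x g = G.dist x a + 1 ∨ G.dist x a = G.dist x g + 1 := by
  have := tree_nbr_dist hG hadj x
  rw [dc G x g, dc G x a]
  omega

lemma tree_step_unique (hG : G.IsTree) {a g₁ g₂ x : X} (h1 : G.Adj a g₁) (h2 : G.Adj a g₂)
    (e1 : G.dist g₁ x + 1 = G.dist a x) (e2 : G.dist g₂ x + 1 = G.dist a x) : g₁ = g₂ := by
  obtain ⟨q₁, hq₁, hql₁⟩ := hG.isConnected.exists_path_of_dist g₁ x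
  obtain ⟨q₂, hq₂, hql₂⟩ := hG.isConnected.exists_path_of_dist g₂ x
  have ha₁ : a ∉ q₁.support := by
    intro h
    have := tree_dist_add_of_mem_support hG hq₁ h
    have : G.dist g₁ a = 1 := by rw [SimpleGraph.dist_eq_one_iff_adj]; exact h1.symm
    omega
  have ha₂ : a ∉ q₂.support := by
    intro h
    have := tree_dist_add_of_mem_support hG hq₂ h
    have : G.dist g₂ a = 1 := by rw [SimpleGraph.dist_eq_one_iff_adj]; exact h2.symm
    omega
  have hp₁ : (SimpleGraph.Walk.cons h1 q₁).IsPath := by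
    rw [SimpleGraph.Walk.cons_isPath_iff]; exact ⟨hq₁, ha₁⟩
  have hp₂ : (SimpleGraph.Walk.cons h2 q₂).IsPath := by
    rw [SimpleGraph.Walk.cons_isPath_iff]; exact ⟨hq₂, ha₂⟩
  have := (hG.existsUnique_path a x).unique hp₁ hp₂
  have hs := congrArg SimpleGraph.Walk.support this
  rw [SimpleGraph.Walk.support_cons, SimpleGraph.Walk.support_cons,
    q₁.support_eq_cons, q₂.support_eq_cons] at hs
  exact (List.cons.injEq _ _ _ _ ▸ hs :  _ ∧ _).2 |> fun h => (List.cons.injEq _ _ _ _ ▸ h : _ ∧ _).1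

/-- x-first orientation -/
lemma tree_step_unique' (hG : G.IsTree) {a g₁ g₂ x : X} (h1 : G.Adj a g₁) (h2 : G.Adj a g₂)
    (e1 : G.dist x a = G.dist x g₁ + 1) (e2 : G.dist x a = G.dist x g₂ + 1) : g₁ = g₂ := by
  apply tree_step_unique hG h1 h2 (x := x) <;> rw [dc G _ x, dc G a x] at * <;> omega

lemma tree_step_exists (hG : G.IsTree) {a x : X} (hne : a ≠ x) :
    ∃ g, G.Adj a g ∧ G.dist g x + 1 = G.dist a x := by
  obtain ⟨p, hp, hpl⟩ := hG.isConnected.exists_path_of_dist a x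
  obtain ⟨g, h, p', rfl⟩ := SimpleGraph.Walk.exists_eq_cons_of_ne hne p
  have hp' : p'.IsPath := ((SimpleGraph.Walk.cons_isPath_iff _ _).mp hp).1
  refine ⟨g, h, ?_⟩
  rw [← tree_path_length hG hp']
  rw [SimpleGraph.Walk.length_cons] at hpl
  omega

lemma tree_mem_support_iff (hG : G.IsTree) {a g x : X} (hadj : G.Adj a g)
    {p : G.Walk a x} (hp : p.IsPath) :
    G.dist g x + 1 = G.dist a x ↔ g ∈ p.support := by
  constructor
  · intro e
    obtain ⟨q, hq, hql⟩ := hG.isConnected.exists_path_of_dist g x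
    have ha : a ∉ q.support := by
      intro h
      have := tree_dist_add_of_mem_support hG hq h
      have : G.dist g a = 1 := by rw [SimpleGraph.dist_eq_one_iff_adj]; exact hadj.symm
      omega
    have hp' : (SimpleGraph.Walk.cons hadj q).IsPath := by
      rw [SimpleGraph.Walk.cons_isPath_iff]; exact ⟨hq, ha⟩
    have := (hG.existsUnique_path a x).unique hp hp'
    rw [this, SimpleGraph.Walk.support_cons]
    right
    exact SimpleGraph.Walk.start_mem_support q
  · intro h
    have := tree_dist_add_of_mem_support hG hp h
    have h1 : G.dist a g = 1 := by rw [SimpleGraph.dist_eq_one_iff_adj]; exact hadj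
    omega

variable [Fintype X]

lemma mem_nbrs {a g : X} : g ∈ nbrs G a ↔ G.Adj a g := by simp [nbrs]

lemma mem_branchFinset_iff (hG : G.IsTree) {a b : X} (hadj : G.Adj a b) {x : X} :
    x ∈ branchFinset G a b ↔ G.dist x b = G.dist x a + 1 := by
  have hab : G.dist a b = 1 := SimpleGraph.dist_eq_one_iff_adj.mpr hadj
  constructor
  · intro h
    rcases Finset.mem_insert.mp h with rfl | h
    · simp [hab]
    · have hlt := (Finset.mem_filter.mp h).2
      rcases tree_nbr_dist' hG hadj x with h1 | h1 <;> omega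
  · intro h
    exact Finset.mem_insert.mpr (Or.inr (Finset.mem_filter.mpr ⟨Finset.mem_univ _, by omega⟩))

lemma root_mem_branchFinset {a b : X} : a ∈ branchFinset G a b :=
  Finset.mem_insert_self _ _

lemma mem_awayChildren_iff (hG : G.IsTree) {a t g : X} :
    g ∈ awayChildren G a t ↔ G.Adj a g ∧ G.dist t g = G.dist t a + 1 := by
  rw [awayChildren, Finset.mem_filter, mem_nbrs]
  constructor
  · rintro ⟨hadj, hlt⟩
    refine ⟨hadj, ?_⟩
    rcases tree_nbr_dist hG hadj t with h1 | h1 <;>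
      rw [dc G t g, dc G t a] <;> omega
  · rintro ⟨hadj, he⟩
    refine ⟨hadj, ?_⟩
    rw [dc G t g, dc G t a] at he
    omega

lemma awayChildren_eq_erase (hG : G.IsTree) {c pc d : X} (hadj : G.Adj c pc)
    (htow : G.dist d c = G.dist d pc + 1) :
    awayChildren G c d = (nbrs G c).erase pc := by
  ext g
  rw [mem_awayChildren_iff hG, Finset.mem_erase, mem_nbrs]
  constructor
  · rintro ⟨hadj', he⟩
    refine ⟨?_, hadj'⟩
    rintro rfl
    omega
  · rintro ⟨hne, hadj'⟩
    refine ⟨hadj', ?_⟩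
    rcases tree_nbr_dist hG hadj' d with h1 | h1
    · rw [dc G g d, dc G c d] at h1; omega
    · exfalso
      apply hne
      apply tree_step_unique hG hadj' hadj (x := d)
      · rw [dc G g d, dc G c d] at h1
        rw [dc G g d, dc G c d]
        omega
      · rw [dc G pc d, dc G c d]
        omega

/-- K2: child branches sit inside the parent branch -/
lemma branch_subset_branch (hG : G.IsTree) {a b g : X} (hadj : G.Adj a b) (hg : G.Adj a g)
    (hne : g ≠ b) : branchFinset G g a ⊆ branchFinset G a b := by
  intro x hx
  rw [mem_branchFinset_iff hG hg.symm] at hx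
  rw [mem_branchFinset_iff hG hadj]
  rcases tree_nbr_dist' hG hadj x with h1 | h1
  · exact h1
  · exact absurd (tree_step_unique' hG hg hadj (x := x) (by omega) (by omega)) hne

lemma root_not_mem_child_branch (hG : G.IsTree) {a g : X} (hg : G.Adj a g) :
    a ∉ branchFinset G g a := by
  rw [mem_branchFinset_iff hG hg.symm]
  simp [SimpleGraph.dist_self]

/-- K5: decomposition of a branch -/
lemma branchFinset_eq_insert_biUnion (hG : G.IsTree) {a b : X} (hadj : G.Adj a b) :
    branchFinset G a b
      = insert a (((nbrs G a).erase b).biUnion (fun g => branchFinset G g a)) := by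
  ext x
  constructor
  · intro hx
    rcases eq_or_ne x a with rfl | hxa
    · exact Finset.mem_insert_self _ _
    · rw [mem_branchFinset_iff hG hadj] at hx
      obtain ⟨g, hg, he⟩ := tree_step_exists hG (Ne.symm hxa)
      refine Finset.mem_insert.mpr (Or.inr (Finset.mem_biUnion.mpr ⟨g, ?_, ?_⟩))
      · refine Finset.mem_erase.mpr ⟨?_, mem_nbrs.mpr hg⟩
        rintro rfl
        rw [dc G g x, dc G a x] at he
        omega
      · rw [mem_branchFinset_iff hG hg.symm]
        rw [dc G g x, dc G a x] at he
        omega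
  · intro hx
    rcases Finset.mem_insert.mp hx with rfl | hx
    · exact root_mem_branchFinset
    · obtain ⟨g, hg, hxg⟩ := Finset.mem_biUnion.mp hx
      obtain ⟨hne, hadj'⟩ := Finset.mem_erase.mp hg
      rw [mem_nbrs] at hadj'
      exact branch_subset_branch hG hadj hadj' hne hxg

lemma branch_card_sum (hG : G.IsTree) {a b : X} (hadj : G.Adj a b) :
    (branchFinset G a b).card = 1 + ∑ g ∈ (nbrs G a).erase b, (branchFinset G g a).card := by
  have hdisj : ∀ g₁ ∈ (nbrs G a).erase b, ∀ g₂ ∈ (nbrs G a).erase b, g₁ ≠ g₂ →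
      Disjoint (branchFinset G g₁ a) (branchFinset G g₂ a) := by
    intro g₁ hg₁ g₂ hg₂ hne
    rw [Finset.disjoint_left]
    intro x hx₁ hx₂
    obtain ⟨h1, ha1⟩ := Finset.mem_erase.mp hg₁
    obtain ⟨h2, ha2⟩ := Finset.mem_erase.mp hg₂
    rw [mem_nbrs] at ha1 ha2
    rw [mem_branchFinset_iff hG ha1.symm] at hx₁
    rw [mem_branchFinset_iff hG ha2.symm] at hx₂
    exact hne (tree_step_unique' hG ha1 ha2 hx₁ hx₂)
  have hnm : a ∉ ((nbrs G a).erase b).biUnion (fun g => branchFinset G g a) := by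
    intro h
    obtain ⟨g, hg, hxg⟩ := Finset.mem_biUnion.mp h
    obtain ⟨hne, hadj'⟩ := Finset.mem_erase.mp hg
    rw [mem_nbrs] at hadj'
    exact root_not_mem_child_branch hG hadj' hxg
  rw [branchFinset_eq_insert_biUnion hG hadj, Finset.card_insert_of_notMem hnm,
    Finset.card_biUnion hdisj]
  omega

lemma branch_card_lt (hG : G.IsTree) {a b g : X} (hadj : G.Adj a b) (hg : G.Adj a g)
    (hne : g ≠ b) : (branchFinset G g a).card < (branchFinset G a b).card := by
  rw [branch_card_sum hG hadj]
  have : (branchFinset G g a).card ≤ ∑ g' ∈ (nbrs G a).erase b, (branchFinset G g' a).card :=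
    Finset.single_le_sum (f := fun g' => (branchFinset G g' a).card) (fun _ _ => Nat.zero_le _)
      (Finset.mem_erase.mpr ⟨hne, mem_nbrs.mpr hg⟩)
  omega

end TreeLemmas

section BranchLemmas
variable {X : Type u} {G : SimpleGraph X} [Fintype X]

lemma branchGraph_adj {a b : X} {x y : (↑(branchFinset G a b) : Set X)} :
    (branchGraph G a b).Adj x y ↔ G.Adj x.val y.val := Iff.rfl

lemma mem_branch_set {a b : X} {x : X} :
    x ∈ (↑(branchFinset G a b) : Set X) ↔ x ∈ branchFinset G a b := Finset.mem_coe

/-- the step toward the root stays in the branch -/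
lemma branch_step (hG : G.IsTree) {a b x : X} (hadj : G.Adj a b)
    (hx : x ∈ branchFinset G a b) (hxa : x ≠ a) :
    ∃ s, G.Adj x s ∧ G.dist s a + 1 = G.dist x a ∧ s ∈ branchFinset G a b := by
  obtain ⟨s, hs, he⟩ := tree_step_exists hG hxa
  refine ⟨s, hs, he, ?_⟩
  rw [mem_branchFinset_iff hG hadj] at hx ⊢
  rcases tree_nbr_dist' hG hadj s with h1 | h1
  · exact h1
  · exfalso
    have htri : G.dist x b ≤ G.dist x s + G.dist s b :=
      hG.isConnected.dist_triangle
    have hxs : G.dist x s = 1 := SimpleGraph.dist_eq_one_iff_adj.mpr hs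
    omega

lemma branch_isTree (hG : G.IsTree) {a b : X} (hadj : G.Adj a b) :
    (branchGraph G a b).IsTree := by
  constructor
  · rw [SimpleGraph.connected_iff]
    constructor
    · have key : ∀ (n : ℕ) (x : (↑(branchFinset G a b) : Set X)), G.dist x.val a ≤ n →
          (branchGraph G a b).Reachable x (branchRoot G a b) := by
        intro n
        induction n with
        | zero =>
          intro x hx
          have hxa : x.val = a :=
            (SimpleGraph.Connected.dist_eq_zero_iff hG.isConnected).mp (by omega)
          have : x = branchRoot G a b := Subtype.ext hxa
          rw [this]
        | succ n ih =>
          intro x hx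
          rcases eq_or_ne x.val a with hxa | hxa
          · have : x = branchRoot G a b := Subtype.ext hxa
            rw [this]
          · obtain ⟨s, hs, he, hsb⟩ := branch_step hG hadj (mem_branch_set.mp x.2) hxa
            have hadj' : (branchGraph G a b).Adj x ⟨s, mem_branch_set.mpr hsb⟩ := hs
            exact (hadj'.reachable).trans (ih ⟨s, mem_branch_set.mpr hsb⟩
              (by change G.dist s a ≤ n; omega))
      intro x y
      exact (key _ x le_rfl).trans (key _ y le_rfl).symm
    · exact ⟨branchRoot G a b⟩
  · intro v c hc
    exact hG.IsAcyclic
      (c.map (SimpleGraph.Embedding.induce (G := G) (↑(branchFinset G a b) : Set X)).toHom)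
      ((SimpleGraph.Walk.map_isCycle_iff_of_injective
        (SimpleGraph.Embedding.induce (G := G)
          (↑(branchFinset G a b) : Set X)).injective).mpr hc)

lemma mem_branchFinset_of_nbr (hG : G.IsTree) {a b g : X} (hadj : G.Adj a b)
    (hg : G.Adj a g) (hne : g ≠ b) : g ∈ branchFinset G a b := by
  rw [mem_branchFinset_iff hG hadj]
  have h1 : G.dist g a = 1 := SimpleGraph.dist_eq_one_iff_adj.mpr hg.symm
  rcases tree_nbr_dist hG hadj g with h2 | h2
  · rw [dc G g b]
    rw [dc G a g] at h2
    omega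
  · exfalso
    apply hne
    have : G.dist b g = 0 := by rw [dc G a g] at h2; omega
    exact ((SimpleGraph.Connected.dist_eq_zero_iff hG.isConnected).mp this).symm

lemma nbrs_branchRoot_map (hG : G.IsTree) {a b : X} (hadj : G.Adj a b) :
    (nbrs (branchGraph G a b) (branchRoot G a b)).map
      ⟨Subtype.val, Subtype.val_injective⟩ = (nbrs G a).erase b := by
  ext g
  simp only [Finset.mem_map, Function.Embedding.coeFn_mk, Finset.mem_erase]
  constructor
  · rintro ⟨⟨gv, hgv⟩, hmem, rfl⟩
    have hadj' : G.Adj a gv := (mem_nbrs.mp hmem : (branchGraph G a b).Adj _ _)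
    refine ⟨?_, mem_nbrs.mpr hadj'⟩
    intro h
    have h' : gv = b := h
    subst h'
    have hb : (gv : X) ∈ branchFinset G a gv := mem_branch_set.mp hgv
    rw [mem_branchFinset_iff hG hadj] at hb
    simp [SimpleGraph.dist_self] at hb
  · rintro ⟨hne, hg⟩
    rw [mem_nbrs] at hg
    have hgb : g ∈ branchFinset G a b := mem_branchFinset_of_nbr hG hadj hg hne
    refine ⟨⟨g, mem_branch_set.mpr hgb⟩, ?_, rfl⟩
    rw [mem_nbrs]
    exact hg

lemma mem_nested_branch_iff (hG : G.IsTree) {a b g : X} (hadj : G.Adj a b) (hg : G.Adj a g)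
    (hne : g ≠ b) (hmem : g ∈ (↑(branchFinset G a b) : Set X))
    (x : (↑(branchFinset G a b) : Set X)) :
    x ∈ branchFinset (branchGraph G a b) ⟨g, hmem⟩ (branchRoot G a b)
      ↔ x.val ∈ branchFinset G g a := by
  set G' := branchGraph G a b with hG'def
  have hG' : G'.IsTree := branch_isTree hG hadj
  set r := branchRoot G a b with hrdef
  set gg : (↑(branchFinset G a b) : Set X) := ⟨g, hmem⟩ with hggdef
  have hadj' : G'.Adj r gg := hg
  obtain ⟨p', hp', hpl'⟩ := hG'.isConnected.exists_path_of_dist r x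
  have hL : x ∈ branchFinset G' gg r ↔ gg ∈ p'.support := by
    rw [mem_branchFinset_iff hG' hadj'.symm, ← tree_mem_support_iff hG' hadj' hp',
      dc G' gg x, dc G' r x]
    omega
  have hp : (p'.map (SimpleGraph.Embedding.induce
      (G := G) (↑(branchFinset G a b) : Set X)).toHom).IsPath :=
    SimpleGraph.Walk.map_isPath_of_injective
      (SimpleGraph.Embedding.induce (G := G) (↑(branchFinset G a b) : Set X)).injective hp'
  have hR : x.val ∈ branchFinset G g a ↔ g ∈ (p'.map (SimpleGraph.Embedding.induce
      (G := G) (↑(branchFinset G a b) : Set X)).toHom).support := by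
    rw [mem_branchFinset_iff hG hg.symm]
    refine Iff.trans ?_ (tree_mem_support_iff hG hg hp)
    constructor
    · intro h
      change G.dist g x.val + 1 = G.dist a x.val
      rw [dc G g x.val, dc G a x.val]
      omega
    · intro h
      have h' : G.dist g x.val + 1 = G.dist a x.val := h
      rw [dc G g x.val, dc G a x.val] at h'
      omega
  have hsm := SimpleGraph.Walk.support_map (SimpleGraph.Embedding.induce
      (G := G) (↑(branchFinset G a b) : Set X)).toHom p'
  rw [hL, hR, hsm]
  constructor
  · intro h
    exact List.mem_map_of_mem h
  · intro h
    obtain ⟨yy, hyy, he⟩ := List.mem_map.mp h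
    have : yy = gg := Subtype.ext he
    rwa [this] at hyy

lemma rho_nested
    (ρ : ∀ Y : Type u, SimpleGraph Y → Y → ℝ)
    (hiso : ∀ (X₁ X₂ : Type u) [Fintype X₁] [Fintype X₂] (G₁ : SimpleGraph X₁)
      (G₂ : SimpleGraph X₂), G₁.IsTree → ∀ (φ : G₁ ≃g G₂) (r : X₁),
        ρ X₂ G₂ (φ r) = ρ X₁ G₁ r)
    (hG : G.IsTree) {a b g : X} (hadj : G.Adj a b) (hg : G.Adj a g)
    (hne : g ≠ b) (hmem : g ∈ (↑(branchFinset G a b) : Set X)) :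
    ρ _ (branchGraph (branchGraph G a b) ⟨g, hmem⟩ (branchRoot G a b))
        (branchRoot (branchGraph G a b) ⟨g, hmem⟩ (branchRoot G a b))
      = ρ _ (branchGraph G g a) (branchRoot G g a) := by
  have hsub : ∀ x : X, x ∈ branchFinset G g a → x ∈ (↑(branchFinset G a b) : Set X) :=
    fun x hx => mem_branch_set.mpr (branch_subset_branch hG hadj hg hne hx)
  let φ : branchGraph G g a ≃g
      branchGraph (branchGraph G a b) ⟨g, hmem⟩ (branchRoot G a b) :=
    { toFun := fun x => ⟨⟨x.val, hsub x.val (mem_branch_set.mp x.2)⟩,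
        mem_branch_set.mpr ((mem_nested_branch_iff hG hadj hg hne hmem _).mpr
          (mem_branch_set.mp x.2))⟩
      invFun := fun y => ⟨y.val.val, mem_branch_set.mpr
        ((mem_nested_branch_iff hG hadj hg hne hmem _).mp (mem_branch_set.mp y.2))⟩
      left_inv := fun x => Subtype.ext rfl
      right_inv := fun y => Subtype.ext (Subtype.ext rfl)
      map_rel_iff' := Iff.rfl }
  have := hiso _ _ _ _ (branch_isTree hG hg.symm) φ (branchRoot G g a)
  rw [← this]
  congr 1

lemma rho_branch_eq
    (ρ : ∀ Y : Type u, SimpleGraph Y → Y → ℝ)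
    (hiso : ∀ (X₁ X₂ : Type u) [Fintype X₁] [Fintype X₂] (G₁ : SimpleGraph X₁)
      (G₂ : SimpleGraph X₂), G₁.IsTree → ∀ (φ : G₁ ≃g G₂) (r : X₁),
        ρ X₂ G₂ (φ r) = ρ X₁ G₁ r)
    (f : Multiset ℝ → ℝ)
    (hrec : ∀ (Y : Type u) [Fintype Y] (G : SimpleGraph Y) (r : Y), G.IsTree →
      ρ Y G r = f ((nbrs G r).val.map (fun u =>
        ρ _ (branchGraph G u r) (branchRoot G u r))))
    (hG : G.IsTree) {a b : X} (hadj : G.Adj a b) :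
    ρ _ (branchGraph G a b) (branchRoot G a b)
      = f (((nbrs G a).erase b).val.map
          (fun g => ρ _ (branchGraph G g a) (branchRoot G g a))) := by
  rw [hrec _ (branchGraph G a b) (branchRoot G a b) (branch_isTree hG hadj)]
  congr 1
  rw [← nbrs_branchRoot_map hG hadj, Finset.map_val, Multiset.map_map]
  apply Multiset.map_congr rfl
  intro uu huu
  have hmem' : (uu : X) ∈ (nbrs G a).erase b := by
    rw [← nbrs_branchRoot_map hG hadj]
    exact Finset.mem_map_of_mem _ (by exact huu)
  obtain ⟨hne, hgnb⟩ := Finset.mem_erase.mp hmem'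
  rw [mem_nbrs] at hgnb
  have : uu = (⟨uu.val, uu.2⟩ : (↑(branchFinset G a b) : Set X)) := Subtype.ext rfl
  simp only [Function.comp]
  rw [this]
  exact rho_nested ρ hiso hG hadj hgnb hne uu.2

section Mono
variable {f : Multiset ℝ → ℝ}
  (hmono : ∀ (s : Multiset ℝ) (y z : ℝ), y < z → f (y ::ₘ s) < f (z ::ₘ s))
  (hadd : ∀ (s : Multiset ℝ) (y : ℝ), f s < f (y ::ₘ s))

include hadd in
lemma f_le_add (c b : Multiset ℝ) : f c ≤ f (b + c) := by
  induction b using Multiset.induction_on with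
  | empty => simp
  | cons y b' ih =>
    calc f c ≤ f (b' + c) := ih
    _ ≤ f (y ::ₘ (b' + c)) := le_of_lt (hadd _ _)
    _ = f (y ::ₘ b' + c) := by rw [Multiset.cons_add]

include hmono hadd in
lemma f_mono (a : Multiset ℝ) : ∀ (b c : Multiset ℝ), Multiset.card a ≤ Multiset.card b →
    (∀ x ∈ a, ∀ y ∈ b, x ≤ y) → f (a + c) ≤ f (b + c) := by
  induction a using Multiset.induction_on with
  | empty =>
    intro b c _ _
    rw [zero_add]
    exact f_le_add hadd c b
  | cons x a' ih =>
    intro b c hcard hpair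
    have hb : b ≠ 0 := by
      intro h
      rw [h] at hcard
      simp at hcard
    obtain ⟨y, hy⟩ := Multiset.exists_mem_of_ne_zero hb
    have hbe : y ::ₘ b.erase y = b := Multiset.cons_erase hy
    have hxy : x ≤ y := hpair x (Multiset.mem_cons_self _ _) y hy
    calc f (x ::ₘ a' + c) = f (x ::ₘ (a' + c)) := by rw [Multiset.cons_add]
    _ ≤ f (y ::ₘ (a' + c)) := by
        rcases lt_or_eq_of_le hxy with h | h
        · exact le_of_lt (hmono _ _ _ h)
        · rw [h]
    _ = f (a' + (y ::ₘ c)) := by rw [Multiset.add_cons]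
    _ ≤ f (b.erase y + (y ::ₘ c)) := by
        apply ih
        · have := Multiset.card_erase_of_mem hy
          rw [← hbe] at hcard
          simp at hcard
          omega
        · intro x' hx' y' hy'
          exact hpair x' (Multiset.mem_cons_of_mem hx') y' (Multiset.mem_of_mem_erase hy')
    _ = f (y ::ₘ (b.erase y + c)) := by rw [Multiset.add_cons]
    _ = f (y ::ₘ b.erase y + c) := by rw [Multiset.cons_add]
    _ = f (b + c) := by rw [hbe]

include hmono hadd in
lemma f_lt_card_lt {a b : Multiset ℝ} (hcard : Multiset.card a < Multiset.card b)
    (hpair : ∀ x ∈ a, ∀ y ∈ b, x ≤ y) : f a < f b := by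
  have hb : b ≠ 0 := by
    intro h
    rw [h] at hcard
    simp at hcard
  obtain ⟨y, hy⟩ := Multiset.exists_mem_of_ne_zero hb
  have hbe : y ::ₘ b.erase y = b := Multiset.cons_erase hy
  have h1 : f a ≤ f (b.erase y) := by
    have := f_mono hmono hadd a (b.erase y) 0 ?_ ?_
    · simpa using this
    · have := Multiset.card_erase_of_mem hy
      rw [← hbe] at hcard
      simp at hcard
      omega
    · intro x hx y' hy'
      exact hpair x hx y' (Multiset.mem_of_mem_erase hy')
  calc f a ≤ f (b.erase y) := h1
  _ < f (y ::ₘ b.erase y) := hadd _ _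
  _ = f b := by rw [hbe]

include hmono hadd in
lemma f_lt_of_mem_lt {a b : Multiset ℝ} (hcard : Multiset.card a ≤ Multiset.card b)
    (hpair : ∀ x ∈ a, ∀ y ∈ b, x ≤ y) {x₀ y₀ : ℝ} (hx₀ : x₀ ∈ a) (hy₀ : y₀ ∈ b)
    (hlt : x₀ < y₀) : f a < f b := by
  have hae : x₀ ::ₘ a.erase x₀ = a := Multiset.cons_erase hx₀
  have hbe : y₀ ::ₘ b.erase y₀ = b := Multiset.cons_erase hy₀
  calc f a = f (x₀ ::ₘ a.erase x₀) := by rw [hae]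
  _ < f (y₀ ::ₘ a.erase x₀) := hmono _ _ _ hlt
  _ = f (a.erase x₀ + (y₀ ::ₘ 0)) := by rw [Multiset.add_cons, add_zero]
  _ ≤ f (b.erase y₀ + (y₀ ::ₘ 0)) := by
      apply f_mono hmono hadd
      · rw [← hae] at hcard
        rw [← hbe] at hcard
        have h1 := Multiset.card_erase_of_mem hx₀
        have h2 := Multiset.card_erase_of_mem hy₀
        simp at hcard
        omega
      · intro x hx y hy
        exact hpair x (Multiset.mem_of_mem_erase hx) y (Multiset.mem_of_mem_erase hy)
  _ = f (y₀ ::ₘ (b.erase y₀ + 0)) := by rw [Multiset.add_cons]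
  _ = f b := by rw [add_zero, hbe]

end Mono

lemma sum_le_sum_of_card_le {X : Type u} {A B : Finset X} {F F' : X → ℕ}
    (hcard : B.card ≤ A.card) (hpair : ∀ a ∈ A, ∀ b ∈ B, F' b ≤ F a) :
    ∑ b ∈ B, F' b ≤ ∑ a ∈ A, F a := by
  rcases B.eq_empty_or_nonempty with rfl | hB
  · simp
  · have hA : A.Nonempty := by
      rw [← Finset.card_pos] at hB ⊢
      omega
    obtain ⟨a₀, ha₀, hmin⟩ := A.exists_min_image F hA
    calc ∑ b ∈ B, F' b ≤ ∑ _b ∈ B, F a₀ := by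
          apply Finset.sum_le_sum
          intro b hb
          exact hpair a₀ ha₀ b hb
    _ = B.card * F a₀ := by rw [Finset.sum_const, smul_eq_mul]
    _ ≤ A.card * F a₀ := Nat.mul_le_mul_right _ hcard
    _ ≤ ∑ a ∈ A, F a := by
        have := Finset.card_nsmul_le_sum A F (F a₀) (fun a ha => hmin a ha)
        simpa using this

lemma away_dist {X : Type u} {G : SimpleGraph X} [Fintype X] (hG : G.IsTree) {v w u t : X}
    (hvw : v ≠ w) (hu : u ∈ awayChildren G v w) (ht : t ∈ awayChildren G w v) :
    G.dist t u = G.dist t v + 1 := by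
  obtain ⟨huv, hwu⟩ := (mem_awayChildren_iff hG).mp hu
  obtain ⟨hwt, hvt⟩ := (mem_awayChildren_iff hG).mp ht
  rcases tree_nbr_dist' hG huv t with h | h
  · exact h
  · exfalso
    obtain ⟨pv, hpv, hpve⟩ := tree_step_exists hG hvw
    have htw1 : G.dist t w = 1 := SimpleGraph.dist_eq_one_iff_adj.mpr hwt.symm
    have hpvv : G.dist pv v = 1 := SimpleGraph.dist_eq_one_iff_adj.mpr hpv.symm
    have htri1 : G.dist t pv ≤ G.dist t w + G.dist w pv := hG.isConnected.dist_triangle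
    have htri2 : G.dist t v ≤ G.dist t pv + G.dist pv v := hG.isConnected.dist_triangle
    have hwv1 : 0 < G.dist w v :=
      hG.isConnected.pos_dist_of_ne (Ne.symm hvw)
    have e1 := dc G w pv
    have e2 := dc G v w
    have e3 := dc G t v
    have e4 := dc G w v
    have e5 := dc G v t
    have he2 : G.dist t v = G.dist t pv + 1 := by omega
    have hupv : u = pv := tree_step_unique' hG huv hpv (x := t) h he2
    have hwpv : G.dist w pv + 1 = G.dist w v := by omega
    rw [hupv] at hwu
    omega

lemma away_config {X : Type u} {G : SimpleGraph X} [Fintype X] (hG : G.IsTree) {v w u t : X}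
    (hvw : v ≠ w) (hu : u ∈ awayChildren G v w) (ht : t ∈ awayChildren G w v) :
    G.Adj u v ∧ G.Adj t w ∧ u ≠ t ∧ G.dist t u = G.dist t v + 1
      ∧ G.dist u t = G.dist u w + 1 := by
  obtain ⟨huv, hwu⟩ := (mem_awayChildren_iff hG).mp hu
  obtain ⟨hwt, hvt⟩ := (mem_awayChildren_iff hG).mp ht
  refine ⟨huv.symm, hwt.symm, ?_, away_dist hG hvw hu ht, away_dist hG hvw.symm ht hu⟩
  intro h
  subst h
  have htw1 : G.dist w u = 1 := SimpleGraph.dist_eq_one_iff_adj.mpr hwt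
  have hwv1 : 0 < G.dist w v := hG.isConnected.pos_dist_of_ne (Ne.symm hvw)
  omega

lemma main_lemma {W : Type u} [Fintype W]

    (ρ : ∀ X : Type u, SimpleGraph X → X → ℝ)
    (hiso : ∀ (X₁ X₂ : Type u) [Fintype X₁] [Fintype X₂] (G₁ : SimpleGraph X₁)
      (G₂ : SimpleGraph X₂), G₁.IsTree → ∀ (φ : G₁ ≃g G₂) (r : X₁),
        ρ X₂ G₂ (φ r) = ρ X₁ G₁ r)
    (f : Multiset ℝ → ℝ)
    (hrec : ∀ (X : Type u) [Fintype X] (G : SimpleGraph X) (r : X), G.IsTree →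
      ρ X G r = f ((nbrs G r).val.map (fun u =>
        ρ _ (branchGraph G u r) (branchRoot G u r))))
    (hmono : ∀ (s : Multiset ℝ) (y z : ℝ), y < z → f (y ::ₘ s) < f (z ::ₘ s))
    (hadd : ∀ (s : Multiset ℝ) (y : ℝ), f s < f (y ::ₘ s))
    (T : SimpleGraph W) (hT : T.IsTree)
    (hext : ExchangeExtremal T (fun u v => ρ _ (branchGraph T u v) (branchRoot T u v))) :
    ∀ (n : ℕ) (c d pc pd : W), c ≠ d → T.Adj c pc → T.Adj d pd →
      T.dist d c = T.dist d pc + 1 → T.dist c d = T.dist c pd + 1 →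
      (branchFinset T c pc).card + (branchFinset T d pd).card ≤ n →
      ρ _ (branchGraph T d pd) (branchRoot T d pd)
        ≤ ρ _ (branchGraph T c pc) (branchRoot T c pc) →
      (branchFinset T d pd).card ≤ (branchFinset T c pc).card := by
  intro n
  induction n using Nat.strong_induction_on with
  | _ n IH =>
  intro c d pc pd hne hadjc hadjd htowc htowd hsize hrho
  have hkc : awayChildren T c d = (nbrs T c).erase pc := awayChildren_eq_erase hT hadjc htowc
  have hld : awayChildren T d c = (nbrs T d).erase pd := awayChildren_eq_erase hT hadjd htowd
  -- pairwise size comparison via the inductive hypothesis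
  have finish : (awayChildren T d c).card ≤ (awayChildren T c d).card →
      (∀ g ∈ awayChildren T c d, ∀ e ∈ awayChildren T d c,
        ρ _ (branchGraph T e d) (branchRoot T e d) ≤ ρ _ (branchGraph T g c) (branchRoot T g c)) →
      (branchFinset T d pd).card ≤ (branchFinset T c pc).card := by
    intro hcard hpair
    have hsum : ∑ e ∈ awayChildren T d c, (branchFinset T e d).card
        ≤ ∑ g ∈ awayChildren T c d, (branchFinset T g c).card := by
      apply sum_le_sum_of_card_le hcard
      intro g hg e he
      obtain ⟨hgc, hed, hge, hdeg, hdge⟩ := away_config hT hne hg he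
      have hgpc : g ≠ pc := by
        rw [hkc] at hg
        exact (Finset.mem_erase.mp hg).1
      have hepd : e ≠ pd := by
        rw [hld] at he
        exact (Finset.mem_erase.mp he).1
      have hlt1 : (branchFinset T g c).card < (branchFinset T c pc).card :=
        branch_card_lt hT hadjc hgc.symm hgpc
      have hlt2 : (branchFinset T e d).card < (branchFinset T d pd).card :=
        branch_card_lt hT hadjd hed.symm hepd
      exact IH ((branchFinset T g c).card + (branchFinset T e d).card) (by omega)
        g e c d hge hgc hed hdeg hdge le_rfl (hpair g hg e he)
    rw [branch_card_sum hT hadjc, branch_card_sum hT hadjd, ← hkc, ← hld]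
    omega
  rcases hext c d hne with ⟨hcard, hpair⟩ | ⟨hcard, hpair⟩
  · exact finish hcard hpair
  · -- case B
    have hρc : ρ _ (branchGraph T c pc) (branchRoot T c pc)
        = f ((awayChildren T c d).val.map
            (fun g => ρ _ (branchGraph T g c) (branchRoot T g c))) := by
      rw [rho_branch_eq ρ hiso f hrec hT hadjc, hkc]
    have hρd : ρ _ (branchGraph T d pd) (branchRoot T d pd)
        = f ((awayChildren T d c).val.map
            (fun e => ρ _ (branchGraph T e d) (branchRoot T e d))) := by
      rw [rho_branch_eq ρ hiso f hrec hT hadjd, hld]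
    set mc := (awayChildren T c d).val.map
        (fun g => ρ _ (branchGraph T g c) (branchRoot T g c)) with hmc
    set md := (awayChildren T d c).val.map
        (fun e => ρ _ (branchGraph T e d) (branchRoot T e d)) with hmd
    have hpairm : ∀ x ∈ mc, ∀ y ∈ md, x ≤ y := by
      intro x hx y hy
      obtain ⟨g, hg, rfl⟩ := Multiset.mem_map.mp hx
      obtain ⟨e, he, rfl⟩ := Multiset.mem_map.mp hy
      exact hpair g hg e he
    have hcardm : Multiset.card mc = (awayChildren T c d).card := by
      rw [hmc, Multiset.card_map]; rfl
    have hcardm' : Multiset.card md = (awayChildren T d c).card := by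
      rw [hmd, Multiset.card_map]; rfl
    rcases lt_or_eq_of_le hcard with hlt | heq
    · exfalso
      have : f mc < f md := f_lt_card_lt hmono hadd (by omega) hpairm
      rw [← hρc, ← hρd] at this
      linarith
    · by_cases hge : ∀ g ∈ awayChildren T c d, ∀ e ∈ awayChildren T d c,
          ρ _ (branchGraph T e d) (branchRoot T e d) ≤ ρ _ (branchGraph T g c) (branchRoot T g c)
      · exact finish (le_of_eq heq.symm) hge
      · exfalso
        push_neg at hge
        obtain ⟨g₀, hg₀, e₀, he₀, hlt₀⟩ := hge
        have : f mc < f md := by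
          apply f_lt_of_mem_lt hmono hadd (by omega) hpairm
            (Multiset.mem_map_of_mem _ hg₀) (Multiset.mem_map_of_mem _ he₀) hlt₀
        rw [← hρc, ← hρd] at this
        linarith


/-- if `ρ` is an isomorphism-invariant rooted-tree invariant satisfying
(I.1)–(I.3) and the tree `T` is `ρ`-exchange-extremal, then `T` is `ρ₀`-exchange-extremal,
where `ρ₀` is the number of vertices. -/
theorem stmt4 [Fintype V]
    (ρ : ∀ X : Type u, SimpleGraph X → X → ℝ)
    (hiso : ∀ (X₁ X₂ : Type u) [Fintype X₁] [Fintype X₂] (G₁ : SimpleGraph X₁)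
      (G₂ : SimpleGraph X₂), G₁.IsTree → ∀ (φ : G₁ ≃g G₂) (r : X₁),
        ρ X₂ G₂ (φ r) = ρ X₁ G₁ r)
    (f : Multiset ℝ → ℝ)
    (hrec : ∀ (X : Type u) [Fintype X] (G : SimpleGraph X) (r : X), G.IsTree →
      ρ X G r = f ((nbrs G r).val.map (fun u =>
        ρ _ (branchGraph G u r) (branchRoot G u r))))
    (hmono : ∀ (s : Multiset ℝ) (y z : ℝ), y < z → f (y ::ₘ s) < f (z ::ₘ s))
    (hadd : ∀ (s : Multiset ℝ) (y : ℝ), f s < f (y ::ₘ s))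
    (hsingle : ∀ (X : Type u) [Fintype X] (G : SimpleGraph X) (r : X), G.IsTree →
      1 < Fintype.card X →
      ρ _ (⊥ : SimpleGraph PUnit.{u+1}) PUnit.unit < ρ X G r)
    (T : SimpleGraph V) (hT : T.IsTree)
    (hext : ExchangeExtremal T (fun u v => ρ _ (branchGraph T u v) (branchRoot T u v))) :
    ExchangeExtremal T (fun u v => ((branchFinset T u v).card : ℝ)) := by
  intro v w hvw
  rcases hext v w hvw with ⟨hcard, hpair⟩ | ⟨hcard, hpair⟩
  · left
    refine ⟨hcard, ?_⟩
    intro u hu t ht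
    obtain ⟨huv, htw, hut, h1, h2⟩ := away_config hT hvw hu ht
    have := main_lemma ρ hiso f hrec hmono hadd T hT hext
      ((branchFinset T u v).card + (branchFinset T t w).card) u t v w hut huv htw h1 h2
      le_rfl (hpair u hu t ht)
    show ((branchFinset T t w).card : ℝ) ≤ ((branchFinset T u v).card : ℝ)
    exact_mod_cast this
  · right
    refine ⟨hcard, ?_⟩
    intro u hu t ht
    obtain ⟨huv, htw, hut, h1, h2⟩ := away_config hT hvw hu ht
    have := main_lemma ρ hiso f hrec hmono hadd T hT hext
      ((branchFinset T t w).card + (branchFinset T u v).card) t u w v (Ne.symm hut) htw huv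
      h2 h1 le_rfl (hpair u hu t ht)
    show ((branchFinset T u v).card : ℝ) ≤ ((branchFinset T t w).card : ℝ)
    exact_mod_cast this
end BranchLemmas
end

section
/- Let H be a tree with two distinct leaves v and w, let A_1,…,A_k and B_1,…,B_ℓ be rooted trees, and let T = [A_1,…,A_k]vHw[B_1,…,B_ℓ]. Then η(T) = η(H−v−w) + ∑_{i=1}^k η(A_i) + ∑_{j=1}^ℓ η(B_j) + η(H−v, w)·∏_{j=1}^ℓ (1+η(B_j, r(B_j))) + η(H−w, v)·∏_{i=1}^k (1+η(A_i, r(A_i))) + η(H, v, w)·∏_{i=1}^k (1+η(A_i, r(A_i)))·∏_{j=1}^ℓ (1+η(B_j, r(B_j))). -/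
open scoped Classical
open Finset

universe u

variable {V : Type u}

/-- The number of subtrees of `G` (nonempty vertex sets inducing a connected subgraph)
that are contained in `P` and contain all vertices of `req`. -/
noncomputable def etaIn (G : SimpleGraph V) [Fintype V] (P req : Finset V) : ℕ :=
  Nat.card {s : Finset V // s.Nonempty ∧ s ⊆ P ∧ req ⊆ s ∧
    (G.induce (↑s : Set V)).Connected}

/-- The vertex set of the host tree `H` in the decomposition
`T = [A_1,…,A_k] v H w [B_1,…,B_ℓ]` determined by the pair `(v, w)`:
everything outside the branches hanging from `v` away from `w` and from `w` away from `v`. -/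
noncomputable def hostSet (G : SimpleGraph V) [Fintype V] (v w : V) : Finset V :=
  Finset.univ.filter (fun x =>
    (∀ u ∈ awayChildren G v w, x ∉ branchFinset G u v) ∧
    (∀ u ∈ awayChildren G w v, x ∉ branchFinset G u w))

namespace StmtAux

variable {T : SimpleGraph V}


/-- the unique path in a tree -/
noncomputable def pth (hT : T.IsTree) (a b : V) : T.Walk a b :=
  (hT.existsUnique_path a b).choose

lemma pth_isPath (hT : T.IsTree) (a b : V) : (pth hT a b).IsPath :=
  (hT.existsUnique_path a b).choose_spec.1

lemma pth_unique (hT : T.IsTree) {a b : V} {p : T.Walk a b} (hp : p.IsPath) :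
    p = pth hT a b :=
  (hT.existsUnique_path a b).choose_spec.2 p hp

lemma pth_self (hT : T.IsTree) (a : V) : pth hT a a = SimpleGraph.Walk.nil :=
  (pth_unique hT SimpleGraph.Walk.IsPath.nil).symm

lemma mem_pth_self (hT : T.IsTree) {a x : V} : x ∈ (pth hT a a).support ↔ x = a := by
  rw [pth_self]; simp

lemma pth_symm (hT : T.IsTree) (a b : V) : pth hT b a = (pth hT a b).reverse :=
  (pth_unique hT ((pth_isPath hT a b).reverse)).symm

lemma mem_pth_symm (hT : T.IsTree) {a b x : V} :
    x ∈ (pth hT b a).support ↔ x ∈ (pth hT a b).support := by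
  rw [pth_symm]; simp

lemma start_mem_pth (hT : T.IsTree) (a b : V) : a ∈ (pth hT a b).support :=
  SimpleGraph.Walk.start_mem_support _

lemma end_mem_pth (hT : T.IsTree) (a b : V) : b ∈ (pth hT a b).support :=
  SimpleGraph.Walk.end_mem_support _

lemma pth_take (hT : T.IsTree) {a b c : V} (h : c ∈ (pth hT a b).support) :
    pth hT a c = (pth hT a b).takeUntil c h :=
  (pth_unique hT ((pth_isPath hT a b).takeUntil h)).symm

lemma pth_drop (hT : T.IsTree) {a b c : V} (h : c ∈ (pth hT a b).support) :
    pth hT c b = (pth hT a b).dropUntil c h :=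
  (pth_unique hT ((pth_isPath hT a b).dropUntil h)).symm

lemma pth_split (hT : T.IsTree) {a b c : V} (h : c ∈ (pth hT a b).support) :
    pth hT a b = (pth hT a c).append (pth hT c b) := by
  rw [pth_take hT h, pth_drop hT h, SimpleGraph.Walk.take_spec]

/-- support of a path between a and b is inside the union through any c -/
lemma pth_sub_union (hT : T.IsTree) (a b c : V) :
    (pth hT a b).support ⊆ ((pth hT a c).append (pth hT c b)).support := by
  intro x hx
  have hb : ((pth hT a c).append (pth hT c b)).bypass = pth hT a b :=
    pth_unique hT (SimpleGraph.Walk.bypass_isPath _)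
  rw [← hb] at hx
  exact SimpleGraph.Walk.support_bypass_subset _ hx

lemma mem_pth_union (hT : T.IsTree) {a b x : V} (c : V) (hx : x ∈ (pth hT a b).support) :
    x ∈ (pth hT a c).support ∨ x ∈ (pth hT c b).support := by
  have := pth_sub_union hT a b c hx
  rw [SimpleGraph.Walk.mem_support_append_iff] at this
  exact this

lemma sub_of_split_left (hT : T.IsTree) {a b c : V} (h : c ∈ (pth hT a b).support) :
    (pth hT a c).support ⊆ (pth hT a b).support := by
  rw [pth_take hT h]; exact SimpleGraph.Walk.support_takeUntil_subset _ h

lemma sub_of_split_right (hT : T.IsTree) {a b c : V} (h : c ∈ (pth hT a b).support) :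
    (pth hT c b).support ⊆ (pth hT a b).support := by
  rw [pth_drop hT h]; exact SimpleGraph.Walk.support_dropUntil_subset _ h

/-- in a path decomposition the two halves meet only at the middle point -/
lemma append_inter {a b c x : V} {p : T.Walk a c} {q : T.Walk c b}
    (hp : (p.append q).IsPath) (hxp : x ∈ p.support) (hxq : x ∈ q.support) : x = c := by
  by_contra hxc
  have hnd := hp.support_nodup
  rw [SimpleGraph.Walk.support_append] at hnd
  have hdisj := List.disjoint_of_nodup_append hnd
  have : x ∈ q.support.tail := by
    rw [SimpleGraph.Walk.support_eq_cons] at hxq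
    rcases List.mem_cons.mp hxq with h | h
    · exact absurd h hxc
    · exact h
  exact hdisj hxp this

lemma pth_middle (hT : T.IsTree) {a b c x : V} (h : c ∈ (pth hT a b).support)
    (hx1 : x ∈ (pth hT a c).support) (hx2 : x ∈ (pth hT c b).support) : x = c := by
  have := pth_split hT h
  have hp : ((pth hT a c).append (pth hT c b)).IsPath := by
    rw [← this]; exact pth_isPath hT a b
  exact append_inter hp hx1 hx2

lemma pth_adj (hT : T.IsTree) {a b : V} (h : T.Adj a b) :
    pth hT a b = SimpleGraph.Walk.cons h SimpleGraph.Walk.nil := by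
  refine (pth_unique hT ?_).symm
  simp [SimpleGraph.Walk.isPath_def, h.ne]

lemma mem_pth_adj (hT : T.IsTree) {a b x : V} (h : T.Adj a b) :
    x ∈ (pth hT a b).support ↔ x = a ∨ x = b := by
  rw [pth_adj hT h]; simp

/-- penultimate: if `u` adjacent to `v` lies on the path from `x` to `v`,
the path is `pth x u` concatenated with the edge. -/
lemma pth_penult (hT : T.IsTree) {u v x : V} (hadj : T.Adj u v)
    (h : u ∈ (pth hT x v).support) :
    pth hT x v = (pth hT x u).concat hadj := by
  rw [pth_split hT h, pth_adj hT hadj]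
  rfl

lemma support_getLast? {G : SimpleGraph V} {a b : V} (p : G.Walk a b) :
    p.support.getLast? = some b := by
  induction p with
  | nil => rfl
  | cons h p ih =>
    rw [SimpleGraph.Walk.support_cons, SimpleGraph.Walk.support_eq_cons p]
    rw [SimpleGraph.Walk.support_eq_cons p] at ih
    rwa [List.getLast?_cons_cons]

lemma pth_penult_unique (hT : T.IsTree) {u u' v x : V} (h1 : T.Adj u v) (h2 : T.Adj u' v)
    (m1 : u ∈ (pth hT x v).support) (m2 : u' ∈ (pth hT x v).support) : u = u' := by
  have e1 := pth_penult hT h1 m1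
  have e2 := pth_penult hT h2 m2
  have s1 : (pth hT x v).support = (pth hT x u).support.concat v := by
    rw [e1, SimpleGraph.Walk.support_concat, List.concat_eq_append]
  have s2 : (pth hT x v).support = (pth hT x u').support.concat v := by
    rw [e2, SimpleGraph.Walk.support_concat, List.concat_eq_append]
  have : (pth hT x u).support = (pth hT x u').support := by
    have := s1.symm.trans s2
    have h := congrArg List.dropLast this
    simpa [List.dropLast_concat] using h
  have l1 := support_getLast? (pth hT x u)
  have l2 := support_getLast? (pth hT x u')
  rw [this] at l1
  rw [l1] at l2
  exact Option.some_injective _ l2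

/-- distance equals path length -/
lemma dist_eq_pth_length (hT : T.IsTree) (a b : V) :
    T.dist a b = (pth hT a b).length := by
  refine le_antisymm (SimpleGraph.dist_le _) ?_
  obtain ⟨p, hp, hl⟩ := hT.isConnected.exists_path_of_dist a b
  rw [pth_unique hT hp] at hl
  exact le_of_eq hl

/-- for adjacent `u v`: `dist x u < dist x v` iff `u` lies on the path from `x` to `v` -/
lemma dist_lt_iff_mem (hT : T.IsTree) {u v : V} (hadj : T.Adj u v) (x : V) :
    T.dist x u < T.dist x v ↔ u ∈ (pth hT x v).support := by
  constructor
  · intro hlt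
    by_contra hu
    have hpc : ((pth hT x v).concat hadj.symm).IsPath := by
      rw [← SimpleGraph.Walk.isPath_reverse_iff, SimpleGraph.Walk.reverse_concat]
      exact ((pth_isPath hT x v).reverse).cons (by simpa using hu)
    have he : pth hT x u = (pth hT x v).concat hadj.symm := (pth_unique hT hpc).symm
    have : (pth hT x u).length = (pth hT x v).length + 1 := by
      rw [he, SimpleGraph.Walk.length_concat]
    rw [dist_eq_pth_length hT, dist_eq_pth_length hT] at hlt
    omega
  · intro hu
    have := pth_penult hT hadj hu
    have hlength : (pth hT x v).length = (pth hT x u).length + 1 := by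
      rw [this, SimpleGraph.Walk.length_concat]
    rw [dist_eq_pth_length hT, dist_eq_pth_length hT, hlength]
    omega
set_option linter.unusedSectionVars false
set_option linter.unusedVariables false

lemma mem_concat' {α : Type*} {x a : α} {l : List α} : x ∈ l.concat a ↔ x ∈ l ∨ x = a := by
  simp

section Struct

variable [Fintype V]

lemma mem_nbrs {u v : V} : u ∈ nbrs T v ↔ T.Adj v u := by
  simp [nbrs]

lemma mem_branch (hT : T.IsTree) {u v : V} (hadj : T.Adj u v) {x : V} :
    x ∈ branchFinset T u v ↔ u ∈ (pth hT x v).support := by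
  rw [branchFinset, Finset.mem_insert, Finset.mem_filter]
  constructor
  · rintro (rfl | ⟨-, hlt⟩)
    · exact start_mem_pth hT x v
    · exact (dist_lt_iff_mem hT hadj x).1 hlt
  · intro h
    exact Or.inr ⟨Finset.mem_univ _, (dist_lt_iff_mem hT hadj x).2 h⟩

lemma mem_away (hT : T.IsTree) {u v w : V} :
    u ∈ awayChildren T v w ↔ T.Adj v u ∧ v ∈ (pth hT u w).support := by
  rw [awayChildren, Finset.mem_filter, mem_nbrs]
  constructor
  · rintro ⟨hadj, hlt⟩
    refine ⟨hadj, ?_⟩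
    have h' : T.dist w v < T.dist w u := by
      rwa [SimpleGraph.dist_comm (u := v) (v := w), SimpleGraph.dist_comm (u := u) (v := w)] at hlt
    exact (mem_pth_symm hT).1 ((dist_lt_iff_mem hT hadj w).1 h')
  · rintro ⟨hadj, hmem⟩
    refine ⟨hadj, ?_⟩
    have := (dist_lt_iff_mem hT hadj w).2 ((mem_pth_symm hT).2 hmem)
    rwa [SimpleGraph.dist_comm (u := w) (v := v), SimpleGraph.dist_comm (u := w) (v := u)] at this

variable {v w : V}

lemma aw_not_on (hT : T.IsTree) {u : V} (hu : u ∈ awayChildren T v w) :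
    u ∉ (pth hT v w).support ∧ u ≠ w ∧ T.Adj v u := by
  obtain ⟨hadj, hmem⟩ := (mem_away hT).1 hu
  have hne : u ≠ w := by
    rintro rfl
    rw [mem_pth_self hT] at hmem
    exact hadj.ne hmem
  refine ⟨?_, hne, hadj⟩
  intro hmem'
  exact hadj.ne (pth_middle hT hmem (start_mem_pth hT u v) hmem').symm

lemma not_mem_branch_self (hT : T.IsTree) {u : V} (hadj : T.Adj u v) : v ∉ branchFinset T u v := by
  rw [mem_branch hT hadj, mem_pth_self hT]
  exact fun h => hadj.ne h

lemma mem_branch_root (hT : T.IsTree) {u : V} (hadj : T.Adj u v) : u ∈ branchFinset T u v := by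
  rw [mem_branch hT hadj]; exact start_mem_pth hT u v

lemma w_not_mem_branch (hT : T.IsTree) {u : V} (hu : u ∈ awayChildren T v w) :
    w ∉ branchFinset T u v := by
  obtain ⟨hno, _, hadj⟩ := aw_not_on hT hu
  rw [mem_branch hT hadj.symm, mem_pth_symm hT]
  exact hno

lemma sep (hT : T.IsTree) {u x y : V} (hadj : T.Adj u v) (hx : u ∈ (pth hT x v).support)
    (hy : u ∉ (pth hT y v).support) : v ∈ (pth hT x y).support := by
  by_contra hv
  have hu : u ∈ (pth hT x y).support ∨ u ∈ (pth hT y v).support := mem_pth_union hT y hx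
  rcases hu with hu | hu
  swap
  · exact hy hu
  have hvy : v ∉ (pth hT u y).support := fun hmem =>
    hv (sub_of_split_right hT hu hmem)
  have hvy' : v ∉ (pth hT y u).support := by rwa [mem_pth_symm hT]
  have hpc : ((pth hT y u).concat hadj).IsPath := by
    rw [← SimpleGraph.Walk.isPath_reverse_iff, SimpleGraph.Walk.reverse_concat]
    exact ((pth_isPath hT y u).reverse).cons (by simpa using hvy')
  have he : pth hT y v = (pth hT y u).concat hadj := (pth_unique hT hpc).symm
  apply hy
  rw [he, SimpleGraph.Walk.support_concat, ← List.concat_eq_append]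
  exact mem_concat'.2 (Or.inl (end_mem_pth hT y u))

lemma sep_branch (hT : T.IsTree) {u x y : V} (hadj : T.Adj u v) (hx : x ∈ branchFinset T u v)
    (hy : y ∉ branchFinset T u v) : v ∈ (pth hT x y).support := by
  rw [mem_branch hT hadj] at hx hy
  exact sep hT hadj hx hy

lemma branch_path_sub (hT : T.IsTree) {u x : V} (hadj : T.Adj u v) (hx : x ∈ branchFinset T u v) :
    ∀ c ∈ (pth hT x v).support, c = v ∨ c ∈ branchFinset T u v := by
  rw [mem_branch hT hadj] at hx
  intro c hc
  have he := pth_penult hT hadj hx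
  rw [he, SimpleGraph.Walk.support_concat, ← List.concat_eq_append] at hc
  rcases mem_concat'.1 hc with hc | hc
  · right
    rw [mem_branch hT hadj]
    have hvn : v ∉ (pth hT x u).support := by
      intro hvmem
      exact hadj.ne (pth_middle hT hx hvmem (end_mem_pth hT u v)).symm
    have hvnc : v ∉ (pth hT c u).support := fun hm => hvn (sub_of_split_right hT hc hm)
    have hpc : ((pth hT c u).concat hadj).IsPath := by
      rw [← SimpleGraph.Walk.isPath_reverse_iff, SimpleGraph.Walk.reverse_concat]
      exact ((pth_isPath hT c u).reverse).cons (by simpa using hvnc)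
    have he2 : pth hT c v = (pth hT c u).concat hadj := (pth_unique hT hpc).symm
    rw [he2, SimpleGraph.Walk.support_concat, ← List.concat_eq_append]
    exact mem_concat'.2 (Or.inl (end_mem_pth hT c u))
  · left; exact hc

lemma branch_convex (hT : T.IsTree) {u a b : V} (hadj : T.Adj u v) (ha : a ∈ branchFinset T u v)
    (hb : b ∈ branchFinset T u v) : ∀ c ∈ (pth hT a b).support, c ∈ branchFinset T u v := by
  intro c hc
  by_contra hcn
  have h1 : v ∈ (pth hT a c).support := sep_branch hT hadj ha hcn
  have h2 : v ∈ (pth hT c b).support := by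
    rw [mem_pth_symm hT]; exact sep_branch hT hadj hb hcn
  have hvc : v = c := pth_middle hT hc h1 h2
  subst hvc
  have hu1 : u ∈ (pth hT a v).support := (mem_branch hT hadj).1 ha
  have hu2 : u ∈ (pth hT v b).support := by
    rw [mem_pth_symm hT]; exact (mem_branch hT hadj).1 hb
  exact hadj.ne (pth_middle hT hc hu1 hu2)

lemma mem_host {x : V} : x ∈ hostSet T v w ↔
    (∀ u ∈ awayChildren T v w, x ∉ branchFinset T u v) ∧
    (∀ t ∈ awayChildren T w v, x ∉ branchFinset T t w) := by
  simp [hostSet]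

lemma hostSet_comm : hostSet T v w = hostSet T w v := by
  ext x; rw [mem_host, mem_host]; exact and_comm

lemma v_mem_host (hT : T.IsTree) : v ∈ hostSet T v w := by
  rw [mem_host]
  constructor
  · intro u hu
    exact not_mem_branch_self hT ((aw_not_on hT hu).2.2).symm
  · intro t ht
    exact w_not_mem_branch hT ht

lemma w_mem_host (hT : T.IsTree) : w ∈ hostSet T v w := by
  rw [mem_host]
  constructor
  · intro u hu
    exact w_not_mem_branch hT hu
  · intro t ht
    exact not_mem_branch_self hT ((aw_not_on hT ht).2.2).symm

lemma host_convex (hT : T.IsTree) {a b : V} (ha : a ∈ hostSet T v w) (hb : b ∈ hostSet T v w) :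
    ∀ c ∈ (pth hT a b).support, c ∈ hostSet T v w := by
  intro c hc
  rw [mem_host] at ha hb ⊢
  constructor
  · intro u hu hcb
    have hadj : T.Adj u v := ((aw_not_on hT hu).2.2).symm
    have h1 : v ∈ (pth hT a c).support := by
      rw [mem_pth_symm hT]; exact sep_branch hT hadj hcb (ha.1 u hu)
    have h2 : v ∈ (pth hT c b).support := sep_branch hT hadj hcb (hb.1 u hu)
    have : v = c := pth_middle hT hc h1 h2
    exact not_mem_branch_self hT hadj (this ▸ hcb)
  · intro t ht hcb
    have hadj : T.Adj t w := ((aw_not_on hT ht).2.2).symm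
    have h1 : w ∈ (pth hT a c).support := by
      rw [mem_pth_symm hT]; exact sep_branch hT hadj hcb (ha.2 t ht)
    have h2 : w ∈ (pth hT c b).support := sep_branch hT hadj hcb (hb.2 t ht)
    have : w = c := pth_middle hT hc h1 h2
    exact not_mem_branch_self hT hadj (this ▸ hcb)

lemma branch_cross_disj (hT : T.IsTree) (hvw : v ≠ w) {u t : V} (hu : u ∈ awayChildren T v w)
    (ht : t ∈ awayChildren T w v) {x : V} (hxu : x ∈ branchFinset T u v)
    (hxt : x ∈ branchFinset T t w) : False := by
  have hadj_u : T.Adj u v := ((aw_not_on hT hu).2.2).symm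
  have hadj_t : T.Adj t w := ((aw_not_on hT ht).2.2).symm
  rw [mem_branch hT hadj_u] at hxu
  rw [mem_branch hT hadj_t] at hxt
  have htn : t ∉ (pth hT v w).support := by
    have := (aw_not_on hT ht).1
    rwa [mem_pth_symm hT] at this
  have htxv : t ∈ (pth hT x v).support := by
    rcases mem_pth_union hT v hxt with h | h
    · exact h
    · exact absurd h htn
  have hw_tv : w ∈ (pth hT t v).support := ((mem_away hT).1 ht).2
  have hwxv : w ∈ (pth hT x v).support := sub_of_split_right hT htxv hw_tv
  have he := pth_penult hT hadj_u hxu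
  have hwxu : w ∈ (pth hT x u).support := by
    rw [he, SimpleGraph.Walk.support_concat, ← List.concat_eq_append] at hwxv
    rcases mem_concat'.1 hwxv with h | h
    · exact h
    · exact absurd h hvw.symm
  have hv_uw : v ∈ (pth hT u w).support := ((mem_away hT).1 hu).2
  have hv_wu : v ∈ (pth hT w u).support := by rwa [mem_pth_symm hT]
  have hvxu : v ∈ (pth hT x u).support := sub_of_split_right hT hwxu hv_wu
  exact hadj_u.ne (pth_middle hT hxu hvxu (end_mem_pth hT u v)).symm

lemma branch_same_disj (hT : T.IsTree) {u u' : V} (hu : T.Adj u v) (hu' : T.Adj u' v) (hne : u ≠ u')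
    {x : V} (h1 : x ∈ branchFinset T u v) (h2 : x ∈ branchFinset T u' v) : False := by
  rw [mem_branch hT hu] at h1
  rw [mem_branch hT hu'] at h2
  exact hne (pth_penult_unique hT hu hu' h1 h2)

end Struct
section Conn

variable [Fintype V]

/-- path-closed nonempty finsets -/
def IsSub (hT : T.IsTree) (s : Finset V) : Prop :=
  s.Nonempty ∧ ∀ a ∈ s, ∀ b ∈ s, ∀ c ∈ (pth hT a b).support, c ∈ s

lemma reachable_induce {S : Set V} : ∀ {a b : V} (p : T.Walk a b)
    (hp : ∀ x ∈ p.support, x ∈ S),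
    (T.induce S).Reachable ⟨a, hp a p.start_mem_support⟩ ⟨b, hp b p.end_mem_support⟩ := by
  intro a b p
  induction p with
  | nil => intro hp; exact SimpleGraph.Reachable.refl _
  | @cons a c b h q ih =>
    intro hp
    have hq : ∀ x ∈ q.support, x ∈ S := fun x hx => hp x (by simp [hx])
    have hadj : (T.induce S).Adj ⟨a, hp a (by simp)⟩ ⟨c, hq c q.start_mem_support⟩ := by
      simpa using h
    exact hadj.reachable.trans (ih hq)

lemma isSub_iff_connected (hT : T.IsTree) (s : Finset V) :
    (T.induce (↑s : Set V)).Connected ↔ IsSub hT s := by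
  constructor
  · intro h
    have hne : s.Nonempty := by
      obtain ⟨x⟩ := h.nonempty
      exact ⟨x.1, by exact_mod_cast x.2⟩
    refine ⟨hne, ?_⟩
    intro a ha b hb c hc
    obtain ⟨W⟩ := h.preconnected ⟨a, by exact_mod_cast ha⟩ ⟨b, by exact_mod_cast hb⟩
    set f := (SimpleGraph.Embedding.induce (↑s : Set V)).toHom with hf
    have hmap : ∀ x ∈ (W.map f).support, x ∈ s := by
      intro x hx
      rw [SimpleGraph.Walk.support_map] at hx
      obtain ⟨y, _, rfl⟩ := List.mem_map.1 hx
      exact_mod_cast y.2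
    have hb2 : (W.map f).bypass = pth hT a b :=
      pth_unique hT (SimpleGraph.Walk.bypass_isPath _)
    rw [← hb2] at hc
    exact hmap c (SimpleGraph.Walk.support_bypass_subset _ hc)
  · rintro ⟨hne, hcl⟩
    rw [SimpleGraph.connected_iff]
    constructor
    · rintro ⟨a, ha⟩ ⟨b, hb⟩
      have ha' : a ∈ s := by exact_mod_cast ha
      have hb' : b ∈ s := by exact_mod_cast hb
      have hp : ∀ x ∈ (pth hT a b).support, x ∈ (↑s : Set V) := by
        intro x hx
        exact_mod_cast hcl a ha' b hb' x hx
      exact reachable_induce (pth hT a b) hp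
    · obtain ⟨x, hx⟩ := hne
      exact ⟨⟨x, by exact_mod_cast hx⟩⟩

lemma etaIn_eq (hT : T.IsTree) (P req : Finset V) :
    etaIn T P req = ((Finset.univ : Finset (Finset V)).filter
      (fun s => IsSub hT s ∧ s ⊆ P ∧ req ⊆ s)).card := by
  rw [etaIn, Nat.card_eq_fintype_card, Fintype.card_subtype]
  congr 1
  apply Finset.filter_congr
  intro s _
  rw [isSub_iff_connected hT]
  constructor
  · rintro ⟨h1, h2, h3, h4⟩; exact ⟨h4, h2, h3⟩
  · rintro ⟨h1, h2, h3⟩; exact ⟨h1.1, h2, h3, h1⟩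

end Conn
section Peel

variable [Fintype V]

/-- The master "peeling" lemma: subtrees containing `c` inside `P` factor through the host part
and independent branch choices. -/
lemma peel (hT : T.IsTree) (c : V) (P A req : Finset V) (B : V → Finset V)
    (hBP : ∀ u ∈ A, B u ⊆ P)
    (hcB : ∀ u ∈ A, c ∉ B u)
    (huB : ∀ u ∈ A, u ∈ B u)
    (hcP : c ∈ P)
    (hreq : ∀ x ∈ req, x ∈ P ∧ ∀ u ∈ A, x ∉ B u)
    (hdisj : ∀ u ∈ A, ∀ u' ∈ A, u ≠ u' → ∀ x, x ∈ B u → x ∈ B u' → False)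
    (hconv : ∀ u ∈ A, ∀ a ∈ B u, ∀ b ∈ B u, ∀ z ∈ (pth hT a b).support, z ∈ B u)
    (hsep : ∀ u ∈ A, ∀ x ∈ B u, ∀ y, y ∉ B u → c ∈ (pth hT x y).support)
    (hpen : ∀ u ∈ A, ∀ x ∈ B u, u ∈ (pth hT x c).support)
    (hedge : ∀ u ∈ A, ∀ z ∈ (pth hT u c).support, z = u ∨ z = c) :
    ((Finset.univ : Finset (Finset V)).filter
        (fun s => IsSub hT s ∧ s ⊆ P ∧ req ⊆ s ∧ c ∈ s)).card
      = ((Finset.univ : Finset (Finset V)).filter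
          (fun s => IsSub hT s ∧ s ⊆ P.filter (fun x => ∀ u ∈ A, x ∉ B u) ∧
            req ⊆ s ∧ c ∈ s)).card
        * ∏ u ∈ A, (1 + ((Finset.univ : Finset (Finset V)).filter
            (fun s => IsSub hT s ∧ s ⊆ B u ∧ u ∈ s)).card) := by
  classical
  set Q : Finset V := P.filter (fun x => ∀ u ∈ A, x ∉ B u) with hQdef
  have hQmem : ∀ {x : V}, x ∈ Q ↔ x ∈ P ∧ ∀ u ∈ A, x ∉ B u := by
    intro x; simp [hQdef]
  have hcQ : c ∈ Q := hQmem.2 ⟨hcP, hcB⟩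
  set Host := (Finset.univ : Finset (Finset V)).filter
      (fun s => IsSub hT s ∧ s ⊆ Q ∧ req ⊆ s ∧ c ∈ s) with hHost
  set Opt : V → Finset (Finset V) := fun u => insert (∅ : Finset V)
      ((Finset.univ : Finset (Finset V)).filter
        (fun s => IsSub hT s ∧ s ⊆ B u ∧ u ∈ s)) with hOpt
  have key : ((Finset.univ : Finset (Finset V)).filter
        (fun s => IsSub hT s ∧ s ⊆ P ∧ req ⊆ s ∧ c ∈ s)).card
      = (Host ×ˢ A.pi (fun u => Opt u)).card := by
    apply Finset.card_bij' (i := fun s _ => (s ∩ Q, fun u _ => s ∩ B u))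
      (j := fun p _ => p.1 ∪ A.attach.biUnion (fun u => p.2 u.1 u.2))
    -- i maps into the target
    · intro s hs
      rw [Finset.mem_filter] at hs
      obtain ⟨-, hsub, hsP, hreqs, hcs⟩ := hs
      rw [Finset.mem_product]
      constructor
      · rw [hHost, Finset.mem_filter]
        refine ⟨Finset.mem_univ _, ?_, Finset.inter_subset_right, ?_, ?_⟩
        · constructor
          · exact ⟨c, Finset.mem_inter.2 ⟨hcs, hcQ⟩⟩
          · intro a ha b hb z hz
            rw [Finset.mem_inter] at ha hb ⊢
            refine ⟨hsub.2 a ha.1 b hb.1 z hz, hQmem.2 ⟨hsP (hsub.2 a ha.1 b hb.1 z hz), ?_⟩⟩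
            intro u hu hzB
            have h1 : c ∈ (pth hT z a).support :=
              hsep u hu z hzB a (fun hc' => (hQmem.1 ha.2).2 u hu hc')
            have h2 : c ∈ (pth hT z b).support :=
              hsep u hu z hzB b (fun hc' => (hQmem.1 hb.2).2 u hu hc')
            have h1' : c ∈ (pth hT a z).support := (mem_pth_symm hT).2 h1
            have : c = z := pth_middle hT hz h1' h2
            exact hcB u hu (this ▸ hzB)
        · intro x hx
          exact Finset.mem_inter.2 ⟨hreqs hx, hQmem.2 (hreq x hx)⟩
        · exact Finset.mem_inter.2 ⟨hcs, hcQ⟩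
      · rw [Finset.mem_pi]
        intro u hu
        rw [hOpt]
        by_cases hne : (s ∩ B u).Nonempty
        · refine Finset.mem_insert.2 (Or.inr ?_)
          rw [Finset.mem_filter]
          refine ⟨Finset.mem_univ _, ⟨hne, ?_⟩, Finset.inter_subset_right, ?_⟩
          · intro a ha b hb z hz
            rw [Finset.mem_inter] at ha hb ⊢
            exact ⟨hsub.2 a ha.1 b hb.1 z hz, hconv u hu a ha.2 b hb.2 z hz⟩
          · obtain ⟨a, ha⟩ := hne
            rw [Finset.mem_inter] at ha
            have humem : u ∈ (pth hT a c).support := hpen u hu a ha.2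
            exact Finset.mem_inter.2 ⟨hsub.2 a ha.1 c hcs u humem, huB u hu⟩
        · rw [Finset.not_nonempty_iff_eq_empty] at hne
          refine Finset.mem_insert.2 (Or.inl ?_)
          exact hne
    -- j maps into the source
    · intro p hp
      rw [Finset.mem_product] at hp
      obtain ⟨hp1, hp2⟩ := hp
      rw [hHost, Finset.mem_filter] at hp1
      obtain ⟨-, hhsub, hhQ, hhreq, hhc⟩ := hp1
      rw [Finset.mem_pi] at hp2
      have ff : ∀ (u : V) (hu : u ∈ A),
          p.2 u hu = ∅ ∨ (IsSub hT (p.2 u hu) ∧ p.2 u hu ⊆ B u ∧ u ∈ p.2 u hu) := by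
        intro u hu
        have := hp2 u hu
        rw [hOpt, Finset.mem_insert] at this
        rcases this with h | h
        · exact Or.inl h
        · rw [Finset.mem_filter] at h
          exact Or.inr ⟨h.2.1, h.2.2.1, h.2.2.2⟩
      have fsub : ∀ (u : V) (hu : u ∈ A), p.2 u hu ⊆ B u := by
        intro u hu
        rcases ff u hu with h | h
        · rw [h]; exact Finset.empty_subset _
        · exact h.2.1
      set s := p.1 ∪ A.attach.biUnion (fun u => p.2 u.1 u.2) with hsdef
      have hmem : ∀ {x : V}, x ∈ s ↔ x ∈ p.1 ∨ ∃ (u : V) (hu : u ∈ A), x ∈ p.2 u hu := by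
        intro x
        rw [hsdef, Finset.mem_union, Finset.mem_biUnion]
        constructor
        · rintro (h | ⟨u, -, h⟩)
          · exact Or.inl h
          · exact Or.inr ⟨u.1, u.2, h⟩
        · rintro (h | ⟨u, hu, h⟩)
          · exact Or.inl h
          · exact Or.inr ⟨⟨u, hu⟩, Finset.mem_attach _ _, h⟩
      have hQnotB : ∀ {x : V}, x ∈ p.1 → ∀ u ∈ A, x ∉ B u := by
        intro x hx u hu
        exact (hQmem.1 (hhQ hx)).2 u hu
      -- every element of s joined to c within s
      have CZ : ∀ x, x ∈ s → ∀ z ∈ (pth hT x c).support, z ∈ s := by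
        intro x hx z hz
        rcases hmem.1 hx with h | ⟨u, hu, h⟩
        · exact hmem.2 (Or.inl (hhsub.2 x h c hhc z hz))
        · have hxB : x ∈ B u := fsub u hu h
          have humem : u ∈ (pth hT x c).support := hpen u hu x hxB
          have hsplit := pth_split hT humem
          rw [hsplit, SimpleGraph.Walk.mem_support_append_iff] at hz
          rcases ff u hu with hempty | ⟨hfsub, hfB, hfu⟩
          · rw [hempty] at h; exact absurd h (Finset.notMem_empty _)
          rcases hz with hz | hz
          · exact hmem.2 (Or.inr ⟨u, hu, hfsub.2 x h u hfu z hz⟩)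
          · rcases hedge u hu z hz with h1 | h1
            · rw [h1]; exact hmem.2 (Or.inr ⟨u, hu, hfu⟩)
            · rw [h1]; exact hmem.2 (Or.inl hhc)
      rw [Finset.mem_filter]
      refine ⟨Finset.mem_univ _, ⟨⟨c, hmem.2 (Or.inl hhc)⟩, ?_⟩, ?_, ?_, hmem.2 (Or.inl hhc)⟩
      · -- closedness of s
        intro a ha b hb z hz
        rcases hmem.1 ha with haH | ⟨u, hu, haB⟩
        · rcases hmem.1 hb with hbH | ⟨u', hu', hbB⟩
          · exact hmem.2 (Or.inl (hhsub.2 a haH b hbH z hz))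
          · -- a in host, b in branch u'
            have hanotB : a ∉ B u' := hQnotB haH u' hu'
            have hc' : c ∈ (pth hT b a).support :=
              hsep u' hu' b (fsub u' hu' hbB) a hanotB
            have hc'' : c ∈ (pth hT a b).support := (mem_pth_symm hT).2 hc'
            have hsplit := pth_split hT hc''
            rw [hsplit, SimpleGraph.Walk.mem_support_append_iff] at hz
            rcases hz with hz | hz
            · exact hmem.2 (Or.inl (hhsub.2 a haH c hhc z hz))
            · have : z ∈ (pth hT b c).support := (mem_pth_symm hT).2 hz
              exact CZ b hb z this
        · rcases hmem.1 hb with hbH | ⟨u', hu', hbB⟩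
          · have hbnotB : b ∉ B u := hQnotB hbH u hu
            have hc'' : c ∈ (pth hT a b).support :=
              hsep u hu a (fsub u hu haB) b hbnotB
            have hsplit := pth_split hT hc''
            rw [hsplit, SimpleGraph.Walk.mem_support_append_iff] at hz
            rcases hz with hz | hz
            · exact CZ a ha z hz
            · have : z ∈ (pth hT b c).support := (mem_pth_symm hT).2 hz
              exact CZ b hb z this
          · by_cases huu : u = u'
            · subst huu
              rcases ff u hu with hempty | ⟨hfsub, hfB, hfu⟩
              · rw [hempty] at haB; exact absurd haB (Finset.notMem_empty _)
              · have haB' : a ∈ p.2 u hu := haB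
                have hbB' : b ∈ p.2 u hu := hbB
                exact hmem.2 (Or.inr ⟨u, hu, hfsub.2 a haB' b hbB' z hz⟩)
            · have hbnotB : b ∉ B u := fun hc' =>
                hdisj u hu u' hu' huu b hc' (fsub u' hu' hbB)
              have hc'' : c ∈ (pth hT a b).support :=
                hsep u hu a (fsub u hu haB) b hbnotB
              have hsplit := pth_split hT hc''
              rw [hsplit, SimpleGraph.Walk.mem_support_append_iff] at hz
              rcases hz with hz | hz
              · exact CZ a ha z hz
              · have : z ∈ (pth hT b c).support := (mem_pth_symm hT).2 hz
                exact CZ b hb z this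
      · -- s ⊆ P
        intro x hx
        rcases hmem.1 hx with h | ⟨u, hu, h⟩
        · exact (hQmem.1 (hhQ h)).1
        · exact hBP u hu (fsub u hu h)
      · -- req ⊆ s
        intro x hx
        exact hmem.2 (Or.inl (hhreq hx))
    -- left inverse
    · intro s hs
      rw [Finset.mem_filter] at hs
      obtain ⟨-, hsub, hsP, hreqs, hcs⟩ := hs
      ext x
      simp only [Finset.mem_union, Finset.mem_biUnion, Finset.mem_inter, Finset.mem_attach,
        true_and]
      constructor
      · rintro (⟨h, -⟩ | ⟨u, ⟨h, -⟩⟩)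
        · exact h
        · exact h
      · intro hx
        by_cases hB : ∃ u ∈ A, x ∈ B u
        · obtain ⟨u, hu, hxB⟩ := hB
          exact Or.inr ⟨⟨u, hu⟩, hx, hxB⟩
        · push_neg at hB
          exact Or.inl ⟨hx, hQmem.2 ⟨hsP hx, hB⟩⟩
    -- right inverse
    · intro p hp
      rw [Finset.mem_product] at hp
      obtain ⟨hp1, hp2⟩ := hp
      rw [hHost, Finset.mem_filter] at hp1
      obtain ⟨-, hhsub, hhQ, hhreq, hhc⟩ := hp1
      rw [Finset.mem_pi] at hp2
      have fsub : ∀ (u : V) (hu : u ∈ A), p.2 u hu ⊆ B u := by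
        intro u hu
        have := hp2 u hu
        rw [hOpt, Finset.mem_insert] at this
        rcases this with h | h
        · rw [h]; exact Finset.empty_subset _
        · rw [Finset.mem_filter] at h; exact h.2.2.1
      have hQnotB : ∀ {x : V}, x ∈ p.1 → ∀ u ∈ A, x ∉ B u := by
        intro x hx u hu
        exact (hQmem.1 (hhQ hx)).2 u hu
      have hfst : (p.1 ∪ A.attach.biUnion (fun u => p.2 u.1 u.2)) ∩ Q = p.1 := by
        ext x
        simp only [Finset.mem_inter, Finset.mem_union, Finset.mem_biUnion, Finset.mem_attach,
          true_and]
        constructor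
        · rintro ⟨h | ⟨u, h⟩, hxQ⟩
          · exact h
          · exact absurd (fsub u.1 u.2 h) ((hQmem.1 hxQ).2 u.1 u.2)
        · intro h
          exact ⟨Or.inl h, hhQ h⟩
      have hsnd : ∀ (u : V) (hu : u ∈ A),
          (p.1 ∪ A.attach.biUnion (fun t => p.2 t.1 t.2)) ∩ B u = p.2 u hu := by
        intro u hu
        ext x
        simp only [Finset.mem_inter, Finset.mem_union, Finset.mem_biUnion, Finset.mem_attach,
          true_and]
        constructor
        · rintro ⟨h | ⟨u', h⟩, hxB⟩
          · exact absurd hxB (hQnotB h u hu)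
          · by_cases huu : u'.1 = u
            · obtain ⟨u', hu'⟩ := u'
              subst huu
              exact h
            · exact absurd hxB fun hxB =>
                hdisj u'.1 u'.2 u hu huu x (fsub u'.1 u'.2 h) hxB
        · intro h
          exact ⟨Or.inr ⟨⟨u, hu⟩, h⟩, fsub u hu h⟩
      have := hfst
      refine Prod.ext ?_ ?_
      · exact hfst
      · funext u hu
        exact hsnd u hu
  rw [key, Finset.card_product, Finset.card_pi]
  congr 1
  apply Finset.prod_congr rfl
  intro u hu
  rw [hOpt]
  rw [Finset.card_insert_of_notMem]
  · omega
  · intro h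
    rw [Finset.mem_filter] at h
    obtain ⟨x, hx⟩ := h.2.1.1
    exact Finset.notMem_empty x hx

end Peel
section Inst

variable [Fintype V]

lemma card_filter_congr {p q : Finset V → Prop} [DecidablePred p] [DecidablePred q]
    (h : ∀ s, p s ↔ q s) :
    ((Finset.univ : Finset (Finset V)).filter p).card
      = ((Finset.univ : Finset (Finset V)).filter q).card := by
  congr 1
  apply Finset.filter_congr
  intro s _
  exact h s

variable {v w : V}

/-- etaIn with a singleton requirement -/
lemma etaIn_singleton (hT : T.IsTree) (P : Finset V) (x : V) :
    etaIn T P {x} = ((Finset.univ : Finset (Finset V)).filter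
      (fun s => IsSub hT s ∧ s ⊆ P ∧ x ∈ s)).card := by
  rw [etaIn_eq hT]
  apply card_filter_congr
  intro s
  simp [Finset.singleton_subset_iff]

lemma etaIn_empty_req (hT : T.IsTree) (P : Finset V) :
    etaIn T P ∅ = ((Finset.univ : Finset (Finset V)).filter
      (fun s => IsSub hT s ∧ s ⊆ P)).card := by
  rw [etaIn_eq hT]
  apply card_filter_congr
  intro s
  simp

/-- count of trees containing `w` avoiding `v` -/
lemma side_count (hT : T.IsTree) (hvw : v ≠ w) :
    ((Finset.univ : Finset (Finset V)).filter
        (fun s => IsSub hT s ∧ v ∉ s ∧ w ∈ s)).card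
      = etaIn T ((hostSet T v w).erase v) {w} *
          ∏ t ∈ awayChildren T w v, (1 + etaIn T (branchFinset T t w) {t}) := by
  classical
  set P' : Finset V := Finset.univ.filter
    (fun x => x ≠ v ∧ ∀ u ∈ awayChildren T v w, x ∉ branchFinset T u v) with hP'
  have hP'mem : ∀ {x : V}, x ∈ P' ↔ x ≠ v ∧ ∀ u ∈ awayChildren T v w, x ∉ branchFinset T u v := by
    intro x; simp [hP']
  have step1 : ((Finset.univ : Finset (Finset V)).filter
      (fun s => IsSub hT s ∧ v ∉ s ∧ w ∈ s)).card
      = ((Finset.univ : Finset (Finset V)).filter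
        (fun s => IsSub hT s ∧ s ⊆ P' ∧ (∅ : Finset V) ⊆ s ∧ w ∈ s)).card := by
    apply card_filter_congr
    intro s
    constructor
    · rintro ⟨hsub, hv, hw⟩
      refine ⟨hsub, ?_, Finset.empty_subset _, hw⟩
      intro x hx
      rw [hP'mem]
      refine ⟨fun h => hv (h ▸ hx), ?_⟩
      intro u hu hxB
      have hadj : T.Adj u v := ((aw_not_on hT hu).2.2).symm
      have : v ∈ (pth hT x w).support :=
        sep_branch hT hadj hxB (w_not_mem_branch hT hu)
      exact hv (hsub.2 x hx w hw v this)
    · rintro ⟨hsub, hP, -, hw⟩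
      exact ⟨hsub, fun hv => ((hP'mem.1 (hP hv)).1 rfl), hw⟩
  rw [step1]
  have hvnotw : ∀ t ∈ awayChildren T w v, v ∉ branchFinset T t w :=
    (mem_host.1 (v_mem_host hT)).2
  have hadjw : ∀ t ∈ awayChildren T w v, T.Adj t w :=
    fun t ht => ((aw_not_on hT ht).2.2).symm
  have key := peel hT w P' (awayChildren T w v) (∅ : Finset V) (fun t => branchFinset T t w)
    (by -- hBP
      intro t ht x hx
      rw [hP'mem]
      refine ⟨fun h => hvnotw t ht (h ▸ hx), ?_⟩
      intro u hu hxB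
      exact branch_cross_disj hT hvw hu ht hxB hx)
    (fun t ht => not_mem_branch_self hT (hadjw t ht))
    (fun t ht => mem_branch_root hT (hadjw t ht))
    (by -- hcP : w ∈ P'
      rw [hP'mem]
      exact ⟨hvw.symm, fun u hu => w_not_mem_branch hT hu⟩)
    (by intro x hx; exact absurd hx (Finset.notMem_empty x))
    (by -- hdisj
      intro t ht t' ht' hne x hx hx'
      exact branch_same_disj hT (hadjw t ht) (hadjw t' ht') hne hx hx')
    (by intro t ht a ha b hb z hz; exact branch_convex hT (hadjw t ht) ha hb z hz)
    (by intro t ht x hx y hy; exact sep_branch hT (hadjw t ht) hx hy)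
    (by intro t ht x hx; exact (mem_branch hT (hadjw t ht)).1 hx)
    (by intro t ht z hz; exact (mem_pth_adj hT (hadjw t ht)).1 hz)
  rw [key]
  congr 1
  · -- host factor
    rw [etaIn_singleton hT]
    apply card_filter_congr
    intro s
    have hQ : P'.filter (fun x => ∀ t ∈ awayChildren T w v, x ∉ branchFinset T t w)
        = (hostSet T v w).erase v := by
      ext x
      rw [Finset.mem_filter, hP'mem, Finset.mem_erase, mem_host]
      tauto
    rw [hQ]
    constructor
    · rintro ⟨h1, h2, -, h4⟩; exact ⟨h1, h2, h4⟩
    · rintro ⟨h1, h2, h4⟩; exact ⟨h1, h2, Finset.empty_subset _, h4⟩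
  · apply Finset.prod_congr rfl
    intro t ht
    rw [etaIn_singleton hT]

/-- count of trees containing both `v` and `w` -/
lemma both_count (hT : T.IsTree) (hvw : v ≠ w) :
    ((Finset.univ : Finset (Finset V)).filter
        (fun s => IsSub hT s ∧ v ∈ s ∧ w ∈ s)).card
      = etaIn T (hostSet T v w) {v, w} *
          (∏ u ∈ awayChildren T v w, (1 + etaIn T (branchFinset T u v) {u})) *
          (∏ t ∈ awayChildren T w v, (1 + etaIn T (branchFinset T t w) {t})) := by
  classical
  have hadjv : ∀ u ∈ awayChildren T v w, T.Adj u v :=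
    fun u hu => ((aw_not_on hT hu).2.2).symm
  have hadjw : ∀ t ∈ awayChildren T w v, T.Adj t w :=
    fun t ht => ((aw_not_on hT ht).2.2).symm
  have hvnotw : ∀ t ∈ awayChildren T w v, v ∉ branchFinset T t w :=
    (mem_host.1 (v_mem_host hT)).2
  have step1 : ((Finset.univ : Finset (Finset V)).filter
      (fun s => IsSub hT s ∧ v ∈ s ∧ w ∈ s)).card
      = ((Finset.univ : Finset (Finset V)).filter
        (fun s => IsSub hT s ∧ s ⊆ Finset.univ ∧ ({w} : Finset V) ⊆ s ∧ v ∈ s)).card := by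
    apply card_filter_congr
    intro s
    simp only [Finset.singleton_subset_iff, Finset.subset_univ, true_and]
    tauto
  rw [step1]
  have key := peel hT v Finset.univ (awayChildren T v w) ({w} : Finset V)
    (fun u => branchFinset T u v)
    (fun u hu => Finset.subset_univ _)
    (fun u hu => not_mem_branch_self hT (hadjv u hu))
    (fun u hu => mem_branch_root hT (hadjv u hu))
    (Finset.mem_univ _)
    (by
      intro x hx
      rw [Finset.mem_singleton] at hx
      subst hx
      exact ⟨Finset.mem_univ _, fun u hu => w_not_mem_branch hT hu⟩)
    (by intro u hu u' hu' hne x hx hx'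
        exact branch_same_disj hT (hadjv u hu) (hadjv u' hu') hne hx hx')
    (by intro u hu a ha b hb z hz; exact branch_convex hT (hadjv u hu) ha hb z hz)
    (by intro u hu x hx y hy; exact sep_branch hT (hadjv u hu) hx hy)
    (by intro u hu x hx; exact (mem_branch hT (hadjv u hu)).1 hx)
    (by intro u hu z hz; exact (mem_pth_adj hT (hadjv u hu)).1 hz)
  rw [key]
  set Q1 : Finset V := Finset.univ.filter
    (fun x => ∀ u ∈ awayChildren T v w, x ∉ branchFinset T u v) with hQ1
  have hQ1mem : ∀ {x : V}, x ∈ Q1 ↔ ∀ u ∈ awayChildren T v w, x ∉ branchFinset T u v := by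
    intro x; simp [hQ1]
  have step2 : ((Finset.univ : Finset (Finset V)).filter
      (fun s => IsSub hT s ∧ s ⊆ Q1 ∧ ({w} : Finset V) ⊆ s ∧ v ∈ s)).card
      = ((Finset.univ : Finset (Finset V)).filter
        (fun s => IsSub hT s ∧ s ⊆ Q1 ∧ ({v} : Finset V) ⊆ s ∧ w ∈ s)).card := by
    apply card_filter_congr
    intro s
    simp only [Finset.singleton_subset_iff]
    tauto
  rw [step2]
  have key2 := peel hT w Q1 (awayChildren T w v) ({v} : Finset V)
    (fun t => branchFinset T t w)
    (by
      intro t ht x hx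
      rw [hQ1mem]
      intro u hu hxB
      exact branch_cross_disj hT hvw hu ht hxB hx)
    (fun t ht => not_mem_branch_self hT (hadjw t ht))
    (fun t ht => mem_branch_root hT (hadjw t ht))
    (by rw [hQ1mem]; exact fun u hu => w_not_mem_branch hT hu)
    (by
      intro x hx
      rw [Finset.mem_singleton] at hx
      subst hx
      refine ⟨hQ1mem.2 (fun u hu => not_mem_branch_self hT (hadjv u hu)), hvnotw⟩)
    (by intro t ht t' ht' hne x hx hx'
        exact branch_same_disj hT (hadjw t ht) (hadjw t' ht') hne hx hx')
    (by intro t ht a ha b hb z hz; exact branch_convex hT (hadjw t ht) ha hb z hz)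
    (by intro t ht x hx y hy; exact sep_branch hT (hadjw t ht) hx hy)
    (by intro t ht x hx; exact (mem_branch hT (hadjw t ht)).1 hx)
    (by intro t ht z hz; exact (mem_pth_adj hT (hadjw t ht)).1 hz)
  rw [key2]
  have hQ2 : Q1.filter (fun x => ∀ t ∈ awayChildren T w v, x ∉ branchFinset T t w)
      = hostSet T v w := by
    ext x
    rw [Finset.mem_filter, hQ1mem, mem_host]
  have hostfactor : ((Finset.univ : Finset (Finset V)).filter
      (fun s => IsSub hT s ∧
        s ⊆ Q1.filter (fun x => ∀ t ∈ awayChildren T w v, x ∉ branchFinset T t w) ∧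
        ({v} : Finset V) ⊆ s ∧ w ∈ s)).card
      = etaIn T (hostSet T v w) {v, w} := by
    rw [etaIn_eq hT]
    apply card_filter_congr
    intro s
    rw [hQ2]
    simp only [Finset.singleton_subset_iff, Finset.insert_subset_iff]
  rw [hostfactor]
  have pv : ∀ u ∈ awayChildren T v w,
      (1 + ((Finset.univ : Finset (Finset V)).filter
        (fun s => IsSub hT s ∧ s ⊆ branchFinset T u v ∧ u ∈ s)).card)
      = 1 + etaIn T (branchFinset T u v) {u} := by
    intro u hu
    rw [etaIn_singleton hT]
  have pw : ∀ t ∈ awayChildren T w v,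
      (1 + ((Finset.univ : Finset (Finset V)).filter
        (fun s => IsSub hT s ∧ s ⊆ branchFinset T t w ∧ t ∈ s)).card)
      = 1 + etaIn T (branchFinset T t w) {t} := by
    intro t ht
    rw [etaIn_singleton hT]
  rw [Finset.prod_congr rfl pv, Finset.prod_congr rfl pw]
  ring

end Inst
section Final

variable [Fintype V] {v w : V}

lemma class00 (hT : T.IsTree) (hvw : v ≠ w) :
    ((Finset.univ : Finset (Finset V)).filter
        (fun s => IsSub hT s ∧ v ∉ s ∧ w ∉ s)).card
      = etaIn T (((hostSet T v w).erase v).erase w) ∅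
        + ∑ u ∈ awayChildren T v w, etaIn T (branchFinset T u v) ∅
        + ∑ t ∈ awayChildren T w v, etaIn T (branchFinset T t w) ∅ := by
  classical
  have hadjv : ∀ u ∈ awayChildren T v w, T.Adj u v :=
    fun u hu => ((aw_not_on hT hu).2.2).symm
  have hadjw : ∀ t ∈ awayChildren T w v, T.Adj t w :=
    fun t ht => ((aw_not_on hT ht).2.2).symm
  have hvnotw : ∀ t ∈ awayChildren T w v, v ∉ branchFinset T t w :=
    (mem_host.1 (v_mem_host hT)).2
  have hwnotv : ∀ u ∈ awayChildren T v w, w ∉ branchFinset T u v :=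
    fun u hu => w_not_mem_branch hT hu
  set D := (Finset.univ : Finset (Finset V)).filter
    (fun s => IsSub hT s ∧ s ⊆ ((hostSet T v w).erase v).erase w) with hD
  set F : V → Finset (Finset V) := fun u => (Finset.univ : Finset (Finset V)).filter
    (fun s => IsSub hT s ∧ s ⊆ branchFinset T u v) with hF
  set G : V → Finset (Finset V) := fun t => (Finset.univ : Finset (Finset V)).filter
    (fun s => IsSub hT s ∧ s ⊆ branchFinset T t w) with hG
  have cover : (Finset.univ : Finset (Finset V)).filter
      (fun s => IsSub hT s ∧ v ∉ s ∧ w ∉ s)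
      = (D ∪ (awayChildren T v w).biUnion F) ∪ (awayChildren T w v).biUnion G := by
    ext s
    simp only [Finset.mem_filter, Finset.mem_univ, true_and, Finset.mem_union,
      Finset.mem_biUnion, hD, hF, hG]
    constructor
    · rintro ⟨hsub, hv, hw⟩
      by_cases h1 : ∃ u ∈ awayChildren T v w, ∃ x ∈ s, x ∈ branchFinset T u v
      · obtain ⟨u, hu, x, hxs, hxB⟩ := h1
        refine Or.inl (Or.inr ⟨u, hu, hsub, ?_⟩)
        intro y hy
        by_contra hyB
        exact hv (hsub.2 x hxs y hy v (sep_branch hT (hadjv u hu) hxB hyB))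
      by_cases h2 : ∃ t ∈ awayChildren T w v, ∃ x ∈ s, x ∈ branchFinset T t w
      · obtain ⟨t, ht, x, hxs, hxB⟩ := h2
        refine Or.inr ⟨t, ht, hsub, ?_⟩
        intro y hy
        by_contra hyB
        exact hw (hsub.2 x hxs y hy w (sep_branch hT (hadjw t ht) hxB hyB))
      push_neg at h1 h2
      refine Or.inl (Or.inl ⟨hsub, ?_⟩)
      intro y hy
      rw [Finset.mem_erase, Finset.mem_erase, mem_host]
      exact ⟨fun h => hw (h ▸ hy), fun h => hv (h ▸ hy),
        fun u hu => h1 u hu y hy, fun t ht => h2 t ht y hy⟩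
    · rintro ((⟨hsub, hsP⟩ | ⟨u, hu, hsub, hsP⟩) | ⟨t, ht, hsub, hsP⟩)
      · refine ⟨hsub, ?_, ?_⟩
        · intro hv
          have := hsP hv
          rw [Finset.mem_erase, Finset.mem_erase] at this
          exact this.2.1 rfl
        · intro hw
          have := hsP hw
          rw [Finset.mem_erase] at this
          exact this.1 rfl
      · exact ⟨hsub, fun hv => not_mem_branch_self hT (hadjv u hu) (hsP hv),
          fun hw => hwnotv u hu (hsP hw)⟩
      · exact ⟨hsub, fun hv => hvnotw t ht (hsP hv),
          fun hw => not_mem_branch_self hT (hadjw t ht) (hsP hw)⟩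
  have hne : ∀ s : Finset V, IsSub hT s → s.Nonempty := fun s h => h.1
  -- disjointness
  have disjFF : ∀ u ∈ awayChildren T v w, ∀ u' ∈ awayChildren T v w, u ≠ u' →
      Disjoint (F u) (F u') := by
    intro u hu u' hu' hne'
    rw [Finset.disjoint_left]
    intro s hs hs'
    rw [hF, Finset.mem_filter] at hs hs'
    obtain ⟨x, hx⟩ := hs.2.1.1
    exact branch_same_disj hT (hadjv u hu) (hadjv u' hu') hne' (hs.2.2 hx) (hs'.2.2 hx)
  have disjGG : ∀ t ∈ awayChildren T w v, ∀ t' ∈ awayChildren T w v, t ≠ t' →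
      Disjoint (G t) (G t') := by
    intro t ht t' ht' hne'
    rw [Finset.disjoint_left]
    intro s hs hs'
    rw [hG, Finset.mem_filter] at hs hs'
    obtain ⟨x, hx⟩ := hs.2.1.1
    exact branch_same_disj hT (hadjw t ht) (hadjw t' ht') hne' (hs.2.2 hx) (hs'.2.2 hx)
  have disjDF : Disjoint D ((awayChildren T v w).biUnion F) := by
    rw [Finset.disjoint_left]
    intro s hs hs'
    rw [Finset.mem_biUnion] at hs'
    obtain ⟨u, hu, hs'⟩ := hs'
    rw [hD, Finset.mem_filter] at hs
    rw [hF, Finset.mem_filter] at hs'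
    obtain ⟨x, hx⟩ := hs.2.1.1
    have h1 := hs.2.2 hx
    rw [Finset.mem_erase, Finset.mem_erase, mem_host] at h1
    exact h1.2.2.1 u hu (hs'.2.2 hx)
  have disjDG : Disjoint (D ∪ (awayChildren T v w).biUnion F)
      ((awayChildren T w v).biUnion G) := by
    rw [Finset.disjoint_left]
    intro s hs hs'
    rw [Finset.mem_biUnion] at hs'
    obtain ⟨t, ht, hs'⟩ := hs'
    rw [hG, Finset.mem_filter] at hs'
    rcases Finset.mem_union.1 hs with hs | hs
    · rw [hD, Finset.mem_filter] at hs
      obtain ⟨x, hx⟩ := hs.2.1.1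
      have h1 := hs.2.2 hx
      rw [Finset.mem_erase, Finset.mem_erase, mem_host] at h1
      exact h1.2.2.2 t ht (hs'.2.2 hx)
    · rw [Finset.mem_biUnion] at hs
      obtain ⟨u, hu, hs⟩ := hs
      rw [hF, Finset.mem_filter] at hs
      obtain ⟨x, hx⟩ := hs.2.1.1
      exact branch_cross_disj hT hvw hu ht (hs.2.2 hx) (hs'.2.2 hx)
  rw [cover, Finset.card_union_of_disjoint disjDG, Finset.card_union_of_disjoint disjDF,
    Finset.card_biUnion disjFF, Finset.card_biUnion disjGG]
  congr 1
  congr 1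
  · rw [etaIn_empty_req hT]
  · apply Finset.sum_congr rfl
    intro u hu
    rw [etaIn_empty_req hT]
  · apply Finset.sum_congr rfl
    intro t ht
    rw [etaIn_empty_req hT]

lemma split_card (p q : Finset V → Prop) :
    ((Finset.univ : Finset (Finset V)).filter p).card
      = ((Finset.univ : Finset (Finset V)).filter (fun s => p s ∧ q s)).card
        + ((Finset.univ : Finset (Finset V)).filter (fun s => p s ∧ ¬ q s)).card := by
  classical
  rw [← Finset.filter_filter, ← Finset.filter_filter]
  exact (Finset.card_filter_add_card_filter_not (s := Finset.univ.filter p)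
    (p := q)).symm

end Final
section Quad

variable [Fintype V]

lemma quad_split (p q r : Finset V → Prop) :
    ((Finset.univ : Finset (Finset V)).filter p).card
      = ((Finset.univ : Finset (Finset V)).filter (fun s => p s ∧ q s ∧ r s)).card
      + ((Finset.univ : Finset (Finset V)).filter (fun s => p s ∧ q s ∧ ¬ r s)).card
      + ((Finset.univ : Finset (Finset V)).filter (fun s => p s ∧ ¬ q s ∧ r s)).card
      + ((Finset.univ : Finset (Finset V)).filter (fun s => p s ∧ ¬ q s ∧ ¬ r s)).card := by
  classical
  have h1 : Disjoint ((Finset.univ : Finset (Finset V)).filter (fun s => p s ∧ q s ∧ r s))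
      ((Finset.univ : Finset (Finset V)).filter (fun s => p s ∧ q s ∧ ¬ r s)) := by
    rw [Finset.disjoint_left]
    intro s hs hs'
    simp only [Finset.mem_filter, Finset.mem_univ, true_and] at hs hs'
    tauto
  have h2 : Disjoint ((Finset.univ : Finset (Finset V)).filter (fun s => p s ∧ q s ∧ r s)
        ∪ (Finset.univ : Finset (Finset V)).filter (fun s => p s ∧ q s ∧ ¬ r s))
      ((Finset.univ : Finset (Finset V)).filter (fun s => p s ∧ ¬ q s ∧ r s)) := by
    rw [Finset.disjoint_left]
    intro s hs hs'
    simp only [Finset.mem_union, Finset.mem_filter, Finset.mem_univ, true_and] at hs hs'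
    tauto
  have h3 : Disjoint (((Finset.univ : Finset (Finset V)).filter (fun s => p s ∧ q s ∧ r s)
        ∪ (Finset.univ : Finset (Finset V)).filter (fun s => p s ∧ q s ∧ ¬ r s))
        ∪ (Finset.univ : Finset (Finset V)).filter (fun s => p s ∧ ¬ q s ∧ r s))
      ((Finset.univ : Finset (Finset V)).filter (fun s => p s ∧ ¬ q s ∧ ¬ r s)) := by
    rw [Finset.disjoint_left]
    intro s hs hs'
    simp only [Finset.mem_union, Finset.mem_filter, Finset.mem_univ, true_and] at hs hs'
    tauto
  have cover : (Finset.univ : Finset (Finset V)).filter p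
      = (((Finset.univ : Finset (Finset V)).filter (fun s => p s ∧ q s ∧ r s)
        ∪ (Finset.univ : Finset (Finset V)).filter (fun s => p s ∧ q s ∧ ¬ r s))
        ∪ (Finset.univ : Finset (Finset V)).filter (fun s => p s ∧ ¬ q s ∧ r s))
        ∪ (Finset.univ : Finset (Finset V)).filter (fun s => p s ∧ ¬ q s ∧ ¬ r s) := by
    ext s
    simp only [Finset.mem_union, Finset.mem_filter, Finset.mem_univ, true_and]
    tauto
  rw [cover, Finset.card_union_of_disjoint h3, Finset.card_union_of_disjoint h2,
    Finset.card_union_of_disjoint h1]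

end Quad

section Quad2

variable [Fintype V]

lemma quad_split' (p q r : Finset V → Prop) (a b c d : ℕ)
    (h11 : ((Finset.univ : Finset (Finset V)).filter (fun s => p s ∧ q s ∧ r s)).card = a)
    (h10 : ((Finset.univ : Finset (Finset V)).filter (fun s => p s ∧ q s ∧ ¬ r s)).card = b)
    (h01 : ((Finset.univ : Finset (Finset V)).filter (fun s => p s ∧ ¬ q s ∧ r s)).card = c)
    (h00 : ((Finset.univ : Finset (Finset V)).filter (fun s => p s ∧ ¬ q s ∧ ¬ r s)).card = d) :
    ((Finset.univ : Finset (Finset V)).filter p).card = a + b + c + d := by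
  rw [quad_split p q r, h11, h10, h01, h00]

end Quad2

section CongrFree

variable [Fintype V]

lemma card_filter_congr' {p q : Finset V → Prop} {ip : DecidablePred p} {iq : DecidablePred q}
    (h : ∀ s, p s ↔ q s) :
    (@Finset.filter _ p ip Finset.univ).card = (@Finset.filter _ q iq Finset.univ).card := by
  congr 1
  ext s
  rw [Finset.mem_filter, Finset.mem_filter]
  exact and_congr_right (fun _ => h s)

end CongrFree

end StmtAux

/-- the subtree-count decomposition formula for
`T = [A_1,…,A_k] v H w [B_1,…,B_ℓ]`.  Every tree `T` with two distinct vertices `v, w`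
decomposes this way, with `A_i` the branches at `v` away from `w`, `B_j` the branches at
`w` away from `v`, and `H` (with leaves `v` and `w`) induced on `hostSet T v w`. -/
theorem stmt6 [Fintype V] (T : SimpleGraph V) (hT : T.IsTree) (v w : V) (hvw : v ≠ w) :
    etaIn T Finset.univ ∅ =
      etaIn T (((hostSet T v w).erase v).erase w) ∅
      + ∑ u ∈ awayChildren T v w, etaIn T (branchFinset T u v) ∅
      + ∑ t ∈ awayChildren T w v, etaIn T (branchFinset T t w) ∅
      + etaIn T ((hostSet T v w).erase v) {w} *
          ∏ t ∈ awayChildren T w v, (1 + etaIn T (branchFinset T t w) {t})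
      + etaIn T ((hostSet T v w).erase w) {v} *
          ∏ u ∈ awayChildren T v w, (1 + etaIn T (branchFinset T u v) {u})
      + etaIn T (hostSet T v w) {v, w} *
          (∏ u ∈ awayChildren T v w, (1 + etaIn T (branchFinset T u v) {u})) *
          (∏ t ∈ awayChildren T w v, (1 + etaIn T (branchFinset T t w) {t})) := by
  classical
  have h0 : etaIn T Finset.univ ∅
      = ((Finset.univ : Finset (Finset V)).filter (fun s => StmtAux.IsSub hT s)).card := by
    rw [StmtAux.etaIn_empty_req hT]
    apply StmtAux.card_filter_congr
    intro s
    simp [Finset.subset_univ]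
  have c10v : ((Finset.univ : Finset (Finset V)).filter
      (fun s => StmtAux.IsSub hT s ∧ ¬ w ∈ s ∧ v ∈ s)).card
      = etaIn T ((hostSet T v w).erase w) {v} *
          ∏ u ∈ awayChildren T v w, (1 + etaIn T (branchFinset T u v) {u}) := by
    have h := StmtAux.side_count hT hvw.symm
    rw [← StmtAux.hostSet_comm] at h
    exact Eq.trans (StmtAux.card_filter_congr (fun s => by tauto)) h
  have e := StmtAux.quad_split' (fun s : Finset V => StmtAux.IsSub hT s)
    (fun s => v ∈ s) (fun s => w ∈ s) _ _ _ _
    (Eq.trans (StmtAux.card_filter_congr' (fun s => Iff.rfl)) (StmtAux.both_count hT hvw))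
    (Eq.trans (StmtAux.card_filter_congr' (fun s => by tauto)) c10v)
    (Eq.trans (StmtAux.card_filter_congr' (fun s => Iff.rfl)) (StmtAux.side_count hT hvw))
    (Eq.trans (StmtAux.card_filter_congr' (fun s => Iff.rfl)) (StmtAux.class00 hT hvw))
  rw [h0]
  rw [e]
  ring
end

section
/- Let T be a tree with n vertices and let r ≥ 1 be an integer. Then SW_r(T) = ∑_{uv ∈ E(T)} ∑_{i=1}^{r−1} C(|V(T_u)|, i)·C(|V(T_v)|, r−i) = ∑_{uv ∈ E(T)} ( C(n,r) − C(|V(T_u)|, r) − C(|V(T_v)|, r) ), where for an edge uv of T, T_u and T_v are the components of T−uv containing u and v respectively, and C(m,j) denotes the binomial coefficient (equal to 0 when j > m). -/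
open scoped Classical
open Finset

universe u

variable {V : Type u}

/-- The Steiner distance of a vertex set `S` in `G`: the number of edges (i.e. the number
of vertices minus one) of a smallest connected induced subgraph containing `S`. -/
noncomputable def steinerDist (G : SimpleGraph V) [Fintype V] (S : Finset V) : ℕ :=
  sInf {m : ℕ | ∃ t : Finset V, S ⊆ t ∧ (G.induce (↑t : Set V)).Connected ∧ t.card = m + 1}

/-- The Steiner `r`-Wiener index: the sum of Steiner distances of all `r`-element
vertex subsets. -/
noncomputable def steinerWiener (G : SimpleGraph V) [Fintype V] (r : ℕ) : ℕ :=
  ∑ S ∈ Finset.univ.powersetCard r, steinerDist G S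

namespace SteinerScratch
set_option linter.unusedSectionVars false
variable [Fintype V] {T : SimpleGraph V}

lemma reach_del (hT : T.IsTree) {v w x : V} (hvw : T.Adj v w)
    (h : T.dist x v ≤ T.dist x w) : (T.deleteEdges {s(v, w)}).Reachable x v := by
  obtain ⟨p, hp⟩ := hT.isConnected.exists_walk_length_eq_dist x v
  have hw : w ∉ p.support := by
    intro hw
    have h1 : T.dist x w ≤ (p.takeUntil w hw).length := T.dist_le _
    have h2 : T.dist w v ≤ (p.dropUntil w hw).length := T.dist_le _
    have h3 : (p.takeUntil w hw).length + (p.dropUntil w hw).length = p.length := by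
      rw [← SimpleGraph.Walk.length_append, SimpleGraph.Walk.take_spec]
    have h4 : 0 < T.dist w v := hT.isConnected.pos_dist_of_ne hvw.ne'
    omega
  exact ⟨p.toDeleteEdge _ (fun he => hw (p.snd_mem_support_of_mem_edges he))⟩

lemma bridge (hT : T.IsTree) {v w : V} (hvw : T.Adj v w) :
    ¬ (T.deleteEdges {s(v, w)}).Reachable v w :=
  (SimpleGraph.isBridge_iff.mp
    (SimpleGraph.isAcyclic_iff_forall_adj_isBridge.mp hT.2 hvw))

lemma reach_del' (hT : T.IsTree) {v w x : V} (hvw : T.Adj v w)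
    (h : T.dist x w ≤ T.dist x v) : (T.deleteEdges {s(v, w)}).Reachable x w := by
  have := reach_del hT hvw.symm h
  rwa [Sym2.eq_swap] at this

lemma dist_tri (hT : T.IsTree) {v w : V} (hvw : T.Adj v w) (x : V) :
    T.dist x v < T.dist x w ∨ T.dist x w < T.dist x v := by
  rcases lt_trichotomy (T.dist x v) (T.dist x w) with h | h | h
  · exact Or.inl h
  · exact absurd (((reach_del hT hvw h.le).symm.trans (reach_del' hT hvw h.ge)))
      (bridge hT hvw)
  · exact Or.inr h

lemma mem_branch (hT : T.IsTree) {v w : V} (hvw : T.Adj v w) {x : V} :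
    x ∈ branchFinset T v w ↔ T.dist x v < T.dist x w := by
  simp only [branchFinset, mem_insert, mem_filter, mem_univ, true_and]
  constructor
  · rintro (rfl | h)
    · simpa [SimpleGraph.dist_self] using hT.isConnected.pos_dist_of_ne hvw.ne
    · exact h
  · exact Or.inr

lemma mem_branch_iff_reach (hT : T.IsTree) {v w : V} (hvw : T.Adj v w) {x : V} :
    x ∈ branchFinset T v w ↔ (T.deleteEdges {s(v, w)}).Reachable x v := by
  rw [mem_branch hT hvw]
  constructor
  · exact fun h => reach_del hT hvw h.le
  · intro h
    rcases dist_tri hT hvw x with h' | h'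
    · exact h'
    · exact absurd (h.symm.trans (reach_del' hT hvw h'.le)) (bridge hT hvw)

lemma branch_disjoint (hT : T.IsTree) {v w : V} (hvw : T.Adj v w) :
    Disjoint (branchFinset T v w) (branchFinset T w v) := by
  rw [Finset.disjoint_left]
  intro x hx hx'
  rw [mem_branch hT hvw] at hx
  rw [mem_branch hT hvw.symm] at hx'
  omega

lemma branch_union (hT : T.IsTree) {v w : V} (hvw : T.Adj v w) :
    branchFinset T v w ∪ branchFinset T w v = univ := by
  ext x
  simp only [mem_union, mem_univ, iff_true]
  rcases dist_tri hT hvw x with h | h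
  · exact Or.inl ((mem_branch hT hvw).mpr h)
  · exact Or.inr ((mem_branch hT hvw.symm).mpr h)

lemma branch_card (hT : T.IsTree) {v w : V} (hvw : T.Adj v w) :
    (branchFinset T v w).card + (branchFinset T w v).card = Fintype.card V := by
  rw [← Finset.card_union_of_disjoint (branch_disjoint hT hvw), branch_union hT hvw,
    Finset.card_univ]

lemma walk_edge_mem (hT : T.IsTree) {v w a b : V} (hvw : T.Adj v w) (p : T.Walk a b)
    (ha : a ∈ branchFinset T v w) (hb : b ∈ branchFinset T w v) :
    v ∈ p.support ∧ w ∈ p.support := by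
  have he : s(v, w) ∈ p.edges := by
    by_contra he
    have hr : (T.deleteEdges {s(v, w)}).Reachable a b := ⟨p.toDeleteEdge _ he⟩
    have h1 := (mem_branch_iff_reach hT hvw).mp ha
    have h2 := (mem_branch_iff_reach hT hvw.symm).mp hb
    rw [Sym2.eq_swap] at h2
    exact bridge hT hvw (h1.symm.trans (hr.trans h2))
  exact ⟨p.fst_mem_support_of_mem_edges he, p.snd_mem_support_of_mem_edges he⟩


lemma reach_induce {G : SimpleGraph V} {s : Finset V} {a b : V} (p : G.Walk a b)
    (h : ∀ x ∈ p.support, x ∈ s) (ha : a ∈ s) (hb : b ∈ s) :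
    (G.induce (↑s : Set V)).Reachable ⟨a, ha⟩ ⟨b, hb⟩ := by
  induction p with
  | nil => exact SimpleGraph.Reachable.refl _
  | @cons u c d h' p ih =>
      have hc : c ∈ s := h c (by simp)
      refine SimpleGraph.Reachable.trans ?_ (ih (fun x hx => h x (by simp [hx])) hc hb)
      exact SimpleGraph.Adj.reachable (by exact h')

lemma induce_reach {G : SimpleGraph V} {s : Finset V} {a b : V} (ha : a ∈ s) (hb : b ∈ s)
    (h : (G.induce (↑s : Set V)).Reachable ⟨a, ha⟩ ⟨b, hb⟩) :
    ∃ p : G.Walk a b, ∀ x ∈ p.support, x ∈ s := by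
  obtain ⟨q⟩ := h
  refine ⟨q.map (SimpleGraph.Embedding.induce (↑s : Set V)).toHom, ?_⟩
  intro x hx
  change x ∈ (q.map (SimpleGraph.Embedding.induce (↑s : Set V)).toHom).support at hx
  rw [SimpleGraph.Walk.support_map] at hx
  obtain ⟨y, hy, rfl⟩ := List.mem_map.mp hx
  exact y.2

noncomputable def tstar (T : SimpleGraph V) (S : Finset V) : Finset V :=
  univ.filter fun x => ∀ v w, T.Adj v w → T.dist x v < T.dist x w →
    (S ∩ branchFinset T v w).Nonempty

lemma subset_tstar (hT : T.IsTree) (S : Finset V) : S ⊆ tstar T S := by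
  intro a haS
  simp only [tstar, mem_filter, mem_univ, true_and]
  intro v w hvw hlt
  exact ⟨a, Finset.mem_inter.mpr ⟨haS, (mem_branch hT hvw).mpr hlt⟩⟩

lemma tstar_cross (hT : T.IsTree) {S : Finset V} {v w : V} (hvw : T.Adj v w)
    (hv : v ∈ tstar T S) (hw : w ∈ tstar T S) :
    (S ∩ branchFinset T v w).Nonempty ∧ (S ∩ branchFinset T w v).Nonempty := by
  simp only [tstar, mem_filter, mem_univ, true_and] at hv hw
  constructor
  · exact hv v w hvw (by simpa [SimpleGraph.dist_self] using
      hT.isConnected.pos_dist_of_ne hvw.ne)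
  · exact hw w v hvw.symm (by simpa [SimpleGraph.dist_self] using
      hT.isConnected.pos_dist_of_ne hvw.ne')

lemma cross_mem (hT : T.IsTree) {S t : Finset V} (hSt : S ⊆ t)
    (hconn : (T.induce (↑t : Set V)).Connected) {v w : V} (hvw : T.Adj v w)
    (h1 : (S ∩ branchFinset T v w).Nonempty) (h2 : (S ∩ branchFinset T w v).Nonempty) :
    v ∈ t ∧ w ∈ t := by
  obtain ⟨a, ha⟩ := h1
  obtain ⟨b, hb⟩ := h2
  rw [Finset.mem_inter] at ha hb
  have hat : a ∈ t := hSt ha.1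
  have hbt : b ∈ t := hSt hb.1
  obtain ⟨p, hp⟩ := induce_reach hat hbt (hconn.preconnected _ _)
  have := walk_edge_mem hT hvw p ha.2 hb.2
  exact ⟨hp v this.1, hp w this.2⟩

lemma tstar_support (hT : T.IsTree) {S : Finset V} {x y : V}
    (hx : x ∈ tstar T S) (hy : y ∈ tstar T S) :
    ∃ p : T.Walk x y, ∀ z ∈ p.support, z ∈ tstar T S := by
  obtain ⟨p, hpath, hplen⟩ := hT.isConnected.exists_path_of_dist x y
  refine ⟨p, fun z hz => ?_⟩
  simp only [tstar, mem_filter, mem_univ, true_and] at hx hy ⊢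
  intro v w hvw hlt
  by_cases hxv : T.dist x v < T.dist x w
  · exact hx v w hvw hxv
  by_cases hyv : T.dist y v < T.dist y w
  · exact hy v w hvw hyv
  exfalso
  have hxw : T.dist x w < T.dist x v := (dist_tri hT hvw x).resolve_left hxv
  have hyw : T.dist y w < T.dist y v := (dist_tri hT hvw y).resolve_left hyv
  have hrx : (T.deleteEdges {s(w, v)}).Reachable x w :=
    (mem_branch_iff_reach hT hvw.symm).mp ((mem_branch hT hvw.symm).mpr hxw)
  have hry : (T.deleteEdges {s(w, v)}).Reachable y w :=
    (mem_branch_iff_reach hT hvw.symm).mp ((mem_branch hT hvw.symm).mpr hyw)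
  obtain ⟨q⟩ := hrx.trans hry.symm
  have hqe : ∀ e ∈ q.edges, e ∈ T.edgeSet := fun e he =>
    SimpleGraph.edgeSet_mono (T.deleteEdges_le _) (q.edges_subset_edgeSet he)
  set q' : T.Walk x y := q.transfer T hqe with hq'def
  have hq'e : s(w, v) ∉ q'.edges := by
    rw [hq'def, SimpleGraph.Walk.edges_transfer]
    intro hmem
    have := q.edges_subset_edgeSet hmem
    rw [SimpleGraph.edgeSet_deleteEdges] at this
    exact this.2 rfl
  have hpb : p = q'.bypass := by
    obtain ⟨r, _, hun⟩ := hT.existsUnique_path x y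
    exact (hun p hpath).trans (hun q'.bypass q'.bypass_isPath).symm
  have hpe : s(w, v) ∉ p.edges := by
    rw [hpb]
    exact fun hmem => hq'e (q'.edges_bypass_subset hmem)
  have hrz : (T.deleteEdges {s(w, v)}).Reachable x z :=
    ⟨(p.takeUntil z hz).toDeleteEdge _
      (fun hmem => hpe (p.edges_takeUntil_subset hz hmem))⟩
  have hzw : z ∈ branchFinset T w v :=
    (mem_branch_iff_reach hT hvw.symm).mpr (hrz.symm.trans hrx)
  rw [mem_branch hT hvw.symm] at hzw
  omega

lemma tstar_connected (hT : T.IsTree) {S : Finset V} (hS : S.Nonempty) :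
    (T.induce (↑(tstar T S) : Set V)).Connected := by
  obtain ⟨s0, hs0⟩ := hS
  have hs0' : s0 ∈ tstar T S := subset_tstar hT S hs0
  have hne : Nonempty (↑(tstar T S) : Set V) := ⟨⟨s0, hs0'⟩⟩
  refine ⟨fun a b => ?_⟩
  obtain ⟨x, hx⟩ := a
  obtain ⟨y, hy⟩ := b
  have hx' : x ∈ tstar T S := hx
  have hy' : y ∈ tstar T S := hy
  obtain ⟨p, hp⟩ := tstar_support hT hx' hy'
  exact reach_induce p hp hx' hy'


lemma pairs_card (hT : T.IsTree) {t : Finset V} (hconn : (T.induce (↑t : Set V)).Connected) :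
    ((univ ×ˢ univ).filter fun p : V × V => T.Adj p.1 p.2 ∧ p.1 ∈ t ∧ p.2 ∈ t).card
      = 2 * (t.card - 1) := by
  have hacyc : (T.induce (↑t : Set V)).IsAcyclic := by
    intro v c hc
    exact hT.2 (c.map (SimpleGraph.Embedding.induce (↑t : Set V)).toHom)
      ((SimpleGraph.Walk.map_isCycle_iff_of_injective
        (Subtype.val_injective (p := fun x => x ∈ (↑t : Set V)))).mpr hc)
  have htree : (T.induce (↑t : Set V)).IsTree := ⟨hconn, hacyc⟩
  have hcard := htree.card_edgeFinset
  have hV : Fintype.card (↑t : Set V) = t.card := by simp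
  have h2 := (T.induce (↑t : Set V)).two_mul_card_edgeFinset
  have hbij : ((univ ×ˢ univ).filter
      fun p : (↑t : Set V) × (↑t : Set V) => (T.induce (↑t : Set V)).Adj p.1 p.2).card =
      ((univ ×ˢ univ).filter fun p : V × V => T.Adj p.1 p.2 ∧ p.1 ∈ t ∧ p.2 ∈ t).card := by
    refine Finset.card_bij (fun p _ => ((p.1 : V), (p.2 : V))) ?_ ?_ ?_
    · intro p hp
      simp only [mem_filter, mem_product, mem_univ, true_and] at hp ⊢
      exact ⟨hp, p.1.2, p.2.2⟩
    · intro p hp q hq h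
      simp only [Prod.mk.injEq] at h
      exact Prod.ext (Subtype.ext h.1) (Subtype.ext h.2)
    · intro p hp
      simp only [mem_filter, mem_product, mem_univ, true_and] at hp
      exact ⟨(⟨p.1, hp.2.1⟩, ⟨p.2, hp.2.2⟩), by simpa using hp.1, rfl⟩
  have h2' : ((univ ×ˢ univ).filter
      fun p : (↑t : Set V) × (↑t : Set V) => (T.induce (↑t : Set V)).Adj p.1 p.2).card
      = 2 * (T.induce (↑t : Set V)).edgeFinset.card := by
    rw [Finset.univ_product_univ]
    exact h2.symm
  rw [← hbij, h2']
  omega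


lemma two_steinerDist (hT : T.IsTree) {S : Finset V} (hS : S.Nonempty) :
    2 * steinerDist T S =
      ((univ ×ˢ univ).filter fun p : V × V =>
        T.Adj p.1 p.2 ∧ (S ∩ branchFinset T p.1 p.2).Nonempty ∧
          (S ∩ branchFinset T p.2 p.1).Nonempty).card := by
  have hconn := tstar_connected hT hS
  have htne : (tstar T S).Nonempty := hS.mono (subset_tstar hT S)
  have hset : ((univ ×ˢ univ).filter fun p : V × V =>
        T.Adj p.1 p.2 ∧ (S ∩ branchFinset T p.1 p.2).Nonempty ∧
          (S ∩ branchFinset T p.2 p.1).Nonempty) =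
      ((univ ×ˢ univ).filter fun p : V × V =>
        T.Adj p.1 p.2 ∧ p.1 ∈ tstar T S ∧ p.2 ∈ tstar T S) := by
    apply Finset.filter_congr
    intro p _
    constructor
    · rintro ⟨h, h1, h2⟩
      exact ⟨h, (cross_mem hT (subset_tstar hT S) hconn h h1 h2).1,
        (cross_mem hT (subset_tstar hT S) hconn h h1 h2).2⟩
    · rintro ⟨h, hv, hw⟩
      exact ⟨h, (tstar_cross hT h hv hw).1, (tstar_cross hT h hv hw).2⟩
  have hc : ((univ ×ˢ univ).filter fun p : V × V =>
        T.Adj p.1 p.2 ∧ (S ∩ branchFinset T p.1 p.2).Nonempty ∧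
          (S ∩ branchFinset T p.2 p.1).Nonempty).card = 2 * ((tstar T S).card - 1) := by
    rw [hset]
    exact pairs_card hT hconn
  have hd : steinerDist T S = (tstar T S).card - 1 := by
    have hmem : (tstar T S).card - 1 ∈
        {m : ℕ | ∃ t : Finset V, S ⊆ t ∧ (T.induce (↑t : Set V)).Connected ∧ t.card = m + 1} :=
      ⟨tstar T S, subset_tstar hT S, hconn, by have := htne.card_pos; omega⟩
    refine le_antisymm (Nat.sInf_le hmem) (le_csInf ⟨_, hmem⟩ ?_)
    rintro m ⟨t, hSt, htconn, hcard⟩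
    have hsub : ((univ ×ˢ univ).filter fun p : V × V =>
          T.Adj p.1 p.2 ∧ (S ∩ branchFinset T p.1 p.2).Nonempty ∧
            (S ∩ branchFinset T p.2 p.1).Nonempty) ⊆
        ((univ ×ˢ univ).filter fun p : V × V => T.Adj p.1 p.2 ∧ p.1 ∈ t ∧ p.2 ∈ t) := by
      intro p hp
      rw [mem_filter] at hp ⊢
      obtain ⟨hpu, h, h1, h2⟩ := hp
      exact ⟨hpu, h, (cross_mem hT hSt htconn h h1 h2).1,
        (cross_mem hT hSt htconn h h1 h2).2⟩
    have hle := Finset.card_le_card hsub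
    rw [hc, pairs_card hT htconn, hcard] at hle
    omega
  rw [hc, hd]

lemma count_split {b1 b2 : Finset V} (hd : Disjoint b1 b2) (hu : b1 ∪ b2 = univ)
    {r : ℕ} (hr : 1 ≤ r) :
    (Fintype.card V).choose r =
      ((univ.powersetCard r).filter fun S : Finset V =>
        (S ∩ b1).Nonempty ∧ (S ∩ b2).Nonempty).card + b1.card.choose r + b2.card.choose r := by
  have h0 : ((univ : Finset V).powersetCard r).card = (Fintype.card V).choose r := by
    simp [Finset.card_powersetCard]
  have hsplit := Finset.card_filter_add_card_filter_not
      (s := (univ : Finset V).powersetCard r)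
      (p := fun S => (S ∩ b1).Nonempty ∧ (S ∩ b2).Nonempty)
  have hmemb : ∀ (c d : Finset V), Disjoint c d → c ∪ d = univ → ∀ S : Finset V,
      S ∩ c = ∅ ↔ S ⊆ d := by
    intro c d hcd hcu S
    constructor
    · intro h x hx
      have hx1 : x ∉ c := fun hb =>
        (Finset.eq_empty_iff_forall_notMem.mp h x) (Finset.mem_inter.mpr ⟨hx, hb⟩)
      have hxu : x ∈ c ∪ d := by rw [hcu]; exact mem_univ x
      exact (Finset.mem_union.mp hxu).resolve_left hx1
    · intro h
      exact Finset.disjoint_iff_inter_eq_empty.mp (hcd.symm.mono_left h)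
  have hneg : ((univ : Finset V).powersetCard r).filter
      (fun S => ¬((S ∩ b1).Nonempty ∧ (S ∩ b2).Nonempty))
      = b2.powersetCard r ∪ b1.powersetCard r := by
    ext S
    simp only [mem_filter, Finset.mem_powersetCard, mem_union, not_and_or,
      Finset.not_nonempty_iff_eq_empty]
    constructor
    · rintro ⟨⟨-, hcard⟩, h | h⟩
      · exact Or.inl ⟨(hmemb b1 b2 hd hu S).mp h, hcard⟩
      · exact Or.inr ⟨(hmemb b2 b1 hd.symm (by rw [Finset.union_comm]; exact hu) S).mp h, hcard⟩
    · rintro (⟨hsub, hcard⟩ | ⟨hsub, hcard⟩)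
      · exact ⟨⟨subset_univ S, hcard⟩, Or.inl ((hmemb b1 b2 hd hu S).mpr hsub)⟩
      · exact ⟨⟨subset_univ S, hcard⟩,
          Or.inr ((hmemb b2 b1 hd.symm (by rw [Finset.union_comm]; exact hu) S).mpr hsub)⟩
  have hdisj : Disjoint (b2.powersetCard r) (b1.powersetCard r) := by
    rw [Finset.disjoint_left]
    intro S h2 h1
    rw [Finset.mem_powersetCard] at h1 h2
    have hSne : S.Nonempty := Finset.card_pos.mp (by omega)
    obtain ⟨x, hx⟩ := hSne
    exact Finset.disjoint_left.mp hd (h1.1 hx) (h2.1 hx)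
  have hcards : (b2.powersetCard r ∪ b1.powersetCard r).card
      = b2.card.choose r + b1.card.choose r := by
    rw [Finset.card_union_of_disjoint hdisj, Finset.card_powersetCard,
      Finset.card_powersetCard]
  rw [hneg, hcards] at hsplit
  omega

lemma ioo_sum {b1 b2 r : ℕ} (hr : 1 ≤ r) :
    (b1 + b2).choose r =
      (∑ i ∈ Finset.Ioo 0 r, b1.choose i * b2.choose (r - i)) + b1.choose r
        + b2.choose r := by
  rw [Nat.add_choose_eq, Finset.Nat.sum_antidiagonal_eq_sum_range_succ_mk]
  have hins : Finset.range (r + 1) = insert 0 (insert r (Finset.Ioo 0 r)) := by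
    ext i
    simp only [Finset.mem_range, Finset.mem_insert, Finset.mem_Ioo]
    omega
  rw [hins, Finset.sum_insert (by simp; omega), Finset.sum_insert (by simp)]
  simp only [Nat.choose_zero_right, Nat.sub_self, Nat.sub_zero, one_mul, mul_one]
  omega
end SteinerScratch

open SteinerScratch

/-- the two edge-sum formulas for the Steiner `r`-Wiener index of a tree.
Sums over edges are stated as sums over ordered adjacent pairs, i.e. twice the sums over
edges (whence the factor `2` on the left-hand sides). -/
theorem stmt10 [Fintype V] (T : SimpleGraph V) (hT : T.IsTree) (r : ℕ) (hr : 1 ≤ r) :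
    (2 * steinerWiener T r =
      ∑ v : V, ∑ w : V,
        if T.Adj v w then
          ∑ i ∈ Finset.Ioo 0 r,
            ((branchFinset T v w).card.choose i) * ((branchFinset T w v).card.choose (r - i))
        else 0) ∧
    ((2 * steinerWiener T r : ℤ) =
      ∑ v : V, ∑ w : V,
        if T.Adj v w then
          ((Fintype.card V).choose r : ℤ) - ((branchFinset T v w).card.choose r : ℤ) -
            ((branchFinset T w v).card.choose r : ℤ)
        else 0) := by
  classical
  have key : ∀ v w : V, T.Adj v w →
      (Fintype.card V).choose r =
      ((univ.powersetCard r).filter fun S : Finset V =>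
        (S ∩ branchFinset T v w).Nonempty ∧ (S ∩ branchFinset T w v).Nonempty).card
        + (branchFinset T v w).card.choose r + (branchFinset T w v).card.choose r :=
    fun v w hvw => count_split (branch_disjoint hT hvw) (branch_union hT hvw) hr
  have hsum : 2 * steinerWiener T r = ∑ v : V, ∑ w : V,
      if T.Adj v w then
        ((univ.powersetCard r).filter fun S : Finset V =>
          (S ∩ branchFinset T v w).Nonempty ∧ (S ∩ branchFinset T w v).Nonempty).card
      else 0 := by
    rw [steinerWiener, Finset.mul_sum]
    calc ∑ S ∈ univ.powersetCard r, 2 * steinerDist T S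
        = ∑ S ∈ univ.powersetCard r, ((univ ×ˢ univ).filter fun p : V × V =>
            T.Adj p.1 p.2 ∧ (S ∩ branchFinset T p.1 p.2).Nonempty ∧
              (S ∩ branchFinset T p.2 p.1).Nonempty).card := by
          refine Finset.sum_congr rfl fun S hS => ?_
          have hSne : S.Nonempty := by
            rw [Finset.mem_powersetCard] at hS
            exact Finset.card_pos.mp (by omega)
          exact two_steinerDist hT hSne
      _ = ∑ S ∈ univ.powersetCard r, ∑ p ∈ univ ×ˢ univ,
            (if T.Adj p.1 p.2 ∧ (S ∩ branchFinset T p.1 p.2).Nonempty ∧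
              (S ∩ branchFinset T p.2 p.1).Nonempty then 1 else 0) := by
          refine Finset.sum_congr rfl fun S _ => ?_
          rw [Finset.card_filter]
      _ = ∑ p ∈ univ ×ˢ univ, ∑ S ∈ univ.powersetCard r,
            (if T.Adj p.1 p.2 ∧ (S ∩ branchFinset T p.1 p.2).Nonempty ∧
              (S ∩ branchFinset T p.2 p.1).Nonempty then 1 else 0) := Finset.sum_comm
      _ = ∑ v : V, ∑ w : V,
            if T.Adj v w then
              ((univ.powersetCard r).filter fun S : Finset V =>
                (S ∩ branchFinset T v w).Nonempty ∧
                  (S ∩ branchFinset T w v).Nonempty).card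
            else 0 := by
          rw [Finset.sum_product]
          refine Finset.sum_congr rfl fun v _ => Finset.sum_congr rfl fun w _ => ?_
          by_cases h : T.Adj v w
          · simp only [h, true_and, if_true]
            rw [Finset.card_filter]
          · simp [h]
  constructor
  · rw [hsum]
    refine Finset.sum_congr rfl fun v _ => Finset.sum_congr rfl fun w _ => ?_
    by_cases h : T.Adj v w
    · simp only [h, if_true]
      have h1 := key v w h
      have h2 : ((branchFinset T v w).card + (branchFinset T w v).card).choose r
          = (∑ i ∈ Finset.Ioo 0 r,
              (branchFinset T v w).card.choose i * (branchFinset T w v).card.choose (r - i))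
            + (branchFinset T v w).card.choose r + (branchFinset T w v).card.choose r :=
        ioo_sum hr
      rw [branch_card hT h] at h2
      omega
    · simp [h]
  · have hcast : (2 * steinerWiener T r : ℤ) = ((2 * steinerWiener T r : ℕ) : ℤ) := by
      push_cast
      ring
    rw [hcast, hsum]
    push_cast
    refine Finset.sum_congr rfl fun v _ => Finset.sum_congr rfl fun w _ => ?_
    by_cases h : T.Adj v w
    · simp only [h, if_true]
      have h1 := key v w h
      have h2 : (((univ.powersetCard r).filter fun S : Finset V =>
          (S ∩ branchFinset T v w).Nonempty ∧ (S ∩ branchFinset T w v).Nonempty).card : ℤ)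
          + ((branchFinset T v w).card.choose r : ℤ)
          + ((branchFinset T w v).card.choose r : ℤ)
          = ((Fintype.card V).choose r : ℤ) := by
        exact_mod_cast congrArg (Nat.cast : ℕ → ℤ) h1.symm
      linarith
    · simp [h]
end

section
/- Let x > 0 be a real number and let T = [T_1,…,T_k] be a rooted tree whose root has degree k ≥ 1. Then f(T,x) = ∏_{i=1}^k (rf(T_i,x) + f(T_i,x)) and rf(T,x) = (∏_{i=1}^k (rf(T_i,x) + f(T_i,x)))·( x + ∑_{i=1}^k rf(T_i,x)/(rf(T_i,x) + f(T_i,x)) ). Consequently, the quantity ρ_1(T,x) = rf(T,x)/(rf(T,x) + f(T,x)) satisfies ρ_1(T,x) = ( x + ∑_{i=1}^k ρ_1(T_i,x) ) / ( 1 + x + ∑_{i=1}^k ρ_1(T_i,x) ). -/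
open scoped Classical
open Finset

universe u

variable {V : Type u}

/-- The spanning forest of `G` determined by the edge set `F`, as a spanning subgraph. -/
noncomputable def forestGraph (F : Finset (Sym2 V)) : SimpleGraph V :=
  SimpleGraph.fromEdgeSet (↑F : Set (Sym2 V))

/-- `λ(F)`: the number of components of the spanning forest `F`. -/
noncomputable def numComponents (F : Finset (Sym2 V)) : ℕ :=
  Nat.card (forestGraph F).ConnectedComponent

/-- `γ(F)`: the number of ways to mark one vertex in each component of the spanning
forest `F`. -/
noncomputable def numMarkings (F : Finset (Sym2 V)) : ℕ :=
  Nat.card {m : (forestGraph F).ConnectedComponent → V //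
    ∀ c, (forestGraph F).connectedComponentMk (m c) = c}

/-- The number of ways to mark one vertex in each component of the spanning forest `F`
other than the component containing `r`. -/
noncomputable def numMarkingsAway (F : Finset (Sym2 V)) (r : V) : ℕ :=
  Nat.card {m : {c : (forestGraph F).ConnectedComponent //
      c ≠ (forestGraph F).connectedComponentMk r} → V //
    ∀ c, (forestGraph F).connectedComponentMk (m c) = (c : (forestGraph F).ConnectedComponent)}

/-- `rf(G,x) = ∑_F γ(F)·x^{λ(F)}`, the generating polynomial of marked spanning forests. -/
noncomputable def rfPoly (G : SimpleGraph V) [Fintype V] (x : ℝ) : ℝ :=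
  ∑ F ∈ G.edgeFinset.powerset, (numMarkings F : ℝ) * x ^ numComponents F

/-- `f(G,r,x) = ∑_F (#markings of all components except the root's)·x^{λ(F)−1}`. -/
noncomputable def fPoly (G : SimpleGraph V) [Fintype V] (r : V) (x : ℝ) : ℝ :=
  ∑ F ∈ G.edgeFinset.powerset, (numMarkingsAway F r : ℝ) * x ^ (numComponents F - 1)

/-- `ρ₁(G,r,x) = rf(G,x) / (rf(G,x) + f(G,r,x))`. -/
noncomputable def rho1 (G : SimpleGraph V) [Fintype V] (r : V) (x : ℝ) : ℝ :=
  rfPoly G x / (rfPoly G x + fPoly G r x)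

set_option maxHeartbeats 1000000
namespace Stmt12

open SimpleGraph

section Geom

variable {T : SimpleGraph V}

lemma isPath_length_eq (hT : T.IsTree) {a b : V} (p : T.Walk a b) (hp : p.IsPath) :
    p.length = T.dist a b := by
  obtain ⟨q, hq⟩ := (hT.isConnected a b).exists_walk_length_eq_dist
  obtain ⟨pp, -, hup⟩ := hT.existsUnique_path a b
  have e1 : p = pp := hup p hp
  have e2 : q.bypass = pp := hup _ q.bypass_isPath
  have h3 : q.bypass.length ≤ q.length := q.length_bypass_le
  have h4 : T.dist a b ≤ q.bypass.length := dist_le _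
  have e3 : p.length = q.bypass.length := by rw [e1, ← e2]
  omega

lemma dist_adj_cases (hT : T.IsTree) {a b : V} (hab : T.Adj a b) (x : V) :
    T.dist x b = T.dist x a + 1 ∨ T.dist x a = T.dist x b + 1 := by
  obtain ⟨q, hq⟩ := (hT.isConnected x a).exists_walk_length_eq_dist
  set p := q.bypass with hp
  have hpl : p.length = T.dist x a := isPath_length_eq hT p q.bypass_isPath
  by_cases hb : b ∈ p.support
  · right
    have hsplit := p.take_spec hb
    have htake : (p.takeUntil b hb).length = T.dist x b :=
      isPath_length_eq hT _ (q.bypass_isPath.takeUntil hb)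
    have hdrop : (p.dropUntil b hb).length = T.dist b a :=
      isPath_length_eq hT _ (q.bypass_isPath.dropUntil hb)
    have hba : T.dist b a = 1 := dist_eq_one_iff_adj.mpr hab.symm
    have hlen : (p.takeUntil b hb).length + (p.dropUntil b hb).length = p.length := by
      rw [← Walk.length_append, hsplit]
    omega
  · left
    have hcpath : (p.concat hab).IsPath := by
      rw [← Walk.isPath_reverse_iff, Walk.reverse_concat]
      rw [Walk.cons_isPath_iff]
      refine ⟨q.bypass_isPath.reverse, ?_⟩
      simpa [Walk.support_reverse] using hb
    have := isPath_length_eq hT _ hcpath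
    rw [Walk.length_concat] at this
    omega

lemma transfer_up (hT : T.IsTree) {a b r u : V} (hab : T.Adj a b)
    (hfar : T.dist b r = T.dist a r + 1) (hu : T.Adj r u)
    (hma : T.dist a u < T.dist a r) : T.dist b u < T.dist b r := by
  have t1 : T.dist b u ≤ T.dist b a + T.dist a u := hT.isConnected.dist_triangle
  have t2 : T.dist a r ≤ T.dist a u + T.dist u r := hT.isConnected.dist_triangle
  have h1 : T.dist b a = 1 := dist_eq_one_iff_adj.mpr hab.symm
  have h2 : T.dist u r = 1 := dist_eq_one_iff_adj.mpr hu.symm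
  omega

lemma branch_cover (hT : T.IsTree) {x r : V} (hx : x ≠ r) :
    ∃ u, T.Adj r u ∧ T.dist x u < T.dist x r := by
  have hd : T.dist x r ≠ 0 :=
    dist_ne_zero_iff_ne_and_reachable.mpr ⟨hx, hT.isConnected x r⟩
  obtain ⟨q, hq⟩ := (hT.isConnected x r).exists_walk_length_eq_dist
  have hlen : q.reverse.length = T.dist x r := by rw [Walk.length_reverse, hq]
  cases hrev : q.reverse with
  | nil => exact absurd (hrev ▸ rfl : q.reverse.length = 0) (by omega)
  | cons h q' =>
    rename_i u'
    refine ⟨u', h, ?_⟩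
    have h1 : T.dist x u' ≤ q'.reverse.length := dist_le _
    have h2 : q'.reverse.length = q'.length := Walk.length_reverse _
    have h3 : q.reverse.length = q'.length + 1 := by rw [hrev]; simp
    omega

lemma branch_unique (hT : T.IsTree) {r u u' : V} (hu : T.Adj r u) (hu' : T.Adj r u') {x : V}
    (h1 : T.dist x u < T.dist x r) (h2 : T.dist x u' < T.dist x r) : u = u' := by
  have hur : T.dist u r = 1 := dist_eq_one_iff_adj.mpr hu.symm
  have hur' : T.dist u' r = 1 := dist_eq_one_iff_adj.mpr hu'.symm
  have t1 : T.dist x r ≤ T.dist x u + T.dist u r := hT.isConnected.dist_triangle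
  have t2 : T.dist x r ≤ T.dist x u' + T.dist u' r := hT.isConnected.dist_triangle
  have d1 : T.dist x u + 1 = T.dist x r := by omega
  have d2 : T.dist x u' + 1 = T.dist x r := by omega
  -- construct the two paths x → r ending at u resp. u'
  obtain ⟨q, hq⟩ := (hT.isConnected x u).exists_walk_length_eq_dist
  obtain ⟨q', hq'⟩ := (hT.isConnected x u').exists_walk_length_eq_dist
  set p := q.bypass with hpdef
  set p' := q'.bypass with hpdef'
  have hppath : p.IsPath := q.bypass_isPath
  have hppath' : p'.IsPath := q'.bypass_isPath
  have hpl : p.length = T.dist x u := isPath_length_eq hT p hppath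
  have hpl' : p'.length = T.dist x u' := isPath_length_eq hT p' hppath'
  have hrns : r ∉ p.support := by
    intro hr
    have := isPath_length_eq hT _ (hppath.takeUntil hr)
    have := Walk.length_takeUntil_le p hr
    omega
  have hrns' : r ∉ p'.support := by
    intro hr
    have := isPath_length_eq hT _ (hppath'.takeUntil hr)
    have := Walk.length_takeUntil_le p' hr
    omega
  have hc : (p.concat hu.symm).IsPath := by
    rw [← Walk.isPath_reverse_iff, Walk.reverse_concat, Walk.cons_isPath_iff]
    exact ⟨hppath.reverse, by simpa [Walk.support_reverse] using hrns⟩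
  have hc' : (p'.concat hu'.symm).IsPath := by
    rw [← Walk.isPath_reverse_iff, Walk.reverse_concat, Walk.cons_isPath_iff]
    exact ⟨hppath'.reverse, by simpa [Walk.support_reverse] using hrns'⟩
  obtain ⟨pp, -, hup⟩ := hT.existsUnique_path x r
  have e1 : p.concat hu.symm = pp := hup _ hc
  have e2 : p'.concat hu'.symm = pp := hup _ hc'
  have hsupp : (p.concat hu.symm).reverse.support = (p'.concat hu'.symm).reverse.support := by
    rw [e1, e2]
  rw [Walk.reverse_concat, Walk.reverse_concat, Walk.support_cons, Walk.support_cons] at hsupp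
  have h5 := p.reverse.support_eq_cons
  have h6 := p'.reverse.support_eq_cons
  rw [h5, h6] at hsupp
  simp only [List.cons.injEq] at hsupp
  exact hsupp.2.1

end Geom

section Branches

variable [Fintype V] {T : SimpleGraph V} {r : V}

lemma mem_nbrs {v u : V} : u ∈ nbrs T v ↔ T.Adj v u := by
  simp [nbrs]

lemma mem_branchFinset_iff (hT : T.IsTree) {u : V} (hu : u ∈ nbrs T r) {x : V} :
    x ∈ branchFinset T u r ↔ T.dist x u < T.dist x r := by
  rw [mem_nbrs] at hu
  unfold branchFinset
  simp only [Finset.mem_insert, Finset.mem_filter, Finset.mem_univ, true_and]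
  constructor
  · rintro (rfl | h)
    · simpa [SimpleGraph.dist_self] using hT.isConnected.pos_dist_of_ne hu.ne'
    · exact h
  · tauto

lemma r_not_mem_branch (hT : T.IsTree) {u : V} (hu : u ∈ nbrs T r) :
    r ∉ branchFinset T u r := by
  rw [mem_branchFinset_iff hT hu]
  rw [mem_nbrs] at hu
  have h1 : T.dist r u = 1 := dist_eq_one_iff_adj.mpr hu
  have h2 : T.dist r r = 0 := SimpleGraph.dist_self
  omega

lemma branch_mem_unique (hT : T.IsTree) {u u' x : V} (hu : u ∈ nbrs T r) (hu' : u' ∈ nbrs T r)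
    (hx : x ∈ branchFinset T u r) (hx' : x ∈ branchFinset T u' r) : u = u' := by
  rw [mem_branchFinset_iff hT hu] at hx
  rw [mem_branchFinset_iff hT hu'] at hx'
  exact branch_unique hT (mem_nbrs.mp hu) (mem_nbrs.mp hu') hx hx'

lemma branch_cover' (hT : T.IsTree) {x : V} (hx : x ≠ r) :
    ∃ u ∈ nbrs T r, x ∈ branchFinset T u r := by
  obtain ⟨u, hu, hd⟩ := branch_cover hT hx
  exact ⟨u, mem_nbrs.mpr hu, (mem_branchFinset_iff hT (mem_nbrs.mpr hu)).mpr hd⟩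

lemma mem_branch_self {u : V} : u ∈ branchFinset T u r := Finset.mem_insert_self _ _

lemma adj_mem_branch (hT : T.IsTree) {a b u : V} (hab : T.Adj a b) (ha : a ≠ r) (hb : b ≠ r)
    (hu : u ∈ nbrs T r) (hma : a ∈ branchFinset T u r) : b ∈ branchFinset T u r := by
  rw [mem_branchFinset_iff hT hu] at hma ⊢
  have hur := mem_nbrs.mp hu
  rcases dist_adj_cases hT hab r with h | h
  · -- dist r b = dist r a + 1, b is further
    exact transfer_up hT hab (by rw [SimpleGraph.dist_comm, h, SimpleGraph.dist_comm]) hur hma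
  · -- a is further
    obtain ⟨u'', hu'', hbu''⟩ := branch_cover' hT hb
    rw [mem_branchFinset_iff hT hu''] at hbu''
    have haa : T.dist a u'' < T.dist a r :=
      transfer_up hT hab.symm (by rw [SimpleGraph.dist_comm, h, SimpleGraph.dist_comm]) (mem_nbrs.mp hu'') hbu''
    have : u'' = u := branch_unique hT (mem_nbrs.mp hu'') hur haa hma
    exact this ▸ hbu''

/-- every edge of the tree is a root edge or lies inside a unique branch -/
lemma edge_cases (hT : T.IsTree) {a b : V} (hab : T.Adj a b) :
    (a = r ∧ b ∈ nbrs T r) ∨ (b = r ∧ a ∈ nbrs T r) ∨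
      (∃ u ∈ nbrs T r, a ∈ branchFinset T u r ∧ b ∈ branchFinset T u r) := by
  by_cases ha : a = r
  · exact Or.inl ⟨ha, mem_nbrs.mpr (ha ▸ hab)⟩
  by_cases hb : b = r
  · exact Or.inr (Or.inl ⟨hb, mem_nbrs.mpr (hb ▸ hab.symm)⟩)
  · obtain ⟨u, hu, hau⟩ := branch_cover' hT ha
    exact Or.inr (Or.inr ⟨u, hu, hau, adj_mem_branch hT hab ha hb hu hau⟩)

end Branches

section Forest

variable [Fintype V] (T : SimpleGraph V) (r : V)

noncomputable def buildF (q : (u : V) → Finset (Sym2 (↑(branchFinset T u r) : Set V)) × Bool) :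
    Finset (Sym2 V) :=
  ((nbrs T r).filter (fun u => (q u).2)).image (fun u => s(r, u)) ∪
    (nbrs T r).biUnion (fun u => ((q u).1).image (Sym2.map Subtype.val))

noncomputable def RsetF (q : (u : V) → Finset (Sym2 (↑(branchFinset T u r) : Set V)) × Bool) :
    Set V :=
  {v | v = r ∨ ∃ u ∈ nbrs T r, (q u).2 = true ∧
    ∃ h : v ∈ (↑(branchFinset T u r) : Set V),
      (forestGraph ((q u).1)).Reachable ⟨v, h⟩ (branchRoot T u r)}

variable {T r}
variable {q : (u : V) → Finset (Sym2 (↑(branchFinset T u r) : Set V)) × Bool}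

lemma forestGraph_adj {W : Type u} {F : Finset (Sym2 W)} {v w : W} :
    (forestGraph F).Adj v w ↔ s(v, w) ∈ F ∧ v ≠ w := by
  simp [forestGraph, SimpleGraph.fromEdgeSet_adj]

lemma buildF_adj_cases {v w : V}
    (h : (forestGraph (buildF T r q)).Adj v w) :
    (v = r ∧ w ∈ nbrs T r ∧ (q w).2 = true) ∨ (w = r ∧ v ∈ nbrs T r ∧ (q v).2 = true) ∨
      (∃ u ∈ nbrs T r, ∃ (hv : v ∈ (↑(branchFinset T u r) : Set V))
        (hw : w ∈ (↑(branchFinset T u r) : Set V)),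
        (forestGraph ((q u).1)).Adj ⟨v, hv⟩ ⟨w, hw⟩) := by
  rw [forestGraph_adj] at h
  obtain ⟨hmem, hne⟩ := h
  rw [buildF, Finset.mem_union] at hmem
  rcases hmem with hmem | hmem
  · rw [Finset.mem_image] at hmem
    obtain ⟨u, hu, he⟩ := hmem
    rw [Finset.mem_filter] at hu
    rw [Sym2.eq_iff] at he
    rcases he with ⟨h1, h2⟩ | ⟨h1, h2⟩
    · exact Or.inl ⟨h1.symm, h2 ▸ hu.1, h2 ▸ hu.2⟩
    · exact Or.inr (Or.inl ⟨h1.symm, h2 ▸ hu.1, h2 ▸ hu.2⟩)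
  · rw [Finset.mem_biUnion] at hmem
    obtain ⟨u, hu, he⟩ := hmem
    rw [Finset.mem_image] at he
    obtain ⟨e', he', hee⟩ := he
    induction e' using Sym2.ind with
    | _ a b =>
      rw [Sym2.map_pair_eq, Sym2.eq_iff] at hee
      refine Or.inr (Or.inr ?_)
      rcases hee with ⟨h1, h2⟩ | ⟨h1, h2⟩
      · subst h1; subst h2
        refine ⟨u, hu, a.2, b.2, ?_⟩
        rw [forestGraph_adj]
        exact ⟨by simpa using he', fun hh => hne (congrArg Subtype.val hh)⟩
      · subst h1; subst h2
        refine ⟨u, hu, b.2, a.2, ?_⟩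
        rw [forestGraph_adj]
        exact ⟨by rw [Sym2.eq_swap]; simpa using he', fun hh => hne (congrArg Subtype.val hh)⟩

lemma branch_hom_adj {u : V} (hu : u ∈ nbrs T r) {a b : (↑(branchFinset T u r) : Set V)}
    (h : (forestGraph ((q u).1)).Adj a b) :
    (forestGraph (buildF T r q)).Adj ↑a ↑b := by
  rw [forestGraph_adj] at h ⊢
  refine ⟨?_, fun hh => h.2 (Subtype.ext hh)⟩
  rw [buildF, Finset.mem_union]
  right
  rw [Finset.mem_biUnion]
  exact ⟨u, hu, Finset.mem_image.mpr ⟨s(a, b), h.1, Sym2.map_pair_eq _ _ _⟩⟩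

lemma root_adj {u : V} (hu : u ∈ nbrs T r) (hq : (q u).2 = true) :
    (forestGraph (buildF T r q)).Adj r u := by
  rw [forestGraph_adj]
  refine ⟨?_, (mem_nbrs.mp hu).ne⟩
  rw [buildF, Finset.mem_union]
  left
  exact Finset.mem_image.mpr ⟨u, Finset.mem_filter.mpr ⟨hu, hq⟩, rfl⟩

noncomputable def branchHom {u : V} (hu : u ∈ nbrs T r) :
    (forestGraph ((q u).1)) →g (forestGraph (buildF T r q)) :=
  ⟨Subtype.val, fun h => branch_hom_adj hu h⟩

lemma branch_reach {u : V} (hu : u ∈ nbrs T r) {a b : (↑(branchFinset T u r) : Set V)}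
    (h : (forestGraph ((q u).1)).Reachable a b) :
    (forestGraph (buildF T r q)).Reachable ↑a ↑b :=
  h.map (branchHom hu)

lemma r_mem_Rset : r ∈ RsetF T r q := Or.inl rfl

lemma Rset_reach {v : V} (hv : v ∈ RsetF T r q) :
    (forestGraph (buildF T r q)).Reachable v r := by
  rcases hv with rfl | ⟨u, hu, hq2, h, hre⟩
  · exact SimpleGraph.Reachable.refl _
  · exact (branch_reach hu hre).trans (root_adj hu hq2).reachable.symm

/-- the equivalence relation describing the components of the glued forest -/
def rhoRel (q : (u : V) → Finset (Sym2 (↑(branchFinset T u r) : Set V)) × Bool) (v w : V) :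
    Prop :=
  (v ∈ RsetF T r q ∧ w ∈ RsetF T r q) ∨
    ∃ u ∈ nbrs T r, ∃ (hv : v ∈ (↑(branchFinset T u r) : Set V))
      (hw : w ∈ (↑(branchFinset T u r) : Set V)),
      (forestGraph ((q u).1)).Reachable ⟨v, hv⟩ ⟨w, hw⟩

lemma rhoRel_refl (hT : T.IsTree) (v : V) : rhoRel q v v := by
  by_cases hv : v = r
  · subst hv
    exact Or.inl ⟨r_mem_Rset, r_mem_Rset⟩
  · obtain ⟨u, hu, hmem⟩ := branch_cover' hT hv
    exact Or.inr ⟨u, hu, Finset.mem_coe.mpr hmem, Finset.mem_coe.mpr hmem,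
      SimpleGraph.Reachable.refl _⟩

lemma rhoRel_symm {v w : V} (h : rhoRel q v w) : rhoRel q w v := by
  rcases h with ⟨h1, h2⟩ | ⟨u, hu, hv, hw, hr⟩
  · exact Or.inl ⟨h2, h1⟩
  · exact Or.inr ⟨u, hu, hw, hv, hr.symm⟩

lemma mem_Rset_of_branch_reach (hT : T.IsTree) {w z : V} {u : V} (hu : u ∈ nbrs T r)
    (hw : w ∈ (↑(branchFinset T u r) : Set V)) (hz : z ∈ (↑(branchFinset T u r) : Set V))
    (hr : (forestGraph ((q u).1)).Reachable ⟨z, hz⟩ ⟨w, hw⟩)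
    (hwR : w ∈ RsetF T r q) : z ∈ RsetF T r q := by
  rcases hwR with rfl | ⟨u', hu', hq2, h', hre⟩
  · exact absurd (Finset.mem_coe.mp hw) (r_not_mem_branch hT hu)
  · have huu : u' = u := branch_mem_unique hT hu' hu (Finset.mem_coe.mp h') (Finset.mem_coe.mp hw)
    subst huu
    exact Or.inr ⟨u', hu', hq2, hz, hr.trans hre⟩

lemma rhoRel_trans (hT : T.IsTree) {v w z : V} (h1 : rhoRel q v w) (h2 : rhoRel q w z) :
    rhoRel q v z := by
  rcases h1 with ⟨hv, hw⟩ | ⟨u, hu, hv, hw, hr⟩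
  · rcases h2 with ⟨hw', hz⟩ | ⟨u', hu', hw', hz', hr'⟩
    · exact Or.inl ⟨hv, hz⟩
    · exact Or.inl ⟨hv, mem_Rset_of_branch_reach hT hu' hw' hz' hr'.symm hw⟩
  · rcases h2 with ⟨hw', hz⟩ | ⟨u', hu', hw', hz', hr'⟩
    · exact Or.inl ⟨mem_Rset_of_branch_reach hT hu hw hv hr hw', hz⟩
    · have huu : u = u' :=
        branch_mem_unique hT hu hu' (Finset.mem_coe.mp hw) (Finset.mem_coe.mp hw')
      subst huu
      exact Or.inr ⟨u, hu, hv, hz', hr.trans hr'⟩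

lemma rhoRel_of_adj (hT : T.IsTree) {v w : V}
    (h : (forestGraph (buildF T r q)).Adj v w) : rhoRel q v w := by
  rcases buildF_adj_cases h with ⟨rfl, hw, hq2⟩ | ⟨rfl, hv, hq2⟩ | ⟨u, hu, hv, hw, hadj⟩
  · refine Or.inl ⟨r_mem_Rset, Or.inr ⟨w, hw, hq2, Finset.mem_coe.mpr mem_branch_self, ?_⟩⟩
    exact SimpleGraph.Reachable.refl _
  · refine Or.inl ⟨Or.inr ⟨v, hv, hq2, Finset.mem_coe.mpr mem_branch_self, ?_⟩, r_mem_Rset⟩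
    exact SimpleGraph.Reachable.refl _
  · exact Or.inr ⟨u, hu, hv, hw, hadj.reachable⟩

lemma rhoRel_of_walk (hT : T.IsTree) {v w : V}
    (p : (forestGraph (buildF T r q)).Walk v w) : rhoRel q v w := by
  induction p with
  | nil => exact rhoRel_refl hT _
  | cons h _ ih => exact rhoRel_trans hT (rhoRel_of_adj hT h) ih

lemma reach_iff (hT : T.IsTree) {v w : V} :
    (forestGraph (buildF T r q)).Reachable v w ↔ rhoRel q v w := by
  constructor
  · exact fun h => h.elim (fun p => rhoRel_of_walk hT p)
  · rintro (⟨hv, hw⟩ | ⟨u, hu, hv, hw, hr⟩)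
    · exact (Rset_reach hv).trans (Rset_reach hw).symm
    · exact branch_reach hu hr

lemma suppR (hT : T.IsTree) :
    ((forestGraph (buildF T r q)).connectedComponentMk r).supp = RsetF T r q := by
  ext v
  rw [SimpleGraph.ConnectedComponent.mem_supp_iff, SimpleGraph.ConnectedComponent.eq,
    reach_iff hT]
  constructor
  · rintro (⟨hv, _⟩ | ⟨u, hu, _, hw, _⟩)
    · exact hv
    · exact absurd (Finset.mem_coe.mp hw) (r_not_mem_branch hT hu)
  · exact fun hv => Or.inl ⟨hv, r_mem_Rset⟩

end Forest

section Counting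

variable {W : Type u} [Fintype W]

lemma numMarkings_pos (F : Finset (Sym2 W)) : 0 < numMarkings F := by
  rw [numMarkings]
  have : Nonempty {m : (forestGraph F).ConnectedComponent → W //
      ∀ c, (forestGraph F).connectedComponentMk (m c) = c} :=
    ⟨⟨fun c => c.out, fun c => c.out_eq⟩⟩
  exact Nat.card_pos

lemma numComponents_pos [Nonempty W] (F : Finset (Sym2 W)) : 0 < numComponents F := by
  rw [numComponents]
  have : Nonempty (forestGraph F).ConnectedComponent :=
    ⟨(forestGraph F).connectedComponentMk (Classical.arbitrary W)⟩
  exact Nat.card_pos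

/-- splitting a full marking into the mark of the component of `r` and the rest -/
noncomputable def sectionsEquiv (H : SimpleGraph W) (r : W) :
    {m : H.ConnectedComponent → W // ∀ c, H.connectedComponentMk (m c) = c} ≃
      (H.connectedComponentMk r).supp ×
        {m : {c : H.ConnectedComponent // c ≠ H.connectedComponentMk r} → W //
          ∀ c, H.connectedComponentMk (m c) = (c : H.ConnectedComponent)} where
  toFun m := (⟨m.1 (H.connectedComponentMk r), by
      rw [SimpleGraph.ConnectedComponent.mem_supp_iff]; exact m.2 _⟩,
    ⟨fun c => m.1 c.1, fun c => m.2 _⟩)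
  invFun vm := ⟨fun c => if h : c = H.connectedComponentMk r then vm.1.1 else vm.2.1 ⟨c, h⟩, by
    intro c
    dsimp only
    split
    · next h =>
      rw [h]
      exact SimpleGraph.ConnectedComponent.mem_supp_iff _ _ |>.mp vm.1.2
    · next h => exact vm.2.2 ⟨c, h⟩⟩
  left_inv m := by
    apply Subtype.ext
    funext c
    dsimp only
    split
    · next h => rw [h]
    · rfl
  right_inv vm := by
    refine Prod.ext ?_ ?_
    · apply Subtype.ext
      dsimp only
      rw [dif_pos rfl]
    · apply Subtype.ext
      funext c
      dsimp only
      rw [dif_neg c.2]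

lemma numMarkings_eq_mul (F : Finset (Sym2 W)) (r : W) :
    numMarkings F =
      Nat.card ((forestGraph F).connectedComponentMk r).supp * numMarkingsAway F r := by
  rw [numMarkings, numMarkingsAway, ← Nat.card_prod]
  exact Nat.card_congr (sectionsEquiv (forestGraph F) r)

lemma card_eq_one_add {α : Type*} [Finite α] (a : α) :
    Nat.card α = 1 + Nat.card {b : α // b ≠ a} := by
  have e : α ≃ ({b : α // b ≠ a} ⊕ (PUnit : Type)) :=
    (Equiv.optionSubtypeNe a).symm.trans (Equiv.optionEquivSumPUnit _)
  rw [Nat.card_congr e, Nat.card_sum]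
  simp [Nat.add_comm]

lemma card_option {β : Type v} [Finite β] : Nat.card (Option β) = 1 + Nat.card β := by
  rw [Nat.card_congr (Equiv.optionEquivSumPUnit.{v, v} β), Nat.card_sum]
  simp [Nat.add_comm]

lemma nat_card_sigma {ι : Type v} [Fintype ι] (β : ι → Type w) [∀ i, Finite (β i)] :
    Nat.card ((i : ι) × β i) = ∑ i : ι, Nat.card (β i) := by
  haveI := fun i => Fintype.ofFinite (β i)
  simp [Nat.card_eq_fintype_card]

end Counting

section DL

variable [Fintype V] {T : SimpleGraph V} {r : V}
variable {q : (u : V) → Finset (Sym2 (↑(branchFinset T u r) : Set V)) × Bool}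

lemma not_mem_Rset_of (hT : T.IsTree) {u : V} (hu : u ∈ nbrs T r)
    {a : (↑(branchFinset T u r) : Set V)}
    (hna : (q u).2 = true → ¬ (forestGraph ((q u).1)).Reachable a (branchRoot T u r)) :
    ↑a ∉ RsetF T r q := by
  rintro (h | ⟨u', hu', hq2, h', hre⟩)
  · apply r_not_mem_branch hT hu
    have h2 := a.2
    rw [h] at h2
    exact Finset.mem_coe.mp h2
  · have huu : u' = u := branch_mem_unique hT hu' hu (Finset.mem_coe.mp h') (Finset.mem_coe.mp a.2)
    subst huu
    exact hna hq2 hre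

lemma reach_branch_char (hT : T.IsTree) {u : V} (hu : u ∈ nbrs T r)
    {a : (↑(branchFinset T u r) : Set V)} (hna : ↑a ∉ RsetF T r q) {v : V}
    (hre : (forestGraph (buildF T r q)).Reachable v ↑a) :
    ∃ h : v ∈ (↑(branchFinset T u r) : Set V), (forestGraph ((q u).1)).Reachable ⟨v, h⟩ a := by
  rw [reach_iff hT] at hre
  rcases hre with ⟨hv, ha⟩ | ⟨u', hu', hv, hw, hre⟩
  · exact absurd ha hna
  · have huu : u' = u :=
      branch_mem_unique hT hu' hu (Finset.mem_coe.mp hw) (Finset.mem_coe.mp a.2)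
    subst huu
    exact ⟨hv, hre⟩

lemma card_root_supp (hT : T.IsTree) :
    Nat.card ((forestGraph (buildF T r q)).connectedComponentMk r).supp =
      1 + ∑ x ∈ (nbrs T r).attach,
        (if (q x.1).2 = true then
          Nat.card
            ((forestGraph ((q x.1).1)).connectedComponentMk (branchRoot T x.1 r)).supp
        else 0) := by
  have hsupp := suppR (q := q) hT
  classical
  set β := fun x : {y // y ∈ nbrs T r} =>
    {a : (↑(branchFinset T x.1 r) : Set V) // (q x.1).2 = true ∧
      (forestGraph ((q x.1).1)).Reachable a (branchRoot T x.1 r)} with hβ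
  let fwd : Option ((x : {y // y ∈ nbrs T r}) × β x) → ↥(RsetF T r q) := fun o =>
    match o with
    | none => ⟨r, r_mem_Rset⟩
    | some ⟨x, a⟩ => ⟨↑a.1, Or.inr ⟨x.1, x.2, a.2.1, a.1.2, a.2.2⟩⟩
  have hbij : Function.Bijective fwd := by
    constructor
    · rintro (_ | ⟨x, a⟩) (_ | ⟨y, b⟩) h
      · rfl
      · exfalso
        have hvr : r = ↑b.1 := congrArg Subtype.val h
        have h2 := b.1.2
        rw [← hvr] at h2
        exact r_not_mem_branch hT y.2 (Finset.mem_coe.mp h2)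
      · exfalso
        have hvr : (↑a.1 : V) = r := congrArg Subtype.val h
        have h2 := a.1.2
        rw [hvr] at h2
        exact r_not_mem_branch hT x.2 (Finset.mem_coe.mp h2)
      · have hval : (↑a.1 : V) = ↑b.1 := congrArg Subtype.val h
        have h2 := b.1.2
        rw [← hval] at h2
        have hxy : x = y := Subtype.ext
          (branch_mem_unique hT x.2 y.2 (Finset.mem_coe.mp a.1.2)
            (Finset.mem_coe.mp h2))
        subst hxy
        have hab : a = b := Subtype.ext (Subtype.ext hval)
        rw [hab]
    · rintro ⟨v, hv⟩
      rcases hv with h | ⟨u, hu, hq2, h, hre⟩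
      · exact ⟨none, Subtype.ext h.symm⟩
      · exact ⟨some ⟨⟨u, hu⟩, ⟨⟨v, h⟩, hq2, hre⟩⟩, Subtype.ext rfl⟩
  have hcard1 : Nat.card (RsetF T r q) =
      Nat.card (Option ((x : {y // y ∈ nbrs T r}) × β x)) :=
    (Nat.card_congr (Equiv.ofBijective fwd hbij)).symm
  have hterm : ∀ x : {y // y ∈ nbrs T r}, Nat.card (β x) =
      if (q x.1).2 = true then
        Nat.card ((forestGraph ((q x.1).1)).connectedComponentMk (branchRoot T x.1 r)).supp
      else 0 := by
    intro x
    by_cases h : (q x.1).2 = true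
    · rw [if_pos h]
      apply Nat.card_congr
      apply Equiv.subtypeEquivRight
      intro a
      rw [SimpleGraph.ConnectedComponent.mem_supp_iff, SimpleGraph.ConnectedComponent.eq]
      exact ⟨fun hh => hh.2, fun hh => ⟨h, hh⟩⟩
    · rw [if_neg h]
      have : IsEmpty (β x) := ⟨fun a => h a.2.1⟩
      exact Nat.card_eq_zero.mpr (Or.inl this)
  rw [hsupp, hcard1, card_option, nat_card_sigma]
  congr 1
  rw [Finset.univ_eq_attach]
  exact Finset.sum_congr rfl (fun x _ => hterm x)

lemma mem_Rset_branch_elim (hT : T.IsTree) {u : V} (hu : u ∈ nbrs T r)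
    {a : (↑(branchFinset T u r) : Set V)} (ha : ↑a ∈ RsetF T r q) :
    (q u).2 = true ∧ (forestGraph ((q u).1)).Reachable a (branchRoot T u r) := by
  rcases ha with h | ⟨u', hu', hq2, h', hre⟩
  · exfalso
    have h2 := a.2
    rw [h] at h2
    exact r_not_mem_branch hT hu (Finset.mem_coe.mp h2)
  · have huu : u' = u := branch_mem_unique hT hu' hu (Finset.mem_coe.mp h') (Finset.mem_coe.mp a.2)
    subst huu
    exact ⟨hq2, hre⟩

variable (T r) in
abbrev SigTy (q : (u : V) → Finset (Sym2 (↑(branchFinset T u r) : Set V)) × Bool) : Type u :=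
  (x : {y // y ∈ nbrs T r}) ×
    {c : (forestGraph ((q x.1).1)).ConnectedComponent //
      (q x.1).2 = true →
        c ≠ (forestGraph ((q x.1).1)).connectedComponentMk (branchRoot T x.1 r)}

variable (q) in
noncomputable def fwdC (hT : T.IsTree) (s : SigTy T r q) :
    {c : (forestGraph (buildF T r q)).ConnectedComponent //
      c ≠ (forestGraph (buildF T r q)).connectedComponentMk r} :=
  ⟨s.2.1.map (branchHom s.1.2), by
    intro hmk
    obtain ⟨a, ha⟩ := s.2.1.exists_rep
    have ha' : (forestGraph ((q s.1.1).1)).connectedComponentMk a = s.2.1 := ha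
    rw [← ha', SimpleGraph.ConnectedComponent.map_mk] at hmk
    have hmem : ↑a ∈ RsetF T r q := by
      rw [← suppR hT]
      exact SimpleGraph.ConnectedComponent.mem_supp_iff _ _ |>.mpr hmk
    obtain ⟨hq2, hre⟩ := mem_Rset_branch_elim hT s.1.2 hmem
    exact s.2.2 hq2 (by rw [← ha']; exact SimpleGraph.ConnectedComponent.eq.mpr hre)⟩

lemma bijC (hT : T.IsTree) : Function.Bijective (fwdC q hT) := by
  constructor
  · rintro ⟨x, cs⟩ ⟨y, ct⟩ h
    have hcc : cs.1.map (branchHom x.2) = ct.1.map (branchHom y.2) := congrArg Subtype.val h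
    obtain ⟨a, ha⟩ := cs.1.exists_rep
    obtain ⟨b, hb⟩ := ct.1.exists_rep
    have ha' : (forestGraph ((q x.1).1)).connectedComponentMk a = cs.1 := ha
    have hb' : (forestGraph ((q y.1).1)).connectedComponentMk b = ct.1 := hb
    rw [← ha', ← hb', SimpleGraph.ConnectedComponent.map_mk,
      SimpleGraph.ConnectedComponent.map_mk] at hcc
    have hre : (forestGraph (buildF T r q)).Reachable ↑a ↑b :=
      SimpleGraph.ConnectedComponent.eq.mp hcc
    have hbR : (↑b : V) ∉ RsetF T r q :=
      not_mem_Rset_of hT y.2 (fun hf hrr =>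
        ct.2 hf (by rw [← hb']; exact SimpleGraph.ConnectedComponent.eq.mpr hrr))
    obtain ⟨h', hre'⟩ := reach_branch_char hT y.2 hbR hre
    have hxy : x = y := Subtype.ext
      (branch_mem_unique hT x.2 y.2 (Finset.mem_coe.mp a.2) (Finset.mem_coe.mp h'))
    subst hxy
    have hcst : cs = ct := by
      apply Subtype.ext
      rw [← ha', ← hb']
      exact SimpleGraph.ConnectedComponent.eq.mpr hre'
    rw [hcst]
  · rintro ⟨c, hc⟩
    obtain ⟨v, hv⟩ := c.exists_rep
    have hvr : v ∉ RsetF T r q := by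
      intro hmem
      rw [← suppR hT] at hmem
      exact hc (by rw [← hv]; exact SimpleGraph.ConnectedComponent.mem_supp_iff _ _ |>.mp hmem)
    have hvne : v ≠ r := fun h => hvr (by rw [h]; exact r_mem_Rset)
    obtain ⟨u, hu, hmem⟩ := branch_cover' hT hvne
    refine ⟨⟨⟨u, hu⟩,
      ⟨(forestGraph ((q u).1)).connectedComponentMk ⟨v, Finset.mem_coe.mpr hmem⟩, ?_⟩⟩, ?_⟩
    · intro hf hmk
      exact hvr (Or.inr ⟨u, hu, hf, Finset.mem_coe.mpr hmem,
        SimpleGraph.ConnectedComponent.eq.mp hmk⟩)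
    · apply Subtype.ext
      show ((forestGraph ((q u).1)).connectedComponentMk
        ⟨v, Finset.mem_coe.mpr hmem⟩).map _ = c
      rw [SimpleGraph.ConnectedComponent.map_mk]
      exact hv

lemma numComponents_buildF (hT : T.IsTree) :
    numComponents (buildF T r q) =
      1 + ∑ x ∈ (nbrs T r).attach,
        (if (q x.1).2 = true then numComponents (q x.1).1 - 1 else numComponents (q x.1).1) := by
  rw [numComponents,
    card_eq_one_add ((forestGraph (buildF T r q)).connectedComponentMk r)]
  congr 1
  rw [← Nat.card_congr (Equiv.ofBijective _ (bijC hT)), nat_card_sigma, Finset.univ_eq_attach]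
  refine Finset.sum_congr rfl fun x _ => ?_
  by_cases h : (q x.1).2 = true
  · rw [if_pos h]
    have e : {c : (forestGraph ((q x.1).1)).ConnectedComponent //
          (q x.1).2 = true →
            c ≠ (forestGraph ((q x.1).1)).connectedComponentMk (branchRoot T x.1 r)} ≃
        {c : (forestGraph ((q x.1).1)).ConnectedComponent //
          c ≠ (forestGraph ((q x.1).1)).connectedComponentMk (branchRoot T x.1 r)} :=
      Equiv.subtypeEquivRight (fun c => by simp [h])
    rw [Nat.card_congr e]
    have h2 := card_eq_one_add
      ((forestGraph ((q x.1).1)).connectedComponentMk (branchRoot T x.1 r))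
    rw [numComponents]
    omega
  · rw [if_neg h]
    have e : {c : (forestGraph ((q x.1).1)).ConnectedComponent //
          (q x.1).2 = true →
            c ≠ (forestGraph ((q x.1).1)).connectedComponentMk (branchRoot T x.1 r)} ≃
        (forestGraph ((q x.1).1)).ConnectedComponent :=
      Equiv.subtypeUnivEquiv (fun c hf => absurd hf h)
    rw [Nat.card_congr e, numComponents]

lemma fiber_char (hT : T.IsTree) (s : SigTy T r q) {v : V}
    (hv : (forestGraph (buildF T r q)).connectedComponentMk v = ↑(fwdC q hT s)) :
    ∃ h : v ∈ (↑(branchFinset T s.1.1 r) : Set V),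
      (forestGraph ((q s.1.1).1)).connectedComponentMk ⟨v, h⟩ = s.2.1 := by
  obtain ⟨a, ha⟩ := s.2.1.exists_rep
  have ha' : (forestGraph ((q s.1.1).1)).connectedComponentMk a = s.2.1 := ha
  have h0 : (↑(fwdC q hT s) : (forestGraph (buildF T r q)).ConnectedComponent) =
      (forestGraph (buildF T r q)).connectedComponentMk ↑a := by
    show s.2.1.map (branchHom s.1.2) = _
    rw [← ha', SimpleGraph.ConnectedComponent.map_mk]
    rfl
  have hre : (forestGraph (buildF T r q)).Reachable v ↑a :=
    SimpleGraph.ConnectedComponent.eq.mp (hv.trans h0)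
  have hna : (↑a : V) ∉ RsetF T r q :=
    not_mem_Rset_of hT s.1.2 (fun hf hrr =>
      s.2.2 hf (by rw [← ha']; exact SimpleGraph.ConnectedComponent.eq.mpr hrr))
  obtain ⟨h, hre'⟩ := reach_branch_char hT s.1.2 hna hre
  exact ⟨h, by rw [← ha']; exact SimpleGraph.ConnectedComponent.eq.mpr hre'⟩

noncomputable def fiberEquiv (hT : T.IsTree) (s : SigTy T r q) :
    {v : V // (forestGraph (buildF T r q)).connectedComponentMk v = ↑(fwdC q hT s)} ≃
      {b : (↑(branchFinset T s.1.1 r) : Set V) //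
        (forestGraph ((q s.1.1).1)).connectedComponentMk b = s.2.1} where
  toFun v := ⟨⟨v.1, (fiber_char hT s v.2).choose⟩, (fiber_char hT s v.2).choose_spec⟩
  invFun b := ⟨↑b.1, by
    show _ = s.2.1.map (branchHom s.1.2)
    exact (SimpleGraph.ConnectedComponent.map_mk _ _).symm.trans
      (congrArg (fun c => SimpleGraph.ConnectedComponent.map (branchHom s.1.2) c) b.2)⟩
  left_inv v := Subtype.ext rfl
  right_inv b := Subtype.ext (Subtype.ext rfl)

lemma numMarkingsAway_buildF (hT : T.IsTree) :
    numMarkingsAway (buildF T r q) r =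
      ∏ x ∈ (nbrs T r).attach,
        (if (q x.1).2 = true then numMarkingsAway (q x.1).1 (branchRoot T x.1 r)
         else numMarkings (q x.1).1) := by
  rw [numMarkingsAway]
  have e1 := Equiv.subtypePiEquivPi
    (p := fun (c : {c : (forestGraph (buildF T r q)).ConnectedComponent //
        c ≠ (forestGraph (buildF T r q)).connectedComponentMk r}) (v : V) =>
      (forestGraph (buildF T r q)).connectedComponentMk v = ↑c)
  have e2 := (Equiv.piCongrLeft
    (fun c : {c : (forestGraph (buildF T r q)).ConnectedComponent //
        c ≠ (forestGraph (buildF T r q)).connectedComponentMk r} =>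
      {v : V // (forestGraph (buildF T r q)).connectedComponentMk v = ↑c})
    (Equiv.ofBijective _ (bijC (q := q) hT))).symm
  have e3 := Equiv.piCongrRight (fun s : SigTy T r q => fiberEquiv hT s)
  have e4 := Equiv.piCurry (fun (x : {y // y ∈ nbrs T r})
    (c : {c : (forestGraph ((q x.1).1)).ConnectedComponent //
      (q x.1).2 = true →
        c ≠ (forestGraph ((q x.1).1)).connectedComponentMk (branchRoot T x.1 r)}) =>
      {b : (↑(branchFinset T x.1 r) : Set V) //
        (forestGraph ((q x.1).1)).connectedComponentMk b = ↑c})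
  rw [Nat.card_congr (((e1.trans e2).trans e3).trans e4), Nat.card_pi, Finset.univ_eq_attach]
  refine Finset.prod_congr rfl fun x _ => ?_
  by_cases h : (q x.1).2 = true
  · rw [if_pos h, numMarkingsAway]
    refine (Nat.card_congr ?_).symm
    refine Equiv.trans (Equiv.subtypePiEquivPi
      (p := fun (c : {c : (forestGraph ((q x.1).1)).ConnectedComponent //
          c ≠ (forestGraph ((q x.1).1)).connectedComponentMk (branchRoot T x.1 r)})
        (b : (↑(branchFinset T x.1 r) : Set V)) =>
        (forestGraph ((q x.1).1)).connectedComponentMk b = ↑c)) ?_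
    exact Equiv.piCongrLeft
      (fun c : {c : (forestGraph ((q x.1).1)).ConnectedComponent //
          (q x.1).2 = true →
            c ≠ (forestGraph ((q x.1).1)).connectedComponentMk (branchRoot T x.1 r)} =>
        {b : (↑(branchFinset T x.1 r) : Set V) //
          (forestGraph ((q x.1).1)).connectedComponentMk b = ↑c})
      (Equiv.subtypeEquivRight (fun c => by simp [h])).symm
  · rw [if_neg h, numMarkings]
    refine (Nat.card_congr ?_).symm
    refine Equiv.trans (Equiv.subtypePiEquivPi
      (p := fun (c : (forestGraph ((q x.1).1)).ConnectedComponent)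
        (b : (↑(branchFinset T x.1 r) : Set V)) =>
        (forestGraph ((q x.1).1)).connectedComponentMk b = c)) ?_
    exact (Equiv.piCongrLeft
      (fun c : (forestGraph ((q x.1).1)).ConnectedComponent =>
        {b : (↑(branchFinset T x.1 r) : Set V) //
          (forestGraph ((q x.1).1)).connectedComponentMk b = c})
      (Equiv.subtypeUnivEquiv (fun c hf => absurd hf h))).symm

end DL

section Assemble

variable [Fintype V] {T : SimpleGraph V} {r : V} {x : ℝ}
variable {q : (u : V) → Finset (Sym2 (↑(branchFinset T u r) : Set V)) × Bool}

variable (T r) in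
noncomputable def gfun (x : ℝ) (u : V) :
    Finset (Sym2 (↑(branchFinset T u r) : Set V)) × Bool → ℝ := fun Fb =>
  if Fb.2 = true then
    (numMarkingsAway Fb.1 (branchRoot T u r) : ℝ) * x ^ (numComponents Fb.1 - 1)
  else (numMarkings Fb.1 : ℝ) * x ^ numComponents Fb.1

variable (T r) in
noncomputable def Dfun (x : ℝ) (u : V) :
    Finset (Sym2 (↑(branchFinset T u r) : Set V)) × Bool → ℝ := fun Fb =>
  if Fb.2 = true then (numMarkings Fb.1 : ℝ) * x ^ (numComponents Fb.1 - 1) * x else 0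

lemma weight_away (hT : T.IsTree) :
    ((numMarkingsAway (buildF T r q) r : ℝ) * x ^ (numComponents (buildF T r q) - 1)) =
      ∏ y ∈ (nbrs T r).attach, gfun T r x y.1 (q y.1) := by
  rw [numMarkingsAway_buildF hT, numComponents_buildF hT, Nat.add_sub_cancel_left,
    ← Finset.prod_pow_eq_pow_sum, Nat.cast_prod, ← Finset.prod_mul_distrib]
  refine Finset.prod_congr rfl fun y _ => ?_
  by_cases h : (q y.1).2 = true
  · simp [gfun, h]
  · simp [gfun, h]

lemma weight_full (hT : T.IsTree) (hx : 0 < x) :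
    ((numMarkings (buildF T r q) : ℝ) * x ^ numComponents (buildF T r q)) =
      x * ∏ y ∈ (nbrs T r).attach, gfun T r x y.1 (q y.1) +
        ∑ y ∈ (nbrs T r).attach, Dfun T r x y.1 (q y.1) *
          ∏ z ∈ (nbrs T r).attach.erase y, gfun T r x z.1 (q z.1) := by
  have hlam : 1 ≤ numComponents (buildF T r q) := by
    rw [numComponents_buildF hT]; omega
  have hpow : (x : ℝ) ^ numComponents (buildF T r q) =
      x ^ (numComponents (buildF T r q) - 1) * x := by
    rw [← pow_succ]; congr 1; omega
  have hQ := weight_away (q := q) (x := x) hT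
  set Q : ℝ := (numMarkingsAway (buildF T r q) r : ℝ) * x ^ (numComponents (buildF T r q) - 1)
    with hQdef
  have key : ((numMarkings (buildF T r q) : ℝ) * x ^ numComponents (buildF T r q)) =
      x * Q + ∑ y ∈ (nbrs T r).attach,
        (if (q y.1).2 = true then
          (Nat.card ((forestGraph ((q y.1).1)).connectedComponentMk
            (branchRoot T y.1 r)).supp : ℝ) else 0) * x * Q := by
    rw [numMarkings_eq_mul (buildF T r q) r, card_root_supp hT, hpow, hQdef]
    push_cast
    rw [← Finset.sum_mul, ← Finset.sum_mul]
    ring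
  rw [key, hQ]
  congr 1
  refine Finset.sum_congr rfl fun y _ => ?_
  rw [← Finset.mul_prod_erase ((nbrs T r).attach) _ (Finset.mem_attach _ y)]
  by_cases h : (q y.1).2 = true
  · have hm := numMarkings_eq_mul (q y.1).1 (branchRoot T y.1 r)
    simp only [gfun, Dfun, if_pos h]
    push_cast [hm]
    ring
  · simp [Dfun, gfun, h]

variable (T r) in
noncomputable def Ifin (u : V) :
    Finset (Finset (Sym2 (↑(branchFinset T u r) : Set V)) × Bool) :=
  (branchGraph T u r).edgeFinset.powerset ×ˢ (Finset.univ : Finset Bool)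

variable (T r) in
noncomputable def qOf
    (P : (a : V) → a ∈ nbrs T r → Finset (Sym2 (↑(branchFinset T a r) : Set V)) × Bool) :
    (u : V) → Finset (Sym2 (↑(branchFinset T u r) : Set V)) × Bool :=
  fun u => if h : u ∈ nbrs T r then P u h else (∅, false)

variable (T r) in
noncomputable def jMap (F : Finset (Sym2 V)) :
    (a : V) → a ∈ nbrs T r → Finset (Sym2 (↑(branchFinset T a r) : Set V)) × Bool :=
  fun a _ => (F.preimage (Sym2.map (Subtype.val : (↑(branchFinset T a r) : Set V) → V))
      ((Sym2.map.injective Subtype.val_injective).injOn),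
    decide (s(r, a) ∈ F))

lemma mapped_mem_edgeFinset {u : V} {e : Sym2 (↑(branchFinset T u r) : Set V)} :
    Sym2.map Subtype.val e ∈ T.edgeFinset ↔ e ∈ (branchGraph T u r).edgeFinset := by
  induction e using Sym2.ind with
  | _ a b =>
    simp only [SimpleGraph.mem_edgeFinset, Sym2.map_pair_eq, branchGraph,
      SimpleGraph.mem_edgeSet, SimpleGraph.comap_adj, Function.Embedding.coe_subtype]
    exact (SimpleGraph.mem_edgeFinset (G := branchGraph T u r) (e := s(a, b))).symm

lemma mapped_endpoints {u : V} {e : Sym2 (↑(branchFinset T u r) : Set V)} {v : V}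
    (hv : v ∈ Sym2.map Subtype.val e) : v ∈ branchFinset T u r := by
  induction e using Sym2.ind with
  | _ a b =>
    rw [Sym2.map_pair_eq, Sym2.mem_iff] at hv
    rcases hv with rfl | rfl
    · exact Finset.mem_coe.mp a.2
    · exact Finset.mem_coe.mp b.2

lemma buildF_sub (hP : ∀ u ∈ nbrs T r, ((q u).1) ⊆ (branchGraph T u r).edgeFinset) :
    buildF T r q ⊆ T.edgeFinset := by
  intro e he
  rw [buildF, Finset.mem_union] at he
  rcases he with he | he
  · obtain ⟨u, hu, rfl⟩ := Finset.mem_image.mp he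
    rw [Finset.mem_filter] at hu
    rw [SimpleGraph.mem_edgeFinset, SimpleGraph.mem_edgeSet]
    exact mem_nbrs.mp hu.1
  · obtain ⟨u, hu, he2⟩ := Finset.mem_biUnion.mp he
    obtain ⟨e', he', rfl⟩ := Finset.mem_image.mp he2
    exact mapped_mem_edgeFinset.mpr (hP u hu he')

lemma mem_buildF_branch (hT : T.IsTree) {u : V} (hu : u ∈ nbrs T r)
    {e : Sym2 (↑(branchFinset T u r) : Set V)} :
    Sym2.map Subtype.val e ∈ buildF T r q ↔ e ∈ (q u).1 := by
  constructor
  · intro he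
    rw [buildF, Finset.mem_union] at he
    rcases he with he | he
    · exfalso
      obtain ⟨u', hu', heq⟩ := Finset.mem_image.mp he
      rw [Finset.mem_filter] at hu'
      have hr : r ∈ Sym2.map Subtype.val e := by
        rw [← heq]; exact Sym2.mem_mk_left _ _
      exact r_not_mem_branch hT hu (mapped_endpoints hr)
    · obtain ⟨u', hu', he2⟩ := Finset.mem_biUnion.mp he
      obtain ⟨e'', he'', heq⟩ := Finset.mem_image.mp he2
      induction e using Sym2.ind with
      | _ a b =>
        have hmem : (↑a : V) ∈ Sym2.map Subtype.val e'' := by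
          rw [heq, Sym2.map_pair_eq]; exact Sym2.mem_mk_left _ _
        have huu : u' = u :=
          branch_mem_unique hT hu' hu (mapped_endpoints hmem) (Finset.mem_coe.mp a.2)
        subst huu
        have : e'' = s(a, b) := Sym2.map.injective Subtype.val_injective
          (heq.trans (Sym2.map_pair_eq _ _ _).symm)
        rw [← this]
        exact he''
  · intro he
    exact Finset.mem_union_right _
      (Finset.mem_biUnion.mpr ⟨u, hu, Finset.mem_image.mpr ⟨e, he, rfl⟩⟩)

lemma mem_buildF_root (hT : T.IsTree) {u : V} (hu : u ∈ nbrs T r) :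
    s(r, u) ∈ buildF T r q ↔ (q u).2 = true := by
  constructor
  · intro he
    rw [buildF, Finset.mem_union] at he
    rcases he with he | he
    · obtain ⟨u', hu', heq⟩ := Finset.mem_image.mp he
      rw [Finset.mem_filter] at hu'
      rw [Sym2.eq_iff] at heq
      rcases heq with ⟨-, h2⟩ | ⟨h1, -⟩
      · exact h2 ▸ hu'.2
      · exact absurd h1.symm (mem_nbrs.mp hu).ne'
    · exfalso
      obtain ⟨u', hu', he2⟩ := Finset.mem_biUnion.mp he
      obtain ⟨e'', he'', heq⟩ := Finset.mem_image.mp he2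
      have hr : r ∈ Sym2.map Subtype.val e'' := by
        rw [heq]; exact Sym2.mem_mk_left _ _
      exact r_not_mem_branch hT hu' (mapped_endpoints hr)
  · intro hf
    exact Finset.mem_union_left _
      (Finset.mem_image.mpr ⟨u, Finset.mem_filter.mpr ⟨hu, hf⟩, rfl⟩)

lemma sum_powerset_eq (hT : T.IsTree) (f : Finset (Sym2 V) → ℝ) :
    ∑ P ∈ (nbrs T r).pi (fun u => Ifin T r u), f (buildF T r (qOf T r P)) =
      ∑ F ∈ T.edgeFinset.powerset, f F := by
  refine Finset.sum_nbij' (fun P => buildF T r (qOf T r P)) (jMap T r) ?_ ?_ ?_ ?_ ?_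
  · intro P hP
    rw [Finset.mem_powerset]
    refine buildF_sub fun u hu => ?_
    rw [qOf, dif_pos hu]
    have := Finset.mem_pi.mp hP u hu
    rw [Ifin, Finset.mem_product] at this
    exact Finset.mem_powerset.mp this.1
  · intro F hF
    rw [Finset.mem_pi]
    intro a ha
    rw [Ifin, Finset.mem_product]
    refine ⟨Finset.mem_powerset.mpr fun e' he' => ?_, Finset.mem_univ _⟩
    simp only [jMap, Finset.mem_preimage] at he'
    exact mapped_mem_edgeFinset.mp (Finset.mem_powerset.mp hF he')
  · intro P hP
    funext a ha
    have hq1 : (qOf T r P a).1 = (P a ha).1 := by rw [qOf, dif_pos ha]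
    have hq2 : (qOf T r P a).2 = (P a ha).2 := by rw [qOf, dif_pos ha]
    refine Prod.ext ?_ ?_
    · show (jMap T r (buildF T r (qOf T r P)) a ha).1 = _
      simp only [jMap]
      apply Finset.ext
      intro e'
      rw [Finset.mem_preimage, mem_buildF_branch hT ha, hq1]
    · show decide (s(r, a) ∈ buildF T r (qOf T r P)) = (P a ha).2
      rw [← hq2]
      cases hb : (qOf T r P a).2 with
      | true => exact decide_eq_true ((mem_buildF_root hT ha).mpr hb)
      | false =>
        refine decide_eq_false fun hm => ?_
        rw [mem_buildF_root hT ha, hb] at hm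
        exact Bool.false_ne_true hm
  · intro F hF
    apply Finset.ext
    intro e
    show e ∈ buildF T r (qOf T r (jMap T r F)) ↔ e ∈ F
    constructor
    · intro he
      rw [buildF, Finset.mem_union] at he
      rcases he with he | he
      · obtain ⟨u, hu, rfl⟩ := Finset.mem_image.mp he
        rw [Finset.mem_filter] at hu
        have := hu.2
        rw [qOf, dif_pos hu.1] at this
        exact of_decide_eq_true this
      · obtain ⟨u, hu, he2⟩ := Finset.mem_biUnion.mp he
        obtain ⟨e', he', rfl⟩ := Finset.mem_image.mp he2
        rw [qOf, dif_pos hu] at he'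
        simp only [jMap, Finset.mem_preimage] at he'
        exact he'
    · intro he
      have hee := Finset.mem_powerset.mp hF he
      rw [SimpleGraph.mem_edgeFinset] at hee
      induction e using Sym2.ind with
      | _ a b =>
        have hab : T.Adj a b := hee
        rcases edge_cases (r := r) hT hab with ⟨rfl, hb⟩ | ⟨rfl, ha2⟩ | ⟨u, hu, hau, hbu⟩
        · rw [mem_buildF_root hT hb, qOf, dif_pos hb]
          exact decide_eq_true he
        · rw [Sym2.eq_swap]
          rw [mem_buildF_root hT ha2, qOf, dif_pos ha2]
          rw [Sym2.eq_swap] at he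
          exact decide_eq_true he
        · have : s(a, b) =
              Sym2.map Subtype.val s((⟨a, Finset.mem_coe.mpr hau⟩ :
                (↑(branchFinset T u r) : Set V)), ⟨b, Finset.mem_coe.mpr hbu⟩) := by
            rw [Sym2.map_pair_eq]
          rw [this, mem_buildF_branch hT hu, qOf, dif_pos hu]
          simp only [jMap, Finset.mem_preimage]
          rw [← this]
          exact he
  · intro P hP
    rfl

lemma branch_sum_g (u : V) :
    ∑ Fb ∈ Ifin T r u, gfun T r x u Fb =
      rfPoly (branchGraph T u r) x + fPoly (branchGraph T u r) (branchRoot T u r) x := by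
  rw [Ifin, Finset.sum_product, rfPoly, fPoly, ← Finset.sum_add_distrib]
  refine Finset.sum_congr rfl fun F' _ => ?_
  rw [show (Finset.univ : Finset Bool) = {true, false} from Fintype.univ_bool,
    Finset.sum_insert (by simp), Finset.sum_singleton]
  simp only [gfun, if_true, Bool.false_eq_true, if_false]
  ring

lemma branch_sum_D (u : V) (hx : 0 < x) :
    ∑ Fb ∈ Ifin T r u, Dfun T r x u Fb = rfPoly (branchGraph T u r) x := by
  rw [Ifin, Finset.sum_product, rfPoly]
  refine Finset.sum_congr rfl fun F' _ => ?_
  haveI : Nonempty (↑(branchFinset T u r) : Set V) := ⟨branchRoot T u r⟩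
  have h1 : 0 < numComponents F' := numComponents_pos F'
  rw [show (Finset.univ : Finset Bool) = {true, false} from Fintype.univ_bool,
    Finset.sum_insert (by simp), Finset.sum_singleton]
  simp only [Dfun, if_true, Bool.false_eq_true, if_false]
  rw [add_zero, mul_assoc, ← pow_succ]
  congr 2
  omega

lemma sum_pi_prod_g (hT : T.IsTree) :
    ∑ P ∈ (nbrs T r).pi (fun u => Ifin T r u),
        ∏ y ∈ (nbrs T r).attach, gfun T r x y.1 ((qOf T r P) y.1) =
      ∏ u ∈ nbrs T r,
        (rfPoly (branchGraph T u r) x + fPoly (branchGraph T u r) (branchRoot T u r) x) := by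
  rw [show ∏ u ∈ nbrs T r,
      (rfPoly (branchGraph T u r) x + fPoly (branchGraph T u r) (branchRoot T u r) x) =
      ∏ u ∈ nbrs T r, ∑ Fb ∈ Ifin T r u, gfun T r x u Fb from
    Finset.prod_congr rfl fun u _ => (branch_sum_g u).symm]
  rw [Finset.prod_sum]
  refine Finset.sum_congr rfl fun P hP => ?_
  refine Finset.prod_congr rfl fun y _ => ?_
  rw [qOf, dif_pos y.2]

lemma fPoly_eq (hT : T.IsTree) :
    fPoly T r x = ∏ u ∈ nbrs T r,
      (rfPoly (branchGraph T u r) x + fPoly (branchGraph T u r) (branchRoot T u r) x) := by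
  rw [fPoly,
    ← sum_powerset_eq hT (fun F => (numMarkingsAway F r : ℝ) * x ^ (numComponents F - 1)),
    ← sum_pi_prod_g hT]
  exact Finset.sum_congr rfl fun P hP => weight_away hT

lemma rfPoly_eq_aux (hT : T.IsTree) (hx : 0 < x) :
    rfPoly T x =
      x * ∏ u ∈ nbrs T r,
        (rfPoly (branchGraph T u r) x + fPoly (branchGraph T u r) (branchRoot T u r) x) +
      ∑ u ∈ nbrs T r, rfPoly (branchGraph T u r) x *
        ∏ z ∈ (nbrs T r).erase u,
          (rfPoly (branchGraph T z r) x + fPoly (branchGraph T z r) (branchRoot T z r) x) := by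
  rw [rfPoly, ← sum_powerset_eq hT (fun F => (numMarkings F : ℝ) * x ^ numComponents F)]
  rw [Finset.sum_congr rfl (fun P (hP : P ∈ (nbrs T r).pi (fun u => Ifin T r u)) =>
    weight_full (q := qOf T r P) hT hx)]
  rw [Finset.sum_add_distrib, ← Finset.mul_sum, sum_pi_prod_g hT]
  congr 1
  rw [Finset.sum_comm]
  rw [← Finset.sum_attach (nbrs T r) (fun u => rfPoly (branchGraph T u r) x *
    ∏ z ∈ (nbrs T r).erase u,
      (rfPoly (branchGraph T z r) x + fPoly (branchGraph T z r) (branchRoot T z r) x))]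
  refine Finset.sum_congr rfl fun y _ => ?_
  have key : ∀ P ∈ (nbrs T r).pi (fun u => Ifin T r u),
      Dfun T r x y.1 ((qOf T r P) y.1) *
        ∏ z ∈ (nbrs T r).attach.erase y, gfun T r x z.1 ((qOf T r P) z.1) =
      ∏ z ∈ (nbrs T r).attach,
        (fun (a : V) Fb => if a = y.1 then Dfun T r x a Fb else gfun T r x a Fb) z.1
          ((qOf T r P) z.1) := by
    intro P hP
    rw [← Finset.mul_prod_erase ((nbrs T r).attach) _ (Finset.mem_attach _ y)]
    simp only [if_pos rfl]
    congr 1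
    refine Finset.prod_congr rfl fun z hz => ?_
    have hzy : z.1 ≠ y.1 := fun h => (Finset.mem_erase.mp hz).1 (Subtype.ext h)
    rw [if_neg hzy]
  rw [Finset.sum_congr rfl key]
  have hps : ∑ P ∈ (nbrs T r).pi (fun u => Ifin T r u),
      ∏ z ∈ (nbrs T r).attach,
        (fun (a : V) Fb => if a = y.1 then Dfun T r x a Fb else gfun T r x a Fb) z.1
          ((qOf T r P) z.1) =
      ∏ u ∈ nbrs T r, ∑ Fb ∈ Ifin T r u,
        (if u = y.1 then Dfun T r x u Fb else gfun T r x u Fb) := by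
    rw [Finset.prod_sum]
    refine Finset.sum_congr rfl fun P hP => ?_
    refine Finset.prod_congr rfl fun z _ => ?_
    rw [qOf, dif_pos z.2]
  rw [hps, ← Finset.mul_prod_erase (nbrs T r) _ y.2]
  have h1 : ∑ Fb ∈ Ifin T r y.1,
      (if (y.1 : V) = y.1 then Dfun T r x y.1 Fb else gfun T r x y.1 Fb) =
      rfPoly (branchGraph T y.1 r) x := by
    rw [Finset.sum_congr rfl (fun Fb _ => if_pos rfl)]
    exact branch_sum_D y.1 hx
  have h2 : ∀ z ∈ (nbrs T r).erase y.1,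
      (∑ Fb ∈ Ifin T r z, if z = (y.1 : V) then Dfun T r x z Fb else gfun T r x z Fb) =
      rfPoly (branchGraph T z r) x + fPoly (branchGraph T z r) (branchRoot T z r) x :=
    fun z hz => by
      rw [Finset.sum_congr rfl (fun Fb _ => if_neg (Finset.mem_erase.mp hz).1)]
      exact branch_sum_g z
  rw [h1, Finset.prod_congr rfl h2]

end Assemble

section Final

variable [Fintype V] {T : SimpleGraph V} {r : V} {x : ℝ}

lemma rfPoly_pos (G : SimpleGraph V) (hx : 0 < x) : 0 < rfPoly G x := by
  rw [rfPoly]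
  refine Finset.sum_pos (fun F _ => ?_) ⟨∅, Finset.empty_mem_powerset _⟩
  exact mul_pos (by exact_mod_cast numMarkings_pos F) (pow_pos hx _)

lemma fPoly_nonneg (G : SimpleGraph V) (r : V) (hx : 0 < x) : 0 ≤ fPoly G r x := by
  rw [fPoly]
  exact Finset.sum_nonneg fun F _ =>
    mul_nonneg (Nat.cast_nonneg _) (pow_nonneg hx.le _)

lemma rfPoly_eq (hT : T.IsTree) (hx : 0 < x) :
    rfPoly T x =
      (∏ u ∈ nbrs T r,
        (rfPoly (branchGraph T u r) x + fPoly (branchGraph T u r) (branchRoot T u r) x)) *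
      (x + ∑ u ∈ nbrs T r,
        rfPoly (branchGraph T u r) x /
          (rfPoly (branchGraph T u r) x + fPoly (branchGraph T u r) (branchRoot T u r) x)) := by
  have hd : ∀ u ∈ nbrs T r, 0 < rfPoly (branchGraph T u r) x +
      fPoly (branchGraph T u r) (branchRoot T u r) x :=
    fun u _ => add_pos_of_pos_of_nonneg (rfPoly_pos _ hx) (fPoly_nonneg _ _ hx)
  rw [rfPoly_eq_aux hT hx, mul_add, Finset.mul_sum]
  congr 1
  · ring
  · refine Finset.sum_congr rfl fun u hu => ?_
    rw [← Finset.mul_prod_erase (nbrs T r) _ hu]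
    have h0 : rfPoly (branchGraph T u r) x +
        fPoly (branchGraph T u r) (branchRoot T u r) x ≠ 0 := (hd u hu).ne'
    field_simp

end Final

end Stmt12

/-- the recursions for `f`, `rf` and `ρ₁` of a rooted tree
`T = [T_1,…,T_k]` whose root has degree `k ≥ 1`. -/
theorem stmt12 [Fintype V] (x : ℝ) (hx : 0 < x)
    (T : SimpleGraph V) (hT : T.IsTree) (r : V) (hdeg : (nbrs T r).Nonempty) :
    (fPoly T r x =
      ∏ u ∈ nbrs T r,
        (rfPoly (branchGraph T u r) x + fPoly (branchGraph T u r) (branchRoot T u r) x)) ∧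
    (rfPoly T x =
      (∏ u ∈ nbrs T r,
        (rfPoly (branchGraph T u r) x + fPoly (branchGraph T u r) (branchRoot T u r) x)) *
      (x + ∑ u ∈ nbrs T r,
        rfPoly (branchGraph T u r) x /
          (rfPoly (branchGraph T u r) x + fPoly (branchGraph T u r) (branchRoot T u r) x))) ∧
    (rho1 T r x =
      (x + ∑ u ∈ nbrs T r, rho1 (branchGraph T u r) (branchRoot T u r) x) /
        (1 + x + ∑ u ∈ nbrs T r, rho1 (branchGraph T u r) (branchRoot T u r) x)) := by
  have hd : ∀ u ∈ nbrs T r, 0 < rfPoly (branchGraph T u r) x +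
      fPoly (branchGraph T u r) (branchRoot T u r) x :=
    fun u _ => add_pos_of_pos_of_nonneg (Stmt12.rfPoly_pos _ hx) (Stmt12.fPoly_nonneg _ _ hx)
  have h1 := Stmt12.fPoly_eq (x := x) (r := r) hT
  have h2 := Stmt12.rfPoly_eq (x := x) (r := r) hT hx
  refine ⟨h1, h2, ?_⟩
  have hS : 0 ≤ ∑ u ∈ nbrs T r, rho1 (branchGraph T u r) (branchRoot T u r) x :=
    Finset.sum_nonneg fun u hu =>
      div_nonneg (Stmt12.rfPoly_pos _ hx).le (hd u hu).le
  have hP : 0 < ∏ u ∈ nbrs T r,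
      (rfPoly (branchGraph T u r) x + fPoly (branchGraph T u r) (branchRoot T u r) x) :=
    Finset.prod_pos hd
  rw [rho1, h2, h1]
  simp only [rho1]
  set S := ∑ u ∈ nbrs T r,
    rfPoly (branchGraph T u r) x /
      (rfPoly (branchGraph T u r) x + fPoly (branchGraph T u r) (branchRoot T u r) x) with hSdef
  set P := ∏ u ∈ nbrs T r,
    (rfPoly (branchGraph T u r) x + fPoly (branchGraph T u r) (branchRoot T u r) x) with hPdef
  rw [show P * (x + S) + P = P * ((x + S) + 1) by ring,
    mul_div_mul_left _ _ hP.ne']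
  congr 1
  ring
end
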